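/- arXiv:2402.02673 — 4 statements merged into one kernel-verified Lean document; each statement's English description precedes it below -/
import Mathlib

section
/- Let t ≥ 1 and let 𝓡 = (R_1, …, R_t) be a t-stage multi-winner voting rule. If R_r satisfies Solid Coalition for every r ∈ [t], then 𝓡 satisfies Solid Coalition; that is, for every election E = (C,V) with n voters and every vector v⃗ = (k_1, …, k_t), if at least n/k_t voters rank a candidate c first, then c belongs to every committee in 𝓡(E, v⃗). -/
/-- A multi-winner voting rule: candidate pool, list of voters (given by injective
ranking functions, smaller value = more preferred), target size ↦ winning committees. -/
abbrev MWRule (α : Type) : Type := Finset α → List (α → ℕ) → ℕ → Set (Finset α)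

/-- A multi-winner voting rule outputs committees of the prescribed size drawn
from the candidate pool. -/
def IsMWRule {α : Type} (R : MWRule α) : Prop :=
  ∀ (C : Finset α) (V : List (α → ℕ)) (k : ℕ), ∀ S ∈ R C V k, S ⊆ C ∧ S.card = k

/-- Every voter of `V` has a strict (injective) preference on the candidate set `C`. -/
def StrictPrefs {α : Type} (C : Finset α) (V : List (α → ℕ)) : Prop :=
  ∀ v ∈ V, Set.InjOn v ↑C

/-- Voter `v` ranks candidate `c` first in the pool `C`. -/
def RanksFirst {α : Type} (v : α → ℕ) (C : Finset α) (c : α) : Prop :=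
  c ∈ C ∧ ∀ c' ∈ C, c' ≠ c → v c < v c'

instance {α : Type} [DecidableEq α] (v : α → ℕ) (C : Finset α) (c : α) :
    Decidable (RanksFirst v C c) :=
  inferInstanceAs (Decidable (c ∈ C ∧ ∀ c' ∈ C, c' ≠ c → v c < v c'))

/-- The number of voters in `V` ranking candidate `c` first in the pool `C`. -/
def firstCount {α : Type} [DecidableEq α] (V : List (α → ℕ)) (C : Finset α) (c : α) : ℕ :=
  V.countP fun v => decide (RanksFirst v C c)

/-- Solid Coalition: whenever at least `n/k` voters rank some candidate `c` first,
`c` belongs to every winning committee. -/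
def SolidCoalition {α : Type} [DecidableEq α] (R : MWRule α) : Prop :=
  ∀ (C : Finset α) (V : List (α → ℕ)), StrictPrefs C V → V ≠ [] →
    ∀ k : ℕ, 1 ≤ k → k < C.card →
      ∀ c : α, V.length ≤ k * firstCount V C c →
        ∀ S ∈ R C V k, c ∈ S

/-- The winning committees of a multi-stage rule, specified by a list of
(rule, target size) pairs: the winning committee of each stage is the candidate
pool for the next stage. -/
def MultiStageWinners {α : Type} :
    List (MWRule α × ℕ) → Finset α → List (α → ℕ) → Set (Finset α)
  | [], C, _ => {C}
  | (R, k) :: rest, C, V => {S | ∃ S₁ ∈ R C V k, S ∈ MultiStageWinners rest S₁ V}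

lemma chain_gt_getLast_le {k : ℕ} {l : List ℕ} (h : List.Chain (· > ·) k l) :
    (k :: l).getLast (by simp) ≤ k := by
  induction l generalizing k with
  | nil => simp
  | cons b l ih =>
    rcases h with _ | _ | ⟨hkb, h⟩
    calc (k :: b :: l).getLast (by simp) = (b :: l).getLast (by simp) := by
          rw [List.getLast_cons]
      _ ≤ b := ih h
      _ ≤ k := le_of_lt hkb

lemma firstCount_mono {α : Type} [DecidableEq α] (V : List (α → ℕ)) (C S : Finset α)
    (c : α) (hcS : c ∈ S) (hS : S ⊆ C) : firstCount V C c ≤ firstCount V S c := by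
  apply List.countP_mono_left
  intro v _ h
  simp only [decide_eq_true_iff, RanksFirst] at h ⊢
  exact decide_eq_true ⟨hcS, fun c' hc' hne => (of_decide_eq_true h).2 c' (hS hc') hne⟩

/-- Solid Coalition is preserved in multi-stage voting: if every
stage rule `R_r` of the `t`-stage rule `𝓡 = (R_1, …, R_t)` (`t ≥ 1`) satisfies
Solid Coalition, then for every election `E = (C,V)` and stage vector
`v⃗ = (k_1, …, k_t)` with `|C| > k_1 > … > k_t ≥ 1`, whenever at least `n/k_t`
voters rank a candidate `c` first, `c` belongs to every committee in `𝓡(E, v⃗)`. -/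
theorem multistage_solid_coalition {α : Type} [DecidableEq α]
    (Rs : List (MWRule α)) (ks : List ℕ)
    (hRne : Rs ≠ []) (hkne : ks ≠ []) (hlen : ks.length = Rs.length)
    (hrule : ∀ R ∈ Rs, IsMWRule R) (hSC : ∀ R ∈ Rs, SolidCoalition R)
    (C : Finset α) (V : List (α → ℕ)) (hV : StrictPrefs C V) (hVne : V ≠ [])
    (hchain : List.Chain (· > ·) C.card ks) (hpos : ∀ k ∈ ks, 1 ≤ k)
    (c : α) (hc : V.length ≤ ks.getLast hkne * firstCount V C c) :
    ∀ S ∈ MultiStageWinners (Rs.zip ks) C V, c ∈ S := by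
  induction Rs generalizing ks C with
  | nil => exact absurd rfl hRne
  | cons R Rs' ih =>
    obtain ⟨k, ks', rfl⟩ : ∃ k ks', ks = k :: ks' := by
      cases ks with
      | nil => exact absurd rfl hkne
      | cons a l => exact ⟨a, l, rfl⟩
    have hlen' : ks'.length = Rs'.length := by simpa using hlen
    rcases hchain with _ | _ | ⟨hCk, hchain'⟩
    have hk1 : 1 ≤ k := hpos k (by simp)
    have hlast_le : (k :: ks').getLast (by simp) ≤ k :=
      chain_gt_getLast_le hchain'
    have hcount : V.length ≤ k * firstCount V C c :=
      le_trans hc (Nat.mul_le_mul_right _ hlast_le)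
    intro S hS
    obtain ⟨S₁, hS₁, hSrest⟩ := hS
    have hcS₁ : c ∈ S₁ :=
      hSC R (by simp) C V hV hVne k hk1 hCk c hcount S₁ hS₁
    obtain ⟨hsub, hcard⟩ := hrule R (by simp) C V k S₁ hS₁
    cases ks' with
    | nil =>
      have hRs' : Rs' = [] := by
        cases Rs' with
        | nil => rfl
        | cons _ _ => simp at hlen'
      subst hRs'
      simp only [List.zip_nil_right, List.zipWith_nil_right, MultiStageWinners, Set.mem_singleton_iff] at hSrest
      subst hSrest
      exact hcS₁
    | cons k₂ ks'' =>
      have hRs'ne : Rs' ≠ [] := by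
        intro h; rw [h] at hlen'; simp at hlen'
      have hcount' : firstCount V C c ≤ firstCount V S₁ c :=
        firstCount_mono V C S₁ c hcS₁ hsub
      refine ih (k₂ :: ks'') hRs'ne (by simp) hlen'
        (fun R hR => hrule R (by simp [hR])) (fun R hR => hSC R (by simp [hR]))
        S₁ (fun v hv => (hV v hv).mono (by exact_mod_cast hsub))
        (by rw [hcard]; exact hchain') (fun k hk => hpos k (by simp [hk])) ?_ S hSrest
      calc V.length ≤ (k :: k₂ :: ks'').getLast (by simp) * firstCount V C c := hc
        _ = (k₂ :: ks'').getLast (by simp) * firstCount V C c := by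
            rw [List.getLast_cons]
        _ ≤ (k₂ :: ks'').getLast (by simp) * firstCount V S₁ c :=
            Nat.mul_le_mul_left _ hcount'
end

section
/- Let t ≥ 2, β ∈ {ℓ_1, ℓ_max}, and let 𝓡 be a rational t-stage (β, γ⃗)-rule. Then 𝓡 does not satisfy Committee Monotonicity: there exist an election E and t-dimensional vectors v⃗_1 = (k^1_1,…,k^1_t) and v⃗_2 = (k^2_1,…,k^2_t) with k^1_t + 1 = k^2_t for which the committee-monotonicity conditions fail. -/
/-- Position (1-indexed) of candidate `c` in voter `v`'s induced ranking on the
pool `C` (voters are ranking functions, smaller value = more preferred). -/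
def posIn {α : Type} (v : α → ℕ) (C : Finset α) (c : α) : ℕ :=
  (C.filter fun c' => v c' ≤ v c).card

/-- The two norms parameterizing score-based rules. -/
inductive ScoreNorm : Type
  | l1
  | lmax

/-- Voter `v`'s score for a committee `S` on the pool `C` with target size `k`,
under the `(β, γ)`-rule (`γ m k p` is the position score of position `p` for
`m` candidates and target size `k`). -/
noncomputable def voterScore {α : Type} (β : ScoreNorm) (γ : ℕ → ℕ → ℕ → ℝ)
    (C : Finset α) (k : ℕ) (v : α → ℕ) (S : Finset α) : ℝ :=
  match β with
  | .l1 => ∑ c ∈ S, γ C.card k (posIn v C c)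
  | .lmax => sSup ((fun c => γ C.card k (posIn v C c)) '' (S : Set α))

/-- Total score `Σ_{v ∈ V} f_v(S)` of a committee. -/
noncomputable def totalScore {α : Type} (β : ScoreNorm) (γ : ℕ → ℕ → ℕ → ℝ)
    (C : Finset α) (V : List (α → ℕ)) (k : ℕ) (S : Finset α) : ℝ :=
  (V.map fun v => voterScore β γ C k v S).sum

/-- Winning committees of the single-stage `(β, γ)`-rule: the size-`k` committees
maximizing the total score. -/
def scoreWinners {α : Type} (β : ScoreNorm) (γ : ℕ → ℕ → ℕ → ℝ)
    (C : Finset α) (V : List (α → ℕ)) (k : ℕ) : Set (Finset α) :=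
  {S | S ⊆ C ∧ S.card = k ∧
    ∀ T ⊆ C, T.card = k → totalScore β γ C V k T ≤ totalScore β γ C V k S}

/-- Winning committees of the multi-stage `(β, γ)`-rule for stage vector `ks`:
the winning committee of each stage is the candidate pool of the next stage. -/
def msWinners {α : Type} (β : ScoreNorm) (γ : ℕ → ℕ → ℕ → ℝ) :
    List ℕ → Finset α → List (α → ℕ) → Set (Finset α)
  | [], C, _ => {C}
  | k :: ks, C, V => {S | ∃ S₁ ∈ scoreWinners β γ C V k, S ∈ msWinners β γ ks S₁ V}

/-- Each `γ^{m,k}` is non-increasing on the positions `1, …, m`. -/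
def GammaMono (γ : ℕ → ℕ → ℕ → ℝ) : Prop :=
  ∀ m k p q : ℕ, 1 ≤ p → p ≤ q → q ≤ m → γ m k q ≤ γ m k p

/-- Rationality of a `(β, γ)`-rule: for every pair `(m, k)` with `m > k ≥ 1`,
`γ^{m,k}(1) > γ^{m,k}(m)` when `β = ℓ₁`, and `γ^{m,k}(1) > γ^{m,k}(m-k+1)` when
`β = ℓ_max`. -/
def RationalRule : ScoreNorm → (ℕ → ℕ → ℕ → ℝ) → Prop
  | .l1, γ => ∀ m k : ℕ, 1 ≤ k → k < m → γ m k m < γ m k 1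
  | .lmax, γ => ∀ m k : ℕ, 1 ≤ k → k < m → γ m k (m - k + 1) < γ m k 1

/-- A valid stage vector for the candidate set `C`: `|C| > k_1 > … > k_t ≥ 1`. -/
def ValidVec {α : Type} (C : Finset α) (ks : List ℕ) : Prop :=
  List.Chain (· > ·) C.card ks ∧ ∀ k ∈ ks, 1 ≤ k

/-- Committee Monotonicity for the `t`-stage `(β, γ)`-rule: for every election
(over any candidate type) and all `t`-dimensional stage vectors `ks₁`, `ks₂` with
`k¹_t + 1 = k²_t`, (i) every winning committee for `ks₁` extends to a winning
committee for `ks₂`, and (ii) every winning committee for `ks₂` contains a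
winning committee for `ks₁`. -/
def MSCommitteeMonotone (β : ScoreNorm) (γ : ℕ → ℕ → ℕ → ℝ) (t : ℕ) : Prop :=
  ∀ (α : Type) (C : Finset α) (V : List (α → ℕ)), StrictPrefs C V →
    ∀ (ks₁ ks₂ : List ℕ) (h₁ : ks₁ ≠ []) (h₂ : ks₂ ≠ []),
      ks₁.length = t → ks₂.length = t → ValidVec C ks₁ → ValidVec C ks₂ →
      ks₁.getLast h₁ + 1 = ks₂.getLast h₂ →
      (∀ S ∈ msWinners β γ ks₁ C V, ∃ S' ∈ msWinners β γ ks₂ C V, S ⊂ S') ∧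
      (∀ S ∈ msWinners β γ ks₂ C V, ∃ S' ∈ msWinners β γ ks₁ C V, S' ⊂ S)

-- ===== auxiliary development =====

def mkV (r0 r1 r2 r3 : ℕ) : ℕ → ℕ := fun x =>
  if x = 0 then r0 else if x = 1 then r1 else if x = 2 then r2 else if x = 3 then r3 else x

def w1 : ℕ → ℕ := mkV 0 1 3 2
def w2 : ℕ → ℕ := mkV 0 2 3 1
def w3 : ℕ → ℕ := mkV 2 0 1 3
def w4 : ℕ → ℕ := mkV 3 0 2 1
def w5 : ℕ → ℕ := mkV 1 2 0 3
def w6 : ℕ → ℕ := mkV 3 2 1 0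

def VV : List (ℕ → ℕ) :=
  List.replicate 4 w1 ++ List.replicate 2 w2 ++ List.replicate 4 w3 ++
  List.replicate 3 w4 ++ List.replicate 6 w5 ++ List.replicate 1 w6

def VG (v : ℕ → ℕ) : Prop :=
  Function.Injective v ∧ (∀ x, x < 4 → v x < 4) ∧ (∀ x, 4 ≤ x → v x = x)

lemma mkV_inj {r0 r1 r2 r3 : ℕ} (h0 : r0 < 4) (h1 : r1 < 4) (h2 : r2 < 4) (h3 : r3 < 4)
    (d01 : r0 ≠ r1) (d02 : r0 ≠ r2) (d03 : r0 ≠ r3) (d12 : r1 ≠ r2) (d13 : r1 ≠ r3)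
    (d23 : r2 ≠ r3) : Function.Injective (mkV r0 r1 r2 r3) := by
  intro x y hxy
  unfold mkV at hxy
  split_ifs at hxy <;> omega

lemma mkV_VG {r0 r1 r2 r3 : ℕ} (h0 : r0 < 4) (h1 : r1 < 4) (h2 : r2 < 4) (h3 : r3 < 4)
    (d01 : r0 ≠ r1) (d02 : r0 ≠ r2) (d03 : r0 ≠ r3) (d12 : r1 ≠ r2) (d13 : r1 ≠ r3)
    (d23 : r2 ≠ r3) : VG (mkV r0 r1 r2 r3) := by
  refine ⟨mkV_inj h0 h1 h2 h3 d01 d02 d03 d12 d13 d23, ?_, ?_⟩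
  · intro x hx; interval_cases x <;> simp [mkV] <;> omega
  · intro x hx; unfold mkV; split_ifs <;> omega

lemma VG_w1 : VG w1 := mkV_VG (by norm_num) (by norm_num) (by norm_num) (by norm_num)
  (by norm_num) (by norm_num) (by norm_num) (by norm_num) (by norm_num) (by norm_num)
lemma VG_w2 : VG w2 := mkV_VG (by norm_num) (by norm_num) (by norm_num) (by norm_num)
  (by norm_num) (by norm_num) (by norm_num) (by norm_num) (by norm_num) (by norm_num)
lemma VG_w3 : VG w3 := mkV_VG (by norm_num) (by norm_num) (by norm_num) (by norm_num)
  (by norm_num) (by norm_num) (by norm_num) (by norm_num) (by norm_num) (by norm_num)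
lemma VG_w4 : VG w4 := mkV_VG (by norm_num) (by norm_num) (by norm_num) (by norm_num)
  (by norm_num) (by norm_num) (by norm_num) (by norm_num) (by norm_num) (by norm_num)
lemma VG_w5 : VG w5 := mkV_VG (by norm_num) (by norm_num) (by norm_num) (by norm_num)
  (by norm_num) (by norm_num) (by norm_num) (by norm_num) (by norm_num) (by norm_num)
lemma VG_w6 : VG w6 := mkV_VG (by norm_num) (by norm_num) (by norm_num) (by norm_num)
  (by norm_num) (by norm_num) (by norm_num) (by norm_num) (by norm_num) (by norm_num)

lemma totalScore_VV (β : ScoreNorm) (γ : ℕ → ℕ → ℕ → ℝ) (C : Finset ℕ) (k : ℕ) (S : Finset ℕ) :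
    totalScore β γ C VV k S =
      4 * voterScore β γ C k w1 S + 2 * voterScore β γ C k w2 S +
      4 * voterScore β γ C k w3 S + 3 * voterScore β γ C k w4 S +
      6 * voterScore β γ C k w5 S + voterScore β γ C k w6 S := by
  simp [totalScore, VV, List.map_append, List.map_replicate, List.sum_replicate,
    nsmul_eq_mul]
  ring


-- generic posIn lemmas
lemma posIn_pos {v : ℕ → ℕ} {P : Finset ℕ} {c : ℕ} (h : c ∈ P) : 1 ≤ posIn v P c :=
  Finset.card_pos.mpr ⟨c, Finset.mem_filter.mpr ⟨h, le_refl _⟩⟩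

lemma posIn_le {v : ℕ → ℕ} {P : Finset ℕ} {c : ℕ} : posIn v P c ≤ P.card :=
  Finset.card_le_card (Finset.filter_subset _ _)

lemma max_ge4 {P : Finset ℕ} (h5 : 5 ≤ P.card) (hne : P.Nonempty) : 4 ≤ P.max' hne := by
  by_contra h4
  push_neg at h4
  have hsub : P ⊆ Finset.range 4 := fun x hx =>
    Finset.mem_range.mpr (lt_of_le_of_lt (Finset.le_max' P x hx) h4)
  have := Finset.card_le_card hsub
  rw [Finset.card_range] at this
  omega

lemma posIn_max' {v : ℕ → ℕ} (hv : VG v) {P : Finset ℕ} (hne : P.Nonempty) (h5 : 5 ≤ P.card) :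
    posIn v P (P.max' hne) = P.card := by
  unfold posIn
  rw [Finset.filter_true_of_mem]
  intro x hx
  have he4 := max_ge4 h5 hne
  rw [hv.2.2 _ he4]
  by_cases hx4 : x < 4
  · have := hv.2.1 x hx4; omega
  · rw [hv.2.2 x (by omega)]; exact Finset.le_max' P x hx

lemma posIn_top {v : ℕ → ℕ} (hv : VG v) {P : Finset ℕ} {r : ℕ} (hr : v r = 0) (hrP : r ∈ P) :
    posIn v P r = 1 := by
  unfold posIn
  have hfil : P.filter (fun c' => v c' ≤ v r) = {r} := by
    ext c'
    simp only [Finset.mem_filter, Finset.mem_singleton, hr, Nat.le_zero]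
    constructor
    · rintro ⟨hc', hv'⟩
      exact hv.1 (by rw [hv', hr])
    · rintro rfl
      exact ⟨hrP, hr⟩
  rw [hfil, Finset.card_singleton]

lemma posIn_second {v : ℕ → ℕ} (hv : VG v) {P : Finset ℕ} {r s : ℕ} (hr : v r = 0)
    (hs : v s = 1) (hrP : r ∈ P) (hsP : s ∈ P) : posIn v P s = 2 := by
  have hrs : r ≠ s := fun h => by rw [h, hs] at hr; omega
  unfold posIn
  have hfil : P.filter (fun c' => v c' ≤ v s) = {r, s} := by
    ext c'
    simp only [Finset.mem_filter, Finset.mem_insert, Finset.mem_singleton, hs]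
    constructor
    · rintro ⟨hc', hv'⟩
      interval_cases h : v c'
      · exact Or.inl (hv.1 (by rw [h, hr]))
      · exact Or.inr (hv.1 (by rw [h, hs]))
    · rintro (rfl | rfl)
      · exact ⟨hrP, by rw [hr]; omega⟩
      · exact ⟨hsP, by rw [hs]⟩
  rw [hfil, Finset.card_insert_of_notMem (by simpa using hrs), Finset.card_singleton]

lemma posIn_ge_two {v : ℕ → ℕ} {P : Finset ℕ} {r c' : ℕ} (hr : v r = 0) (hrP : r ∈ P)
    (hc' : c' ∈ P) (hne : c' ≠ r) : 2 ≤ posIn v P c' := by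
  have hsub : ({r, c'} : Finset ℕ) ⊆ P.filter (fun x => v x ≤ v c') := by
    intro x hx
    rcases Finset.mem_insert.mp hx with rfl | hx
    · exact Finset.mem_filter.mpr ⟨hrP, by rw [hr]; omega⟩
    · rw [Finset.mem_singleton] at hx
      subst hx
      exact Finset.mem_filter.mpr ⟨hc', le_refl _⟩
  calc 2 = ({r, c'} : Finset ℕ).card := (Finset.card_pair (Ne.symm hne)).symm
    _ ≤ _ := Finset.card_le_card hsub

lemma ex_erase {T P : Finset ℕ} (hT : T ⊆ P) (hc : T.card + 1 = P.card) :
    ∃ x ∈ P, x ∉ T ∧ T = P.erase x := by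
  have hsd : (P \ T).card = 1 := by rw [Finset.card_sdiff_of_subset hT]; omega
  obtain ⟨x, hx⟩ := Finset.card_eq_one.mp hsd
  have hxm : x ∈ P ∧ x ∉ T := by
    have : x ∈ P \ T := by rw [hx]; exact Finset.mem_singleton_self x
    exact Finset.mem_sdiff.mp this
  refine ⟨x, hxm.1, hxm.2, ?_⟩
  apply Finset.eq_of_subset_of_card_le
  · intro c hc'
    exact Finset.mem_erase.mpr ⟨fun h => hxm.2 (h ▸ hc'), hT hc'⟩
  · rw [Finset.card_erase_of_mem hxm.1]; omega

-- voterScore helpers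
lemma voterScore_l1_erase (γ : ℕ → ℕ → ℕ → ℝ) (P : Finset ℕ) (k : ℕ) (v : ℕ → ℕ) {x : ℕ}
    (hx : x ∈ P) :
    voterScore .l1 γ P k v (P.erase x) =
      (∑ c ∈ P, γ P.card k (posIn v P c)) - γ P.card k (posIn v P x) := by
  simp [voterScore, Finset.sum_erase_eq_sub hx]

lemma voterScore_lmax_le (γ : ℕ → ℕ → ℕ → ℝ) (hγ : GammaMono γ) (P : Finset ℕ) (k : ℕ)
    (v : ℕ → ℕ) {T : Finset ℕ} (hne : T.Nonempty) (hT : T ⊆ P) :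
    voterScore .lmax γ P k v T ≤ γ P.card k 1 := by
  show sSup _ ≤ _
  apply csSup_le ((Finset.coe_nonempty.mpr hne).image _)
  rintro _ ⟨c, hc, rfl⟩
  exact hγ P.card k 1 (posIn v P c) le_rfl (posIn_pos (hT hc)) posIn_le

lemma voterScore_lmax_top (γ : ℕ → ℕ → ℕ → ℝ) (hγ : GammaMono γ) (P : Finset ℕ) (k : ℕ)
    {v : ℕ → ℕ} (hv : VG v) {r : ℕ} (hr : v r = 0) {S : Finset ℕ} (hS : S ⊆ P) (hrS : r ∈ S) :
    voterScore .lmax γ P k v S = γ P.card k 1 := by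
  have hrP : r ∈ P := hS hrS
  have hig : IsGreatest ((fun c => γ P.card k (posIn v P c)) '' (S : Set ℕ)) (γ P.card k 1) := by
    constructor
    · exact ⟨r, hrS, show γ P.card k (posIn v P r) = γ P.card k 1 by
        rw [posIn_top hv hr hrP]⟩
    · rintro _ ⟨c, hc, rfl⟩
      exact hγ P.card k 1 (posIn v P c) le_rfl (posIn_pos (hS hc)) posIn_le
  exact hig.csSup_eq

lemma voterScore_lmax_second (γ : ℕ → ℕ → ℕ → ℝ) (hγ : GammaMono γ) (P : Finset ℕ) (k : ℕ)
    {v : ℕ → ℕ} (hv : VG v) {r s : ℕ} (hr : v r = 0) (hs : v s = 1) (hrP : r ∈ P)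
    (hsP : s ∈ P) :
    voterScore .lmax γ P k v (P.erase r) = γ P.card k 2 := by
  have hsr : s ≠ r := fun h => by rw [h, hr] at hs; omega
  have hig : IsGreatest ((fun c => γ P.card k (posIn v P c)) '' ((P.erase r : Finset ℕ) : Set ℕ))
      (γ P.card k 2) := by
    constructor
    · exact ⟨s, by exact_mod_cast Finset.mem_erase.mpr ⟨hsr, hsP⟩,
        show γ P.card k (posIn v P s) = γ P.card k 2 by
          rw [posIn_second hv hr hs hrP hsP]⟩
    · rintro _ ⟨c, hc, rfl⟩
      have hc' : c ∈ P.erase r := by exact_mod_cast hc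
      have hcP : c ∈ P := Finset.mem_of_mem_erase hc'
      have hcr : c ≠ r := Finset.ne_of_mem_erase hc'
      exact hγ P.card k 2 (posIn v P c) (by norm_num) (posIn_ge_two hr hrP hcP hcr) posIn_le
  exact hig.csSup_eq

section PrefixStage

variable {γ : ℕ → ℕ → ℕ → ℝ} {P : Finset ℕ}

lemma reals_mem (h0 : 0 ∈ P) (h1 : 1 ∈ P) (h2 : 2 ∈ P) (h3 : 3 ∈ P) {r : ℕ} (hr : r < 4) :
    r ∈ P := by interval_cases r <;> assumption

lemma prefix_le (β : ScoreNorm) (hγ : GammaMono γ)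
    (h0 : 0 ∈ P) (h1 : 1 ∈ P) (h2 : 2 ∈ P) (h3 : 3 ∈ P) (h5 : 5 ≤ P.card)
    {k : ℕ} (hk : k + 1 = P.card) :
    ∀ T ⊆ P, T.card = k →
      totalScore β γ P VV k T ≤ totalScore β γ P VV k (P.erase (P.max' ⟨0, h0⟩)) := by
  intro T hT hTc
  have hne : P.Nonempty := ⟨0, h0⟩
  set e := P.max' hne with he
  have heP : e ∈ P := P.max'_mem hne
  cases β with
  | l1 =>
    obtain ⟨x, hxP, hxT, rfl⟩ := ex_erase hT (by omega)
    rw [totalScore_VV, totalScore_VV,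
      voterScore_l1_erase γ P k w1 hxP, voterScore_l1_erase γ P k w2 hxP,
      voterScore_l1_erase γ P k w3 hxP, voterScore_l1_erase γ P k w4 hxP,
      voterScore_l1_erase γ P k w5 hxP, voterScore_l1_erase γ P k w6 hxP,
      voterScore_l1_erase γ P k w1 heP, voterScore_l1_erase γ P k w2 heP,
      voterScore_l1_erase γ P k w3 heP, voterScore_l1_erase γ P k w4 heP,
      voterScore_l1_erase γ P k w5 heP, voterScore_l1_erase γ P k w6 heP]
    have key : ∀ v : ℕ → ℕ, VG v → γ P.card k (posIn v P e) ≤ γ P.card k (posIn v P x) := by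
      intro v hv
      rw [posIn_max' hv hne h5]
      exact hγ P.card k (posIn v P x) P.card (posIn_pos hxP) posIn_le le_rfl
    have K1 := key w1 VG_w1; have K2 := key w2 VG_w2; have K3 := key w3 VG_w3
    have K4 := key w4 VG_w4; have K5 := key w5 VG_w5; have K6 := key w6 VG_w6
    linarith
  | lmax =>
    have hTne : T.Nonempty := Finset.card_pos.mp (by omega)
    rw [totalScore_VV, totalScore_VV]
    have he4 : 4 ≤ e := max_ge4 h5 hne
    have hsub : P.erase e ⊆ P := Finset.erase_subset _ _
    have E1 := voterScore_lmax_top γ hγ P k VG_w1 (show w1 0 = 0 from rfl) hsub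
      (Finset.mem_erase.mpr ⟨by omega, h0⟩)
    have E2 := voterScore_lmax_top γ hγ P k VG_w2 (show w2 0 = 0 from rfl) hsub
      (Finset.mem_erase.mpr ⟨by omega, h0⟩)
    have E3 := voterScore_lmax_top γ hγ P k VG_w3 (show w3 1 = 0 from rfl) hsub
      (Finset.mem_erase.mpr ⟨by omega, h1⟩)
    have E4 := voterScore_lmax_top γ hγ P k VG_w4 (show w4 1 = 0 from rfl) hsub
      (Finset.mem_erase.mpr ⟨by omega, h1⟩)
    have E5 := voterScore_lmax_top γ hγ P k VG_w5 (show w5 2 = 0 from rfl) hsub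
      (Finset.mem_erase.mpr ⟨by omega, h2⟩)
    have E6 := voterScore_lmax_top γ hγ P k VG_w6 (show w6 3 = 0 from rfl) hsub
      (Finset.mem_erase.mpr ⟨by omega, h3⟩)
    have B1 := voterScore_lmax_le γ hγ P k w1 hTne hT
    have B2 := voterScore_lmax_le γ hγ P k w2 hTne hT
    have B3 := voterScore_lmax_le γ hγ P k w3 hTne hT
    have B4 := voterScore_lmax_le γ hγ P k w4 hTne hT
    have B5 := voterScore_lmax_le γ hγ P k w5 hTne hT
    have B6 := voterScore_lmax_le γ hγ P k w6 hTne hT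
    linarith

lemma prefix_lt (β : ScoreNorm) (hγ : GammaMono γ) (hrat : RationalRule β γ)
    (h0 : 0 ∈ P) (h1 : 1 ∈ P) (h2 : 2 ∈ P) (h3 : 3 ∈ P) (h5 : 5 ≤ P.card)
    {k : ℕ} (hk : k + 1 = P.card) {r : ℕ} (hr : r < 4) :
    totalScore β γ P VV k (P.erase r) <
      totalScore β γ P VV k (P.erase (P.max' ⟨0, h0⟩)) := by
  have hne : P.Nonempty := ⟨0, h0⟩
  set e := P.max' hne with he
  have heP : e ∈ P := P.max'_mem hne
  have he4 : 4 ≤ e := max_ge4 h5 hne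
  have hrP : r ∈ P := reals_mem h0 h1 h2 h3 hr
  cases β with
  | l1 =>
    have hstrict : γ P.card k P.card < γ P.card k 1 := by
      have := hrat P.card k (by omega) (by omega)
      exact this
    rw [totalScore_VV, totalScore_VV,
      voterScore_l1_erase γ P k w1 hrP, voterScore_l1_erase γ P k w2 hrP,
      voterScore_l1_erase γ P k w3 hrP, voterScore_l1_erase γ P k w4 hrP,
      voterScore_l1_erase γ P k w5 hrP, voterScore_l1_erase γ P k w6 hrP,
      voterScore_l1_erase γ P k w1 heP, voterScore_l1_erase γ P k w2 heP,
      voterScore_l1_erase γ P k w3 heP, voterScore_l1_erase γ P k w4 heP,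
      voterScore_l1_erase γ P k w5 heP, voterScore_l1_erase γ P k w6 heP]
    have key : ∀ v : ℕ → ℕ, VG v → γ P.card k (posIn v P e) ≤ γ P.card k (posIn v P r) := by
      intro v hv
      rw [posIn_max' hv hne h5]
      exact hγ P.card k (posIn v P r) P.card (posIn_pos hrP) posIn_le le_rfl
    have K1 := key w1 VG_w1; have K2 := key w2 VG_w2; have K3 := key w3 VG_w3
    have K4 := key w4 VG_w4; have K5 := key w5 VG_w5; have K6 := key w6 VG_w6
    have M1 := posIn_max' VG_w1 hne h5
    have M3 := posIn_max' VG_w3 hne h5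
    have M5 := posIn_max' VG_w5 hne h5
    have M6 := posIn_max' VG_w6 hne h5
    interval_cases r
    · have hT := posIn_top VG_w1 (show w1 0 = 0 from rfl) hrP
      rw [hT] at K1 ⊢
      rw [M1] at K1 ⊢
      linarith
    · have hT := posIn_top VG_w3 (show w3 1 = 0 from rfl) hrP
      rw [hT] at K3 ⊢
      rw [M3] at K3 ⊢
      linarith
    · have hT := posIn_top VG_w5 (show w5 2 = 0 from rfl) hrP
      rw [hT] at K5 ⊢
      rw [M5] at K5 ⊢
      linarith
    · have hT := posIn_top VG_w6 (show w6 3 = 0 from rfl) hrP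
      rw [hT] at K6 ⊢
      rw [M6] at K6 ⊢
      linarith
  | lmax =>
    have hstrict : γ P.card k 2 < γ P.card k 1 := by
      have h := hrat P.card k (by omega) (by omega)
      have : P.card - k + 1 = 2 := by omega
      rwa [this] at h
    rw [totalScore_VV, totalScore_VV]
    have hsub : P.erase e ⊆ P := Finset.erase_subset _ _
    have hsubr : P.erase r ⊆ P := Finset.erase_subset _ _
    have hrne : (P.erase r).Nonempty := by
      apply Finset.card_pos.mp
      rw [Finset.card_erase_of_mem hrP]
      omega
    have E1 := voterScore_lmax_top γ hγ P k VG_w1 (show w1 0 = 0 from rfl) hsub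
      (Finset.mem_erase.mpr ⟨by omega, h0⟩)
    have E2 := voterScore_lmax_top γ hγ P k VG_w2 (show w2 0 = 0 from rfl) hsub
      (Finset.mem_erase.mpr ⟨by omega, h0⟩)
    have E3 := voterScore_lmax_top γ hγ P k VG_w3 (show w3 1 = 0 from rfl) hsub
      (Finset.mem_erase.mpr ⟨by omega, h1⟩)
    have E4 := voterScore_lmax_top γ hγ P k VG_w4 (show w4 1 = 0 from rfl) hsub
      (Finset.mem_erase.mpr ⟨by omega, h1⟩)
    have E5 := voterScore_lmax_top γ hγ P k VG_w5 (show w5 2 = 0 from rfl) hsub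
      (Finset.mem_erase.mpr ⟨by omega, h2⟩)
    have E6 := voterScore_lmax_top γ hγ P k VG_w6 (show w6 3 = 0 from rfl) hsub
      (Finset.mem_erase.mpr ⟨by omega, h3⟩)
    have B1 := voterScore_lmax_le γ hγ P k w1 hrne hsubr
    have B2 := voterScore_lmax_le γ hγ P k w2 hrne hsubr
    have B3 := voterScore_lmax_le γ hγ P k w3 hrne hsubr
    have B4 := voterScore_lmax_le γ hγ P k w4 hrne hsubr
    have B5 := voterScore_lmax_le γ hγ P k w5 hrne hsubr
    have B6 := voterScore_lmax_le γ hγ P k w6 hrne hsubr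
    interval_cases r
    · have S1 := voterScore_lmax_second γ hγ P k VG_w1 (show w1 0 = 0 from rfl)
        (show w1 1 = 1 from rfl) hrP h1
      linarith
    · have S3 := voterScore_lmax_second γ hγ P k VG_w3 (show w3 1 = 0 from rfl)
        (show w3 2 = 1 from rfl) hrP h2
      linarith
    · have S5 := voterScore_lmax_second γ hγ P k VG_w5 (show w5 2 = 0 from rfl)
        (show w5 0 = 1 from rfl) hrP h0
      linarith
    · have S6 := voterScore_lmax_second γ hγ P k VG_w6 (show w6 3 = 0 from rfl)
        (show w6 2 = 1 from rfl) hrP h2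
      linarith

end PrefixStage


lemma lmax_eval {γ : ℕ → ℕ → ℕ → ℝ} (hγ : GammaMono γ) {C S : Finset ℕ} {k : ℕ} (v : ℕ → ℕ)
    (c p : ℕ) (hc : c ∈ S) (hp : posIn v C c = p) (h1 : 1 ≤ p)
    (hmin : ∀ c' ∈ S, p ≤ posIn v C c' ∧ posIn v C c' ≤ C.card) :
    voterScore .lmax γ C k v S = γ C.card k p := by
  have hig : IsGreatest ((fun c => γ C.card k (posIn v C c)) '' (S : Set ℕ)) (γ C.card k p) := by
    constructor
    · exact ⟨c, hc, show γ C.card k (posIn v C c) = _ by rw [hp]⟩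
    · rintro _ ⟨c', hc', rfl⟩
      have h := hmin c' (Finset.mem_coe.mp hc')
      exact hγ C.card k p (posIn v C c') h1 h.1 h.2
  exact hig.csSup_eq


lemma pos_w1_4_0 : posIn w1 ({0,1,2,3} : Finset ℕ) 0 = 1 := by decide

lemma pos_w1_4_1 : posIn w1 ({0,1,2,3} : Finset ℕ) 1 = 2 := by decide

lemma pos_w1_4_2 : posIn w1 ({0,1,2,3} : Finset ℕ) 2 = 4 := by decide

lemma pos_w1_4_3 : posIn w1 ({0,1,2,3} : Finset ℕ) 3 = 3 := by decide

lemma pos_w2_4_0 : posIn w2 ({0,1,2,3} : Finset ℕ) 0 = 1 := by decide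

lemma pos_w2_4_1 : posIn w2 ({0,1,2,3} : Finset ℕ) 1 = 3 := by decide

lemma pos_w2_4_2 : posIn w2 ({0,1,2,3} : Finset ℕ) 2 = 4 := by decide

lemma pos_w2_4_3 : posIn w2 ({0,1,2,3} : Finset ℕ) 3 = 2 := by decide

lemma pos_w3_4_0 : posIn w3 ({0,1,2,3} : Finset ℕ) 0 = 3 := by decide

lemma pos_w3_4_1 : posIn w3 ({0,1,2,3} : Finset ℕ) 1 = 1 := by decide

lemma pos_w3_4_2 : posIn w3 ({0,1,2,3} : Finset ℕ) 2 = 2 := by decide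

lemma pos_w3_4_3 : posIn w3 ({0,1,2,3} : Finset ℕ) 3 = 4 := by decide

lemma pos_w4_4_0 : posIn w4 ({0,1,2,3} : Finset ℕ) 0 = 4 := by decide

lemma pos_w4_4_1 : posIn w4 ({0,1,2,3} : Finset ℕ) 1 = 1 := by decide

lemma pos_w4_4_2 : posIn w4 ({0,1,2,3} : Finset ℕ) 2 = 3 := by decide

lemma pos_w4_4_3 : posIn w4 ({0,1,2,3} : Finset ℕ) 3 = 2 := by decide

lemma pos_w5_4_0 : posIn w5 ({0,1,2,3} : Finset ℕ) 0 = 2 := by decide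

lemma pos_w5_4_1 : posIn w5 ({0,1,2,3} : Finset ℕ) 1 = 3 := by decide

lemma pos_w5_4_2 : posIn w5 ({0,1,2,3} : Finset ℕ) 2 = 1 := by decide

lemma pos_w5_4_3 : posIn w5 ({0,1,2,3} : Finset ℕ) 3 = 4 := by decide

lemma pos_w6_4_0 : posIn w6 ({0,1,2,3} : Finset ℕ) 0 = 4 := by decide

lemma pos_w6_4_1 : posIn w6 ({0,1,2,3} : Finset ℕ) 1 = 3 := by decide

lemma pos_w6_4_2 : posIn w6 ({0,1,2,3} : Finset ℕ) 2 = 2 := by decide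

lemma pos_w6_4_3 : posIn w6 ({0,1,2,3} : Finset ℕ) 3 = 1 := by decide

lemma pos_w1_3_0 : posIn w1 ({0,1,2} : Finset ℕ) 0 = 1 := by decide

lemma pos_w1_3_1 : posIn w1 ({0,1,2} : Finset ℕ) 1 = 2 := by decide

lemma pos_w1_3_2 : posIn w1 ({0,1,2} : Finset ℕ) 2 = 3 := by decide

lemma pos_w2_3_0 : posIn w2 ({0,1,2} : Finset ℕ) 0 = 1 := by decide

lemma pos_w2_3_1 : posIn w2 ({0,1,2} : Finset ℕ) 1 = 2 := by decide

lemma pos_w2_3_2 : posIn w2 ({0,1,2} : Finset ℕ) 2 = 3 := by decide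

lemma pos_w3_3_0 : posIn w3 ({0,1,2} : Finset ℕ) 0 = 3 := by decide

lemma pos_w3_3_1 : posIn w3 ({0,1,2} : Finset ℕ) 1 = 1 := by decide

lemma pos_w3_3_2 : posIn w3 ({0,1,2} : Finset ℕ) 2 = 2 := by decide

lemma pos_w4_3_0 : posIn w4 ({0,1,2} : Finset ℕ) 0 = 3 := by decide

lemma pos_w4_3_1 : posIn w4 ({0,1,2} : Finset ℕ) 1 = 1 := by decide

lemma pos_w4_3_2 : posIn w4 ({0,1,2} : Finset ℕ) 2 = 2 := by decide

lemma pos_w5_3_0 : posIn w5 ({0,1,2} : Finset ℕ) 0 = 2 := by decide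

lemma pos_w5_3_1 : posIn w5 ({0,1,2} : Finset ℕ) 1 = 3 := by decide

lemma pos_w5_3_2 : posIn w5 ({0,1,2} : Finset ℕ) 2 = 1 := by decide

lemma pos_w6_3_0 : posIn w6 ({0,1,2} : Finset ℕ) 0 = 3 := by decide

lemma pos_w6_3_1 : posIn w6 ({0,1,2} : Finset ℕ) 1 = 2 := by decide

lemma pos_w6_3_2 : posIn w6 ({0,1,2} : Finset ℕ) 2 = 1 := by decide

lemma pos_w1_2_0 : posIn w1 ({0,1} : Finset ℕ) 0 = 1 := by decide

lemma pos_w1_2_1 : posIn w1 ({0,1} : Finset ℕ) 1 = 2 := by decide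

lemma pos_w2_2_0 : posIn w2 ({0,1} : Finset ℕ) 0 = 1 := by decide

lemma pos_w2_2_1 : posIn w2 ({0,1} : Finset ℕ) 1 = 2 := by decide

lemma pos_w3_2_0 : posIn w3 ({0,1} : Finset ℕ) 0 = 2 := by decide

lemma pos_w3_2_1 : posIn w3 ({0,1} : Finset ℕ) 1 = 1 := by decide

lemma pos_w4_2_0 : posIn w4 ({0,1} : Finset ℕ) 0 = 2 := by decide

lemma pos_w4_2_1 : posIn w4 ({0,1} : Finset ℕ) 1 = 1 := by decide

lemma pos_w5_2_0 : posIn w5 ({0,1} : Finset ℕ) 0 = 1 := by decide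

lemma pos_w5_2_1 : posIn w5 ({0,1} : Finset ℕ) 1 = 2 := by decide

lemma pos_w6_2_0 : posIn w6 ({0,1} : Finset ℕ) 0 = 2 := by decide

lemma pos_w6_2_1 : posIn w6 ({0,1} : Finset ℕ) 1 = 1 := by decide

lemma evL1_43_012 (γ : ℕ → ℕ → ℕ → ℝ) :
    totalScore .l1 γ ({0,1,2,3} : Finset ℕ) VV 3 ({0,1,2} : Finset ℕ) = 4 * (γ 4 3 1 + γ 4 3 2 + γ 4 3 4) + 2 * (γ 4 3 1 + γ 4 3 3 + γ 4 3 4) + 4 * (γ 4 3 3 + γ 4 3 1 + γ 4 3 2) + 3 * (γ 4 3 4 + γ 4 3 1 + γ 4 3 3) + 6 * (γ 4 3 2 + γ 4 3 3 + γ 4 3 1) + 1 * (γ 4 3 4 + γ 4 3 3 + γ 4 3 2) := by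
  rw [totalScore_VV]
  simp only [voterScore]
  norm_num [Finset.sum_insert, Finset.mem_insert, Finset.mem_singleton, Finset.sum_singleton,
    pos_w1_4_0 ,pos_w1_4_1 ,pos_w1_4_2 ,pos_w2_4_0 ,pos_w2_4_1 ,pos_w2_4_2 ,pos_w3_4_0 ,pos_w3_4_1 ,pos_w3_4_2 ,pos_w4_4_0 ,pos_w4_4_1 ,pos_w4_4_2 ,pos_w5_4_0 ,pos_w5_4_1 ,pos_w5_4_2 ,pos_w6_4_0 ,pos_w6_4_1 ,pos_w6_4_2]
  try ring

lemma evLM_43_012 {γ : ℕ → ℕ → ℕ → ℝ} (hγ : GammaMono γ) :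
    totalScore .lmax γ ({0,1,2,3} : Finset ℕ) VV 3 ({0,1,2} : Finset ℕ) = 4 * γ 4 3 1 + 2 * γ 4 3 1 + 4 * γ 4 3 1 + 3 * γ 4 3 1 + 6 * γ 4 3 1 + 1 * γ 4 3 2 := by
  rw [totalScore_VV,
    lmax_eval hγ w1 0 1 (by decide) (by decide) (by decide) (by decide),
    lmax_eval hγ w2 0 1 (by decide) (by decide) (by decide) (by decide),
    lmax_eval hγ w3 1 1 (by decide) (by decide) (by decide) (by decide),
    lmax_eval hγ w4 1 1 (by decide) (by decide) (by decide) (by decide),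
    lmax_eval hγ w5 2 1 (by decide) (by decide) (by decide) (by decide),
    lmax_eval hγ w6 2 2 (by decide) (by decide) (by decide) (by decide)]
  norm_num [show (({0,1,2,3} : Finset ℕ)).card = 4 from by decide]
  try ring

lemma evL1_43_013 (γ : ℕ → ℕ → ℕ → ℝ) :
    totalScore .l1 γ ({0,1,2,3} : Finset ℕ) VV 3 ({0,1,3} : Finset ℕ) = 4 * (γ 4 3 1 + γ 4 3 2 + γ 4 3 3) + 2 * (γ 4 3 1 + γ 4 3 3 + γ 4 3 2) + 4 * (γ 4 3 3 + γ 4 3 1 + γ 4 3 4) + 3 * (γ 4 3 4 + γ 4 3 1 + γ 4 3 2) + 6 * (γ 4 3 2 + γ 4 3 3 + γ 4 3 4) + 1 * (γ 4 3 4 + γ 4 3 3 + γ 4 3 1) := by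
  rw [totalScore_VV]
  simp only [voterScore]
  norm_num [Finset.sum_insert, Finset.mem_insert, Finset.mem_singleton, Finset.sum_singleton,
    pos_w1_4_0 ,pos_w1_4_1 ,pos_w1_4_3 ,pos_w2_4_0 ,pos_w2_4_1 ,pos_w2_4_3 ,pos_w3_4_0 ,pos_w3_4_1 ,pos_w3_4_3 ,pos_w4_4_0 ,pos_w4_4_1 ,pos_w4_4_3 ,pos_w5_4_0 ,pos_w5_4_1 ,pos_w5_4_3 ,pos_w6_4_0 ,pos_w6_4_1 ,pos_w6_4_3]
  try ring

lemma evLM_43_013 {γ : ℕ → ℕ → ℕ → ℝ} (hγ : GammaMono γ) :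
    totalScore .lmax γ ({0,1,2,3} : Finset ℕ) VV 3 ({0,1,3} : Finset ℕ) = 4 * γ 4 3 1 + 2 * γ 4 3 1 + 4 * γ 4 3 1 + 3 * γ 4 3 1 + 6 * γ 4 3 2 + 1 * γ 4 3 1 := by
  rw [totalScore_VV,
    lmax_eval hγ w1 0 1 (by decide) (by decide) (by decide) (by decide),
    lmax_eval hγ w2 0 1 (by decide) (by decide) (by decide) (by decide),
    lmax_eval hγ w3 1 1 (by decide) (by decide) (by decide) (by decide),
    lmax_eval hγ w4 1 1 (by decide) (by decide) (by decide) (by decide),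
    lmax_eval hγ w5 0 2 (by decide) (by decide) (by decide) (by decide),
    lmax_eval hγ w6 3 1 (by decide) (by decide) (by decide) (by decide)]
  norm_num [show (({0,1,2,3} : Finset ℕ)).card = 4 from by decide]
  try ring

lemma evL1_43_023 (γ : ℕ → ℕ → ℕ → ℝ) :
    totalScore .l1 γ ({0,1,2,3} : Finset ℕ) VV 3 ({0,2,3} : Finset ℕ) = 4 * (γ 4 3 1 + γ 4 3 4 + γ 4 3 3) + 2 * (γ 4 3 1 + γ 4 3 4 + γ 4 3 2) + 4 * (γ 4 3 3 + γ 4 3 2 + γ 4 3 4) + 3 * (γ 4 3 4 + γ 4 3 3 + γ 4 3 2) + 6 * (γ 4 3 2 + γ 4 3 1 + γ 4 3 4) + 1 * (γ 4 3 4 + γ 4 3 2 + γ 4 3 1) := by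
  rw [totalScore_VV]
  simp only [voterScore]
  norm_num [Finset.sum_insert, Finset.mem_insert, Finset.mem_singleton, Finset.sum_singleton,
    pos_w1_4_0 ,pos_w1_4_2 ,pos_w1_4_3 ,pos_w2_4_0 ,pos_w2_4_2 ,pos_w2_4_3 ,pos_w3_4_0 ,pos_w3_4_2 ,pos_w3_4_3 ,pos_w4_4_0 ,pos_w4_4_2 ,pos_w4_4_3 ,pos_w5_4_0 ,pos_w5_4_2 ,pos_w5_4_3 ,pos_w6_4_0 ,pos_w6_4_2 ,pos_w6_4_3]
  try ring

lemma evLM_43_023 {γ : ℕ → ℕ → ℕ → ℝ} (hγ : GammaMono γ) :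
    totalScore .lmax γ ({0,1,2,3} : Finset ℕ) VV 3 ({0,2,3} : Finset ℕ) = 4 * γ 4 3 1 + 2 * γ 4 3 1 + 4 * γ 4 3 2 + 3 * γ 4 3 2 + 6 * γ 4 3 1 + 1 * γ 4 3 1 := by
  rw [totalScore_VV,
    lmax_eval hγ w1 0 1 (by decide) (by decide) (by decide) (by decide),
    lmax_eval hγ w2 0 1 (by decide) (by decide) (by decide) (by decide),
    lmax_eval hγ w3 2 2 (by decide) (by decide) (by decide) (by decide),
    lmax_eval hγ w4 3 2 (by decide) (by decide) (by decide) (by decide),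
    lmax_eval hγ w5 2 1 (by decide) (by decide) (by decide) (by decide),
    lmax_eval hγ w6 3 1 (by decide) (by decide) (by decide) (by decide)]
  norm_num [show (({0,1,2,3} : Finset ℕ)).card = 4 from by decide]
  try ring

lemma evL1_43_123 (γ : ℕ → ℕ → ℕ → ℝ) :
    totalScore .l1 γ ({0,1,2,3} : Finset ℕ) VV 3 ({1,2,3} : Finset ℕ) = 4 * (γ 4 3 2 + γ 4 3 4 + γ 4 3 3) + 2 * (γ 4 3 3 + γ 4 3 4 + γ 4 3 2) + 4 * (γ 4 3 1 + γ 4 3 2 + γ 4 3 4) + 3 * (γ 4 3 1 + γ 4 3 3 + γ 4 3 2) + 6 * (γ 4 3 3 + γ 4 3 1 + γ 4 3 4) + 1 * (γ 4 3 3 + γ 4 3 2 + γ 4 3 1) := by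
  rw [totalScore_VV]
  simp only [voterScore]
  norm_num [Finset.sum_insert, Finset.mem_insert, Finset.mem_singleton, Finset.sum_singleton,
    pos_w1_4_1 ,pos_w1_4_2 ,pos_w1_4_3 ,pos_w2_4_1 ,pos_w2_4_2 ,pos_w2_4_3 ,pos_w3_4_1 ,pos_w3_4_2 ,pos_w3_4_3 ,pos_w4_4_1 ,pos_w4_4_2 ,pos_w4_4_3 ,pos_w5_4_1 ,pos_w5_4_2 ,pos_w5_4_3 ,pos_w6_4_1 ,pos_w6_4_2 ,pos_w6_4_3]
  try ring

lemma evLM_43_123 {γ : ℕ → ℕ → ℕ → ℝ} (hγ : GammaMono γ) :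
    totalScore .lmax γ ({0,1,2,3} : Finset ℕ) VV 3 ({1,2,3} : Finset ℕ) = 4 * γ 4 3 2 + 2 * γ 4 3 2 + 4 * γ 4 3 1 + 3 * γ 4 3 1 + 6 * γ 4 3 1 + 1 * γ 4 3 1 := by
  rw [totalScore_VV,
    lmax_eval hγ w1 1 2 (by decide) (by decide) (by decide) (by decide),
    lmax_eval hγ w2 3 2 (by decide) (by decide) (by decide) (by decide),
    lmax_eval hγ w3 1 1 (by decide) (by decide) (by decide) (by decide),
    lmax_eval hγ w4 1 1 (by decide) (by decide) (by decide) (by decide),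
    lmax_eval hγ w5 2 1 (by decide) (by decide) (by decide) (by decide),
    lmax_eval hγ w6 3 1 (by decide) (by decide) (by decide) (by decide)]
  norm_num [show (({0,1,2,3} : Finset ℕ)).card = 4 from by decide]
  try ring

lemma evL1_32_01 (γ : ℕ → ℕ → ℕ → ℝ) :
    totalScore .l1 γ ({0,1,2} : Finset ℕ) VV 2 ({0,1} : Finset ℕ) = 4 * (γ 3 2 1 + γ 3 2 2) + 2 * (γ 3 2 1 + γ 3 2 2) + 4 * (γ 3 2 3 + γ 3 2 1) + 3 * (γ 3 2 3 + γ 3 2 1) + 6 * (γ 3 2 2 + γ 3 2 3) + 1 * (γ 3 2 3 + γ 3 2 2) := by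
  rw [totalScore_VV]
  simp only [voterScore]
  norm_num [Finset.sum_insert, Finset.mem_insert, Finset.mem_singleton, Finset.sum_singleton,
    pos_w1_3_0 ,pos_w1_3_1 ,pos_w2_3_0 ,pos_w2_3_1 ,pos_w3_3_0 ,pos_w3_3_1 ,pos_w4_3_0 ,pos_w4_3_1 ,pos_w5_3_0 ,pos_w5_3_1 ,pos_w6_3_0 ,pos_w6_3_1]
  try ring

lemma evLM_32_01 {γ : ℕ → ℕ → ℕ → ℝ} (hγ : GammaMono γ) :
    totalScore .lmax γ ({0,1,2} : Finset ℕ) VV 2 ({0,1} : Finset ℕ) = 4 * γ 3 2 1 + 2 * γ 3 2 1 + 4 * γ 3 2 1 + 3 * γ 3 2 1 + 6 * γ 3 2 2 + 1 * γ 3 2 2 := by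
  rw [totalScore_VV,
    lmax_eval hγ w1 0 1 (by decide) (by decide) (by decide) (by decide),
    lmax_eval hγ w2 0 1 (by decide) (by decide) (by decide) (by decide),
    lmax_eval hγ w3 1 1 (by decide) (by decide) (by decide) (by decide),
    lmax_eval hγ w4 1 1 (by decide) (by decide) (by decide) (by decide),
    lmax_eval hγ w5 0 2 (by decide) (by decide) (by decide) (by decide),
    lmax_eval hγ w6 1 2 (by decide) (by decide) (by decide) (by decide)]
  norm_num [show (({0,1,2} : Finset ℕ)).card = 3 from by decide]
  try ring

lemma evL1_32_02 (γ : ℕ → ℕ → ℕ → ℝ) :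
    totalScore .l1 γ ({0,1,2} : Finset ℕ) VV 2 ({0,2} : Finset ℕ) = 4 * (γ 3 2 1 + γ 3 2 3) + 2 * (γ 3 2 1 + γ 3 2 3) + 4 * (γ 3 2 3 + γ 3 2 2) + 3 * (γ 3 2 3 + γ 3 2 2) + 6 * (γ 3 2 2 + γ 3 2 1) + 1 * (γ 3 2 3 + γ 3 2 1) := by
  rw [totalScore_VV]
  simp only [voterScore]
  norm_num [Finset.sum_insert, Finset.mem_insert, Finset.mem_singleton, Finset.sum_singleton,
    pos_w1_3_0 ,pos_w1_3_2 ,pos_w2_3_0 ,pos_w2_3_2 ,pos_w3_3_0 ,pos_w3_3_2 ,pos_w4_3_0 ,pos_w4_3_2 ,pos_w5_3_0 ,pos_w5_3_2 ,pos_w6_3_0 ,pos_w6_3_2]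
  try ring

lemma evLM_32_02 {γ : ℕ → ℕ → ℕ → ℝ} (hγ : GammaMono γ) :
    totalScore .lmax γ ({0,1,2} : Finset ℕ) VV 2 ({0,2} : Finset ℕ) = 4 * γ 3 2 1 + 2 * γ 3 2 1 + 4 * γ 3 2 2 + 3 * γ 3 2 2 + 6 * γ 3 2 1 + 1 * γ 3 2 1 := by
  rw [totalScore_VV,
    lmax_eval hγ w1 0 1 (by decide) (by decide) (by decide) (by decide),
    lmax_eval hγ w2 0 1 (by decide) (by decide) (by decide) (by decide),
    lmax_eval hγ w3 2 2 (by decide) (by decide) (by decide) (by decide),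
    lmax_eval hγ w4 2 2 (by decide) (by decide) (by decide) (by decide),
    lmax_eval hγ w5 2 1 (by decide) (by decide) (by decide) (by decide),
    lmax_eval hγ w6 2 1 (by decide) (by decide) (by decide) (by decide)]
  norm_num [show (({0,1,2} : Finset ℕ)).card = 3 from by decide]
  try ring

lemma evL1_32_12 (γ : ℕ → ℕ → ℕ → ℝ) :
    totalScore .l1 γ ({0,1,2} : Finset ℕ) VV 2 ({1,2} : Finset ℕ) = 4 * (γ 3 2 2 + γ 3 2 3) + 2 * (γ 3 2 2 + γ 3 2 3) + 4 * (γ 3 2 1 + γ 3 2 2) + 3 * (γ 3 2 1 + γ 3 2 2) + 6 * (γ 3 2 3 + γ 3 2 1) + 1 * (γ 3 2 2 + γ 3 2 1) := by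
  rw [totalScore_VV]
  simp only [voterScore]
  norm_num [Finset.sum_insert, Finset.mem_insert, Finset.mem_singleton, Finset.sum_singleton,
    pos_w1_3_1 ,pos_w1_3_2 ,pos_w2_3_1 ,pos_w2_3_2 ,pos_w3_3_1 ,pos_w3_3_2 ,pos_w4_3_1 ,pos_w4_3_2 ,pos_w5_3_1 ,pos_w5_3_2 ,pos_w6_3_1 ,pos_w6_3_2]
  try ring

lemma evLM_32_12 {γ : ℕ → ℕ → ℕ → ℝ} (hγ : GammaMono γ) :
    totalScore .lmax γ ({0,1,2} : Finset ℕ) VV 2 ({1,2} : Finset ℕ) = 4 * γ 3 2 2 + 2 * γ 3 2 2 + 4 * γ 3 2 1 + 3 * γ 3 2 1 + 6 * γ 3 2 1 + 1 * γ 3 2 1 := by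
  rw [totalScore_VV,
    lmax_eval hγ w1 1 2 (by decide) (by decide) (by decide) (by decide),
    lmax_eval hγ w2 1 2 (by decide) (by decide) (by decide) (by decide),
    lmax_eval hγ w3 1 1 (by decide) (by decide) (by decide) (by decide),
    lmax_eval hγ w4 1 1 (by decide) (by decide) (by decide) (by decide),
    lmax_eval hγ w5 2 1 (by decide) (by decide) (by decide) (by decide),
    lmax_eval hγ w6 2 1 (by decide) (by decide) (by decide) (by decide)]
  norm_num [show (({0,1,2} : Finset ℕ)).card = 3 from by decide]
  try ring

lemma evL1_42_01 (γ : ℕ → ℕ → ℕ → ℝ) :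
    totalScore .l1 γ ({0,1,2,3} : Finset ℕ) VV 2 ({0,1} : Finset ℕ) = 4 * (γ 4 2 1 + γ 4 2 2) + 2 * (γ 4 2 1 + γ 4 2 3) + 4 * (γ 4 2 3 + γ 4 2 1) + 3 * (γ 4 2 4 + γ 4 2 1) + 6 * (γ 4 2 2 + γ 4 2 3) + 1 * (γ 4 2 4 + γ 4 2 3) := by
  rw [totalScore_VV]
  simp only [voterScore]
  norm_num [Finset.sum_insert, Finset.mem_insert, Finset.mem_singleton, Finset.sum_singleton,
    pos_w1_4_0 ,pos_w1_4_1 ,pos_w2_4_0 ,pos_w2_4_1 ,pos_w3_4_0 ,pos_w3_4_1 ,pos_w4_4_0 ,pos_w4_4_1 ,pos_w5_4_0 ,pos_w5_4_1 ,pos_w6_4_0 ,pos_w6_4_1]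
  try ring

lemma evLM_42_01 {γ : ℕ → ℕ → ℕ → ℝ} (hγ : GammaMono γ) :
    totalScore .lmax γ ({0,1,2,3} : Finset ℕ) VV 2 ({0,1} : Finset ℕ) = 4 * γ 4 2 1 + 2 * γ 4 2 1 + 4 * γ 4 2 1 + 3 * γ 4 2 1 + 6 * γ 4 2 2 + 1 * γ 4 2 3 := by
  rw [totalScore_VV,
    lmax_eval hγ w1 0 1 (by decide) (by decide) (by decide) (by decide),
    lmax_eval hγ w2 0 1 (by decide) (by decide) (by decide) (by decide),
    lmax_eval hγ w3 1 1 (by decide) (by decide) (by decide) (by decide),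
    lmax_eval hγ w4 1 1 (by decide) (by decide) (by decide) (by decide),
    lmax_eval hγ w5 0 2 (by decide) (by decide) (by decide) (by decide),
    lmax_eval hγ w6 1 3 (by decide) (by decide) (by decide) (by decide)]
  norm_num [show (({0,1,2,3} : Finset ℕ)).card = 4 from by decide]
  try ring

lemma evL1_42_02 (γ : ℕ → ℕ → ℕ → ℝ) :
    totalScore .l1 γ ({0,1,2,3} : Finset ℕ) VV 2 ({0,2} : Finset ℕ) = 4 * (γ 4 2 1 + γ 4 2 4) + 2 * (γ 4 2 1 + γ 4 2 4) + 4 * (γ 4 2 3 + γ 4 2 2) + 3 * (γ 4 2 4 + γ 4 2 3) + 6 * (γ 4 2 2 + γ 4 2 1) + 1 * (γ 4 2 4 + γ 4 2 2) := by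
  rw [totalScore_VV]
  simp only [voterScore]
  norm_num [Finset.sum_insert, Finset.mem_insert, Finset.mem_singleton, Finset.sum_singleton,
    pos_w1_4_0 ,pos_w1_4_2 ,pos_w2_4_0 ,pos_w2_4_2 ,pos_w3_4_0 ,pos_w3_4_2 ,pos_w4_4_0 ,pos_w4_4_2 ,pos_w5_4_0 ,pos_w5_4_2 ,pos_w6_4_0 ,pos_w6_4_2]
  try ring

lemma evLM_42_02 {γ : ℕ → ℕ → ℕ → ℝ} (hγ : GammaMono γ) :
    totalScore .lmax γ ({0,1,2,3} : Finset ℕ) VV 2 ({0,2} : Finset ℕ) = 4 * γ 4 2 1 + 2 * γ 4 2 1 + 4 * γ 4 2 2 + 3 * γ 4 2 3 + 6 * γ 4 2 1 + 1 * γ 4 2 2 := by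
  rw [totalScore_VV,
    lmax_eval hγ w1 0 1 (by decide) (by decide) (by decide) (by decide),
    lmax_eval hγ w2 0 1 (by decide) (by decide) (by decide) (by decide),
    lmax_eval hγ w3 2 2 (by decide) (by decide) (by decide) (by decide),
    lmax_eval hγ w4 2 3 (by decide) (by decide) (by decide) (by decide),
    lmax_eval hγ w5 2 1 (by decide) (by decide) (by decide) (by decide),
    lmax_eval hγ w6 2 2 (by decide) (by decide) (by decide) (by decide)]
  norm_num [show (({0,1,2,3} : Finset ℕ)).card = 4 from by decide]
  try ring

lemma evL1_42_03 (γ : ℕ → ℕ → ℕ → ℝ) :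
    totalScore .l1 γ ({0,1,2,3} : Finset ℕ) VV 2 ({0,3} : Finset ℕ) = 4 * (γ 4 2 1 + γ 4 2 3) + 2 * (γ 4 2 1 + γ 4 2 2) + 4 * (γ 4 2 3 + γ 4 2 4) + 3 * (γ 4 2 4 + γ 4 2 2) + 6 * (γ 4 2 2 + γ 4 2 4) + 1 * (γ 4 2 4 + γ 4 2 1) := by
  rw [totalScore_VV]
  simp only [voterScore]
  norm_num [Finset.sum_insert, Finset.mem_insert, Finset.mem_singleton, Finset.sum_singleton,
    pos_w1_4_0 ,pos_w1_4_3 ,pos_w2_4_0 ,pos_w2_4_3 ,pos_w3_4_0 ,pos_w3_4_3 ,pos_w4_4_0 ,pos_w4_4_3 ,pos_w5_4_0 ,pos_w5_4_3 ,pos_w6_4_0 ,pos_w6_4_3]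
  try ring

lemma evLM_42_03 {γ : ℕ → ℕ → ℕ → ℝ} (hγ : GammaMono γ) :
    totalScore .lmax γ ({0,1,2,3} : Finset ℕ) VV 2 ({0,3} : Finset ℕ) = 4 * γ 4 2 1 + 2 * γ 4 2 1 + 4 * γ 4 2 3 + 3 * γ 4 2 2 + 6 * γ 4 2 2 + 1 * γ 4 2 1 := by
  rw [totalScore_VV,
    lmax_eval hγ w1 0 1 (by decide) (by decide) (by decide) (by decide),
    lmax_eval hγ w2 0 1 (by decide) (by decide) (by decide) (by decide),
    lmax_eval hγ w3 0 3 (by decide) (by decide) (by decide) (by decide),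
    lmax_eval hγ w4 3 2 (by decide) (by decide) (by decide) (by decide),
    lmax_eval hγ w5 0 2 (by decide) (by decide) (by decide) (by decide),
    lmax_eval hγ w6 3 1 (by decide) (by decide) (by decide) (by decide)]
  norm_num [show (({0,1,2,3} : Finset ℕ)).card = 4 from by decide]
  try ring

lemma evL1_42_12 (γ : ℕ → ℕ → ℕ → ℝ) :
    totalScore .l1 γ ({0,1,2,3} : Finset ℕ) VV 2 ({1,2} : Finset ℕ) = 4 * (γ 4 2 2 + γ 4 2 4) + 2 * (γ 4 2 3 + γ 4 2 4) + 4 * (γ 4 2 1 + γ 4 2 2) + 3 * (γ 4 2 1 + γ 4 2 3) + 6 * (γ 4 2 3 + γ 4 2 1) + 1 * (γ 4 2 3 + γ 4 2 2) := by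
  rw [totalScore_VV]
  simp only [voterScore]
  norm_num [Finset.sum_insert, Finset.mem_insert, Finset.mem_singleton, Finset.sum_singleton,
    pos_w1_4_1 ,pos_w1_4_2 ,pos_w2_4_1 ,pos_w2_4_2 ,pos_w3_4_1 ,pos_w3_4_2 ,pos_w4_4_1 ,pos_w4_4_2 ,pos_w5_4_1 ,pos_w5_4_2 ,pos_w6_4_1 ,pos_w6_4_2]
  try ring

lemma evLM_42_12 {γ : ℕ → ℕ → ℕ → ℝ} (hγ : GammaMono γ) :
    totalScore .lmax γ ({0,1,2,3} : Finset ℕ) VV 2 ({1,2} : Finset ℕ) = 4 * γ 4 2 2 + 2 * γ 4 2 3 + 4 * γ 4 2 1 + 3 * γ 4 2 1 + 6 * γ 4 2 1 + 1 * γ 4 2 2 := by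
  rw [totalScore_VV,
    lmax_eval hγ w1 1 2 (by decide) (by decide) (by decide) (by decide),
    lmax_eval hγ w2 1 3 (by decide) (by decide) (by decide) (by decide),
    lmax_eval hγ w3 1 1 (by decide) (by decide) (by decide) (by decide),
    lmax_eval hγ w4 1 1 (by decide) (by decide) (by decide) (by decide),
    lmax_eval hγ w5 2 1 (by decide) (by decide) (by decide) (by decide),
    lmax_eval hγ w6 2 2 (by decide) (by decide) (by decide) (by decide)]
  norm_num [show (({0,1,2,3} : Finset ℕ)).card = 4 from by decide]
  try ring

lemma evL1_42_13 (γ : ℕ → ℕ → ℕ → ℝ) :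
    totalScore .l1 γ ({0,1,2,3} : Finset ℕ) VV 2 ({1,3} : Finset ℕ) = 4 * (γ 4 2 2 + γ 4 2 3) + 2 * (γ 4 2 3 + γ 4 2 2) + 4 * (γ 4 2 1 + γ 4 2 4) + 3 * (γ 4 2 1 + γ 4 2 2) + 6 * (γ 4 2 3 + γ 4 2 4) + 1 * (γ 4 2 3 + γ 4 2 1) := by
  rw [totalScore_VV]
  simp only [voterScore]
  norm_num [Finset.sum_insert, Finset.mem_insert, Finset.mem_singleton, Finset.sum_singleton,
    pos_w1_4_1 ,pos_w1_4_3 ,pos_w2_4_1 ,pos_w2_4_3 ,pos_w3_4_1 ,pos_w3_4_3 ,pos_w4_4_1 ,pos_w4_4_3 ,pos_w5_4_1 ,pos_w5_4_3 ,pos_w6_4_1 ,pos_w6_4_3]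
  try ring

lemma evLM_42_13 {γ : ℕ → ℕ → ℕ → ℝ} (hγ : GammaMono γ) :
    totalScore .lmax γ ({0,1,2,3} : Finset ℕ) VV 2 ({1,3} : Finset ℕ) = 4 * γ 4 2 2 + 2 * γ 4 2 2 + 4 * γ 4 2 1 + 3 * γ 4 2 1 + 6 * γ 4 2 3 + 1 * γ 4 2 1 := by
  rw [totalScore_VV,
    lmax_eval hγ w1 1 2 (by decide) (by decide) (by decide) (by decide),
    lmax_eval hγ w2 3 2 (by decide) (by decide) (by decide) (by decide),
    lmax_eval hγ w3 1 1 (by decide) (by decide) (by decide) (by decide),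
    lmax_eval hγ w4 1 1 (by decide) (by decide) (by decide) (by decide),
    lmax_eval hγ w5 1 3 (by decide) (by decide) (by decide) (by decide),
    lmax_eval hγ w6 3 1 (by decide) (by decide) (by decide) (by decide)]
  norm_num [show (({0,1,2,3} : Finset ℕ)).card = 4 from by decide]
  try ring

lemma evL1_42_23 (γ : ℕ → ℕ → ℕ → ℝ) :
    totalScore .l1 γ ({0,1,2,3} : Finset ℕ) VV 2 ({2,3} : Finset ℕ) = 4 * (γ 4 2 4 + γ 4 2 3) + 2 * (γ 4 2 4 + γ 4 2 2) + 4 * (γ 4 2 2 + γ 4 2 4) + 3 * (γ 4 2 3 + γ 4 2 2) + 6 * (γ 4 2 1 + γ 4 2 4) + 1 * (γ 4 2 2 + γ 4 2 1) := by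
  rw [totalScore_VV]
  simp only [voterScore]
  norm_num [Finset.sum_insert, Finset.mem_insert, Finset.mem_singleton, Finset.sum_singleton,
    pos_w1_4_2 ,pos_w1_4_3 ,pos_w2_4_2 ,pos_w2_4_3 ,pos_w3_4_2 ,pos_w3_4_3 ,pos_w4_4_2 ,pos_w4_4_3 ,pos_w5_4_2 ,pos_w5_4_3 ,pos_w6_4_2 ,pos_w6_4_3]
  try ring

lemma evLM_42_23 {γ : ℕ → ℕ → ℕ → ℝ} (hγ : GammaMono γ) :
    totalScore .lmax γ ({0,1,2,3} : Finset ℕ) VV 2 ({2,3} : Finset ℕ) = 4 * γ 4 2 3 + 2 * γ 4 2 2 + 4 * γ 4 2 2 + 3 * γ 4 2 2 + 6 * γ 4 2 1 + 1 * γ 4 2 1 := by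
  rw [totalScore_VV,
    lmax_eval hγ w1 3 3 (by decide) (by decide) (by decide) (by decide),
    lmax_eval hγ w2 3 2 (by decide) (by decide) (by decide) (by decide),
    lmax_eval hγ w3 2 2 (by decide) (by decide) (by decide) (by decide),
    lmax_eval hγ w4 3 2 (by decide) (by decide) (by decide) (by decide),
    lmax_eval hγ w5 2 1 (by decide) (by decide) (by decide) (by decide),
    lmax_eval hγ w6 3 1 (by decide) (by decide) (by decide) (by decide)]
  norm_num [show (({0,1,2,3} : Finset ℕ)).card = 4 from by decide]
  try ring

lemma evL1_21_0 (γ : ℕ → ℕ → ℕ → ℝ) :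
    totalScore .l1 γ ({0,1} : Finset ℕ) VV 1 ({0} : Finset ℕ) = 4 * (γ 2 1 1) + 2 * (γ 2 1 1) + 4 * (γ 2 1 2) + 3 * (γ 2 1 2) + 6 * (γ 2 1 1) + 1 * (γ 2 1 2) := by
  rw [totalScore_VV]
  simp only [voterScore]
  norm_num [Finset.sum_insert, Finset.mem_insert, Finset.mem_singleton, Finset.sum_singleton,
    pos_w1_2_0 ,pos_w2_2_0 ,pos_w3_2_0 ,pos_w4_2_0 ,pos_w5_2_0 ,pos_w6_2_0]
  try ring

lemma evLM_21_0 {γ : ℕ → ℕ → ℕ → ℝ} (hγ : GammaMono γ) :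
    totalScore .lmax γ ({0,1} : Finset ℕ) VV 1 ({0} : Finset ℕ) = 4 * γ 2 1 1 + 2 * γ 2 1 1 + 4 * γ 2 1 2 + 3 * γ 2 1 2 + 6 * γ 2 1 1 + 1 * γ 2 1 2 := by
  rw [totalScore_VV,
    lmax_eval hγ w1 0 1 (by decide) (by decide) (by decide) (by decide),
    lmax_eval hγ w2 0 1 (by decide) (by decide) (by decide) (by decide),
    lmax_eval hγ w3 0 2 (by decide) (by decide) (by decide) (by decide),
    lmax_eval hγ w4 0 2 (by decide) (by decide) (by decide) (by decide),
    lmax_eval hγ w5 0 1 (by decide) (by decide) (by decide) (by decide),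
    lmax_eval hγ w6 0 2 (by decide) (by decide) (by decide) (by decide)]
  norm_num [show (({0,1} : Finset ℕ)).card = 2 from by decide]
  try ring

lemma evL1_21_1 (γ : ℕ → ℕ → ℕ → ℝ) :
    totalScore .l1 γ ({0,1} : Finset ℕ) VV 1 ({1} : Finset ℕ) = 4 * (γ 2 1 2) + 2 * (γ 2 1 2) + 4 * (γ 2 1 1) + 3 * (γ 2 1 1) + 6 * (γ 2 1 2) + 1 * (γ 2 1 1) := by
  rw [totalScore_VV]
  simp only [voterScore]
  norm_num [Finset.sum_insert, Finset.mem_insert, Finset.mem_singleton, Finset.sum_singleton,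
    pos_w1_2_1 ,pos_w2_2_1 ,pos_w3_2_1 ,pos_w4_2_1 ,pos_w5_2_1 ,pos_w6_2_1]
  try ring

lemma evLM_21_1 {γ : ℕ → ℕ → ℕ → ℝ} (hγ : GammaMono γ) :
    totalScore .lmax γ ({0,1} : Finset ℕ) VV 1 ({1} : Finset ℕ) = 4 * γ 2 1 2 + 2 * γ 2 1 2 + 4 * γ 2 1 1 + 3 * γ 2 1 1 + 6 * γ 2 1 2 + 1 * γ 2 1 1 := by
  rw [totalScore_VV,
    lmax_eval hγ w1 1 2 (by decide) (by decide) (by decide) (by decide),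
    lmax_eval hγ w2 1 2 (by decide) (by decide) (by decide) (by decide),
    lmax_eval hγ w3 1 1 (by decide) (by decide) (by decide) (by decide),
    lmax_eval hγ w4 1 1 (by decide) (by decide) (by decide) (by decide),
    lmax_eval hγ w5 1 2 (by decide) (by decide) (by decide) (by decide),
    lmax_eval hγ w6 1 1 (by decide) (by decide) (by decide) (by decide)]
  norm_num [show (({0,1} : Finset ℕ)).card = 2 from by decide]
  try ring

lemma cmp43_013 (β : ScoreNorm) {γ : ℕ → ℕ → ℕ → ℝ} (hγ : GammaMono γ) (hrat : RationalRule β γ) :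
    totalScore β γ ({0,1,2,3} : Finset ℕ) VV 3 ({0,1,3} : Finset ℕ) <
      totalScore β γ ({0,1,2,3} : Finset ℕ) VV 3 ({0,1,2} : Finset ℕ) := by
  cases β with
  | l1 =>
    rw [evL1_43_013, evL1_43_012]
    have a1 : γ 4 3 2 ≤ γ 4 3 1 := hγ 4 3 1 2 (by norm_num) (by norm_num) (by norm_num)
    have a2 : γ 4 3 3 ≤ γ 4 3 2 := hγ 4 3 2 3 (by norm_num) (by norm_num) (by norm_num)
    have a3 : γ 4 3 4 ≤ γ 4 3 3 := hγ 4 3 3 4 (by norm_num) (by norm_num) (by norm_num)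
    have r1 : γ 4 3 4 < γ 4 3 1 := hrat 4 3 (by norm_num) (by norm_num)
    linarith
  | lmax =>
    rw [evLM_43_013 hγ, evLM_43_012 hγ]
    have a1 : γ 4 3 2 ≤ γ 4 3 1 := hγ 4 3 1 2 (by norm_num) (by norm_num) (by norm_num)
    have a2 : γ 4 3 3 ≤ γ 4 3 2 := hγ 4 3 2 3 (by norm_num) (by norm_num) (by norm_num)
    have a3 : γ 4 3 4 ≤ γ 4 3 3 := hγ 4 3 3 4 (by norm_num) (by norm_num) (by norm_num)
    have r1 : γ 4 3 2 < γ 4 3 1 := by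
      have h := hrat 4 3 (by norm_num) (by norm_num)
      norm_num at h
      exact h
    linarith

lemma cmp43_023 (β : ScoreNorm) {γ : ℕ → ℕ → ℕ → ℝ} (hγ : GammaMono γ) (hrat : RationalRule β γ) :
    totalScore β γ ({0,1,2,3} : Finset ℕ) VV 3 ({0,2,3} : Finset ℕ) <
      totalScore β γ ({0,1,2,3} : Finset ℕ) VV 3 ({0,1,2} : Finset ℕ) := by
  cases β with
  | l1 =>
    rw [evL1_43_023, evL1_43_012]
    have a1 : γ 4 3 2 ≤ γ 4 3 1 := hγ 4 3 1 2 (by norm_num) (by norm_num) (by norm_num)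
    have a2 : γ 4 3 3 ≤ γ 4 3 2 := hγ 4 3 2 3 (by norm_num) (by norm_num) (by norm_num)
    have a3 : γ 4 3 4 ≤ γ 4 3 3 := hγ 4 3 3 4 (by norm_num) (by norm_num) (by norm_num)
    have r1 : γ 4 3 4 < γ 4 3 1 := hrat 4 3 (by norm_num) (by norm_num)
    linarith
  | lmax =>
    rw [evLM_43_023 hγ, evLM_43_012 hγ]
    have a1 : γ 4 3 2 ≤ γ 4 3 1 := hγ 4 3 1 2 (by norm_num) (by norm_num) (by norm_num)
    have a2 : γ 4 3 3 ≤ γ 4 3 2 := hγ 4 3 2 3 (by norm_num) (by norm_num) (by norm_num)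
    have a3 : γ 4 3 4 ≤ γ 4 3 3 := hγ 4 3 3 4 (by norm_num) (by norm_num) (by norm_num)
    have r1 : γ 4 3 2 < γ 4 3 1 := by
      have h := hrat 4 3 (by norm_num) (by norm_num)
      norm_num at h
      exact h
    linarith

lemma cmp43_123 (β : ScoreNorm) {γ : ℕ → ℕ → ℕ → ℝ} (hγ : GammaMono γ) (hrat : RationalRule β γ) :
    totalScore β γ ({0,1,2,3} : Finset ℕ) VV 3 ({1,2,3} : Finset ℕ) <
      totalScore β γ ({0,1,2,3} : Finset ℕ) VV 3 ({0,1,2} : Finset ℕ) := by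
  cases β with
  | l1 =>
    rw [evL1_43_123, evL1_43_012]
    have a1 : γ 4 3 2 ≤ γ 4 3 1 := hγ 4 3 1 2 (by norm_num) (by norm_num) (by norm_num)
    have a2 : γ 4 3 3 ≤ γ 4 3 2 := hγ 4 3 2 3 (by norm_num) (by norm_num) (by norm_num)
    have a3 : γ 4 3 4 ≤ γ 4 3 3 := hγ 4 3 3 4 (by norm_num) (by norm_num) (by norm_num)
    have r1 : γ 4 3 4 < γ 4 3 1 := hrat 4 3 (by norm_num) (by norm_num)
    linarith
  | lmax =>
    rw [evLM_43_123 hγ, evLM_43_012 hγ]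
    have a1 : γ 4 3 2 ≤ γ 4 3 1 := hγ 4 3 1 2 (by norm_num) (by norm_num) (by norm_num)
    have a2 : γ 4 3 3 ≤ γ 4 3 2 := hγ 4 3 2 3 (by norm_num) (by norm_num) (by norm_num)
    have a3 : γ 4 3 4 ≤ γ 4 3 3 := hγ 4 3 3 4 (by norm_num) (by norm_num) (by norm_num)
    have r1 : γ 4 3 2 < γ 4 3 1 := by
      have h := hrat 4 3 (by norm_num) (by norm_num)
      norm_num at h
      exact h
    linarith

lemma cmp32_01 (β : ScoreNorm) {γ : ℕ → ℕ → ℕ → ℝ} (hγ : GammaMono γ) (hrat : RationalRule β γ) :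
    totalScore β γ ({0,1,2} : Finset ℕ) VV 2 ({0,1} : Finset ℕ) <
      totalScore β γ ({0,1,2} : Finset ℕ) VV 2 ({1,2} : Finset ℕ) := by
  cases β with
  | l1 =>
    rw [evL1_32_01, evL1_32_12]
    have a1 : γ 3 2 2 ≤ γ 3 2 1 := hγ 3 2 1 2 (by norm_num) (by norm_num) (by norm_num)
    have a2 : γ 3 2 3 ≤ γ 3 2 2 := hγ 3 2 2 3 (by norm_num) (by norm_num) (by norm_num)
    have r1 : γ 3 2 3 < γ 3 2 1 := hrat 3 2 (by norm_num) (by norm_num)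
    linarith
  | lmax =>
    rw [evLM_32_01 hγ, evLM_32_12 hγ]
    have a1 : γ 3 2 2 ≤ γ 3 2 1 := hγ 3 2 1 2 (by norm_num) (by norm_num) (by norm_num)
    have a2 : γ 3 2 3 ≤ γ 3 2 2 := hγ 3 2 2 3 (by norm_num) (by norm_num) (by norm_num)
    have r1 : γ 3 2 2 < γ 3 2 1 := by
      have h := hrat 3 2 (by norm_num) (by norm_num)
      norm_num at h
      exact h
    linarith

lemma cmp32_02 (β : ScoreNorm) {γ : ℕ → ℕ → ℕ → ℝ} (hγ : GammaMono γ) (hrat : RationalRule β γ) :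
    totalScore β γ ({0,1,2} : Finset ℕ) VV 2 ({0,2} : Finset ℕ) <
      totalScore β γ ({0,1,2} : Finset ℕ) VV 2 ({1,2} : Finset ℕ) := by
  cases β with
  | l1 =>
    rw [evL1_32_02, evL1_32_12]
    have a1 : γ 3 2 2 ≤ γ 3 2 1 := hγ 3 2 1 2 (by norm_num) (by norm_num) (by norm_num)
    have a2 : γ 3 2 3 ≤ γ 3 2 2 := hγ 3 2 2 3 (by norm_num) (by norm_num) (by norm_num)
    have r1 : γ 3 2 3 < γ 3 2 1 := hrat 3 2 (by norm_num) (by norm_num)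
    linarith
  | lmax =>
    rw [evLM_32_02 hγ, evLM_32_12 hγ]
    have a1 : γ 3 2 2 ≤ γ 3 2 1 := hγ 3 2 1 2 (by norm_num) (by norm_num) (by norm_num)
    have a2 : γ 3 2 3 ≤ γ 3 2 2 := hγ 3 2 2 3 (by norm_num) (by norm_num) (by norm_num)
    have r1 : γ 3 2 2 < γ 3 2 1 := by
      have h := hrat 3 2 (by norm_num) (by norm_num)
      norm_num at h
      exact h
    linarith

lemma cmp42_02 (β : ScoreNorm) {γ : ℕ → ℕ → ℕ → ℝ} (hγ : GammaMono γ) :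
    totalScore β γ ({0,1,2,3} : Finset ℕ) VV 2 ({0,2} : Finset ℕ) ≤
      totalScore β γ ({0,1,2,3} : Finset ℕ) VV 2 ({0,1} : Finset ℕ) := by
  cases β with
  | l1 =>
    rw [evL1_42_02, evL1_42_01]
    have a1 : γ 4 2 2 ≤ γ 4 2 1 := hγ 4 2 1 2 (by norm_num) (by norm_num) (by norm_num)
    have a2 : γ 4 2 3 ≤ γ 4 2 2 := hγ 4 2 2 3 (by norm_num) (by norm_num) (by norm_num)
    have a3 : γ 4 2 4 ≤ γ 4 2 3 := hγ 4 2 3 4 (by norm_num) (by norm_num) (by norm_num)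

    linarith
  | lmax =>
    rw [evLM_42_02 hγ, evLM_42_01 hγ]
    have a1 : γ 4 2 2 ≤ γ 4 2 1 := hγ 4 2 1 2 (by norm_num) (by norm_num) (by norm_num)
    have a2 : γ 4 2 3 ≤ γ 4 2 2 := hγ 4 2 2 3 (by norm_num) (by norm_num) (by norm_num)
    have a3 : γ 4 2 4 ≤ γ 4 2 3 := hγ 4 2 3 4 (by norm_num) (by norm_num) (by norm_num)

    linarith

lemma cmp42_03 (β : ScoreNorm) {γ : ℕ → ℕ → ℕ → ℝ} (hγ : GammaMono γ) :
    totalScore β γ ({0,1,2,3} : Finset ℕ) VV 2 ({0,3} : Finset ℕ) ≤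
      totalScore β γ ({0,1,2,3} : Finset ℕ) VV 2 ({0,1} : Finset ℕ) := by
  cases β with
  | l1 =>
    rw [evL1_42_03, evL1_42_01]
    have a1 : γ 4 2 2 ≤ γ 4 2 1 := hγ 4 2 1 2 (by norm_num) (by norm_num) (by norm_num)
    have a2 : γ 4 2 3 ≤ γ 4 2 2 := hγ 4 2 2 3 (by norm_num) (by norm_num) (by norm_num)
    have a3 : γ 4 2 4 ≤ γ 4 2 3 := hγ 4 2 3 4 (by norm_num) (by norm_num) (by norm_num)

    linarith
  | lmax =>
    rw [evLM_42_03 hγ, evLM_42_01 hγ]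
    have a1 : γ 4 2 2 ≤ γ 4 2 1 := hγ 4 2 1 2 (by norm_num) (by norm_num) (by norm_num)
    have a2 : γ 4 2 3 ≤ γ 4 2 2 := hγ 4 2 2 3 (by norm_num) (by norm_num) (by norm_num)
    have a3 : γ 4 2 4 ≤ γ 4 2 3 := hγ 4 2 3 4 (by norm_num) (by norm_num) (by norm_num)

    linarith

lemma cmp42_12 (β : ScoreNorm) {γ : ℕ → ℕ → ℕ → ℝ} (hγ : GammaMono γ) :
    totalScore β γ ({0,1,2,3} : Finset ℕ) VV 2 ({1,2} : Finset ℕ) ≤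
      totalScore β γ ({0,1,2,3} : Finset ℕ) VV 2 ({0,1} : Finset ℕ) := by
  cases β with
  | l1 =>
    rw [evL1_42_12, evL1_42_01]
    have a1 : γ 4 2 2 ≤ γ 4 2 1 := hγ 4 2 1 2 (by norm_num) (by norm_num) (by norm_num)
    have a2 : γ 4 2 3 ≤ γ 4 2 2 := hγ 4 2 2 3 (by norm_num) (by norm_num) (by norm_num)
    have a3 : γ 4 2 4 ≤ γ 4 2 3 := hγ 4 2 3 4 (by norm_num) (by norm_num) (by norm_num)

    linarith
  | lmax =>
    rw [evLM_42_12 hγ, evLM_42_01 hγ]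
    have a1 : γ 4 2 2 ≤ γ 4 2 1 := hγ 4 2 1 2 (by norm_num) (by norm_num) (by norm_num)
    have a2 : γ 4 2 3 ≤ γ 4 2 2 := hγ 4 2 2 3 (by norm_num) (by norm_num) (by norm_num)
    have a3 : γ 4 2 4 ≤ γ 4 2 3 := hγ 4 2 3 4 (by norm_num) (by norm_num) (by norm_num)

    linarith

lemma cmp42_13 (β : ScoreNorm) {γ : ℕ → ℕ → ℕ → ℝ} (hγ : GammaMono γ) :
    totalScore β γ ({0,1,2,3} : Finset ℕ) VV 2 ({1,3} : Finset ℕ) ≤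
      totalScore β γ ({0,1,2,3} : Finset ℕ) VV 2 ({0,1} : Finset ℕ) := by
  cases β with
  | l1 =>
    rw [evL1_42_13, evL1_42_01]
    have a1 : γ 4 2 2 ≤ γ 4 2 1 := hγ 4 2 1 2 (by norm_num) (by norm_num) (by norm_num)
    have a2 : γ 4 2 3 ≤ γ 4 2 2 := hγ 4 2 2 3 (by norm_num) (by norm_num) (by norm_num)
    have a3 : γ 4 2 4 ≤ γ 4 2 3 := hγ 4 2 3 4 (by norm_num) (by norm_num) (by norm_num)

    linarith
  | lmax =>
    rw [evLM_42_13 hγ, evLM_42_01 hγ]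
    have a1 : γ 4 2 2 ≤ γ 4 2 1 := hγ 4 2 1 2 (by norm_num) (by norm_num) (by norm_num)
    have a2 : γ 4 2 3 ≤ γ 4 2 2 := hγ 4 2 2 3 (by norm_num) (by norm_num) (by norm_num)
    have a3 : γ 4 2 4 ≤ γ 4 2 3 := hγ 4 2 3 4 (by norm_num) (by norm_num) (by norm_num)

    linarith

lemma cmp42_23 (β : ScoreNorm) {γ : ℕ → ℕ → ℕ → ℝ} (hγ : GammaMono γ) :
    totalScore β γ ({0,1,2,3} : Finset ℕ) VV 2 ({2,3} : Finset ℕ) ≤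
      totalScore β γ ({0,1,2,3} : Finset ℕ) VV 2 ({0,1} : Finset ℕ) := by
  cases β with
  | l1 =>
    rw [evL1_42_23, evL1_42_01]
    have a1 : γ 4 2 2 ≤ γ 4 2 1 := hγ 4 2 1 2 (by norm_num) (by norm_num) (by norm_num)
    have a2 : γ 4 2 3 ≤ γ 4 2 2 := hγ 4 2 2 3 (by norm_num) (by norm_num) (by norm_num)
    have a3 : γ 4 2 4 ≤ γ 4 2 3 := hγ 4 2 3 4 (by norm_num) (by norm_num) (by norm_num)

    linarith
  | lmax =>
    rw [evLM_42_23 hγ, evLM_42_01 hγ]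
    have a1 : γ 4 2 2 ≤ γ 4 2 1 := hγ 4 2 1 2 (by norm_num) (by norm_num) (by norm_num)
    have a2 : γ 4 2 3 ≤ γ 4 2 2 := hγ 4 2 2 3 (by norm_num) (by norm_num) (by norm_num)
    have a3 : γ 4 2 4 ≤ γ 4 2 3 := hγ 4 2 3 4 (by norm_num) (by norm_num) (by norm_num)

    linarith

lemma cmp21_1 (β : ScoreNorm) {γ : ℕ → ℕ → ℕ → ℝ} (hγ : GammaMono γ) :
    totalScore β γ ({0,1} : Finset ℕ) VV 1 ({1} : Finset ℕ) ≤
      totalScore β γ ({0,1} : Finset ℕ) VV 1 ({0} : Finset ℕ) := by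
  cases β with
  | l1 =>
    rw [evL1_21_1, evL1_21_0]
    have a1 : γ 2 1 2 ≤ γ 2 1 1 := hγ 2 1 1 2 (by norm_num) (by norm_num) (by norm_num)

    linarith
  | lmax =>
    rw [evLM_21_1 hγ, evLM_21_0 hγ]
    have a1 : γ 2 1 2 ≤ γ 2 1 1 := hγ 2 1 1 2 (by norm_num) (by norm_num) (by norm_num)

    linarith

lemma mem_triples4 : ∀ T ∈ ({0,1,2,3} : Finset ℕ).powerset, T.card = 3 →
    T = ({0,1,2} : Finset ℕ) ∨ T = {0,1,3} ∨ T = {0,2,3} ∨ T = {1,2,3} := by decide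

lemma mem_pairs4 : ∀ T ∈ ({0,1,2,3} : Finset ℕ).powerset, T.card = 2 →
    T = ({0,1} : Finset ℕ) ∨ T = {0,2} ∨ T = {0,3} ∨ T = {1,2} ∨ T = {1,3} ∨ T = {2,3} := by
  decide

lemma mem_pairs3 : ∀ T ∈ ({0,1,2} : Finset ℕ).powerset, T.card = 2 →
    T = ({0,1} : Finset ℕ) ∨ T = {0,2} ∨ T = {1,2} := by decide

lemma mem_singles2 : ∀ T ∈ ({0,1} : Finset ℕ).powerset, T.card = 1 →
    T = ({0} : Finset ℕ) ∨ T = {1} := by decide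

lemma stage43 (β : ScoreNorm) {γ : ℕ → ℕ → ℕ → ℝ} (hγ : GammaMono γ) (hrat : RationalRule β γ)
    {S₁ : Finset ℕ} (hS : S₁ ∈ scoreWinners β γ ({0,1,2,3} : Finset ℕ) VV 3) :
    S₁ = {0,1,2} := by
  obtain ⟨hsub, hcard, hmax⟩ := hS
  rcases mem_triples4 S₁ (Finset.mem_powerset.mpr hsub) hcard with rfl | rfl | rfl | rfl
  · rfl
  · exact absurd (hmax {0,1,2} (by decide) (by decide)) (not_le.mpr (cmp43_013 β hγ hrat))
  · exact absurd (hmax {0,1,2} (by decide) (by decide)) (not_le.mpr (cmp43_023 β hγ hrat))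
  · exact absurd (hmax {0,1,2} (by decide) (by decide)) (not_le.mpr (cmp43_123 β hγ hrat))

lemma stage32 (β : ScoreNorm) {γ : ℕ → ℕ → ℕ → ℝ} (hγ : GammaMono γ) (hrat : RationalRule β γ)
    {S : Finset ℕ} (hS : S ∈ scoreWinners β γ ({0,1,2} : Finset ℕ) VV 2) :
    S = {1,2} := by
  obtain ⟨hsub, hcard, hmax⟩ := hS
  rcases mem_pairs3 S (Finset.mem_powerset.mpr hsub) hcard with rfl | rfl | rfl
  · exact absurd (hmax {1,2} (by decide) (by decide)) (not_le.mpr (cmp32_01 β hγ hrat))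
  · exact absurd (hmax {1,2} (by decide) (by decide)) (not_le.mpr (cmp32_02 β hγ hrat))
  · rfl

lemma winner42 (β : ScoreNorm) {γ : ℕ → ℕ → ℕ → ℝ} (hγ : GammaMono γ) :
    ({0,1} : Finset ℕ) ∈ scoreWinners β γ ({0,1,2,3} : Finset ℕ) VV 2 := by
  refine ⟨by decide, by decide, fun T hT hTc => ?_⟩
  rcases mem_pairs4 T (Finset.mem_powerset.mpr hT) hTc with rfl | rfl | rfl | rfl | rfl | rfl
  · exact le_refl _
  · exact cmp42_02 β hγ
  · exact cmp42_03 β hγ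
  · exact cmp42_12 β hγ
  · exact cmp42_13 β hγ
  · exact cmp42_23 β hγ

lemma winner21 (β : ScoreNorm) {γ : ℕ → ℕ → ℕ → ℝ} (hγ : GammaMono γ) :
    ({0} : Finset ℕ) ∈ scoreWinners β γ ({0,1} : Finset ℕ) VV 1 := by
  refine ⟨by decide, by decide, fun T hT hTc => ?_⟩
  rcases mem_singles2 T (Finset.mem_powerset.mpr hT) hTc with rfl | rfl
  · exact le_refl _
  · exact cmp21_1 β hγ

-- ===== stage vectors =====

def ks1v : ℕ → List ℕ
  | 0 => [2, 1]
  | j + 1 => (j + 4) :: ks1v j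

def ks2v : ℕ → List ℕ
  | 0 => [3, 2]
  | j + 1 => (j + 4) :: ks2v j

lemma ks1v_ne (j : ℕ) : ks1v j ≠ [] := by cases j <;> simp [ks1v]
lemma ks2v_ne (j : ℕ) : ks2v j ≠ [] := by cases j <;> simp [ks2v]

lemma ks1v_len (j : ℕ) : (ks1v j).length = j + 2 := by
  induction j with
  | zero => simp [ks1v]
  | succ n ih => simp [ks1v, ih]

lemma ks2v_len (j : ℕ) : (ks2v j).length = j + 2 := by
  induction j with
  | zero => simp [ks2v]
  | succ n ih => simp [ks2v, ih]

lemma ks1v_last (j : ℕ) (h : ks1v j ≠ []) : (ks1v j).getLast h = 1 := by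
  induction j with
  | zero => rfl
  | succ n ih =>
    show ((n + 4) :: ks1v n).getLast (List.cons_ne_nil _ _) = 1
    rw [List.getLast_cons (ks1v_ne n)]
    exact ih _

lemma ks2v_last (j : ℕ) (h : ks2v j ≠ []) : (ks2v j).getLast h = 2 := by
  induction j with
  | zero => rfl
  | succ n ih =>
    show ((n + 4) :: ks2v n).getLast _ = 2
    rw [List.getLast_cons (ks2v_ne n)]
    exact ih _

lemma ks1v_chain (j : ℕ) : List.Chain (· > ·) (j + 4) (ks1v j) := by
  induction j with
  | zero =>
    show List.Chain (· > ·) 4 [2, 1]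
    simp [List.Chain, List.chain_cons]
  | succ n ih =>
    show List.Chain (· > ·) (n + 5) ((n + 4) :: ks1v n)
    rw [List.Chain, List.chain_cons]
    exact ⟨by omega, ih⟩

lemma ks2v_chain (j : ℕ) : List.Chain (· > ·) (j + 4) (ks2v j) := by
  induction j with
  | zero =>
    show List.Chain (· > ·) 4 [3, 2]
    simp [List.Chain, List.chain_cons]
  | succ n ih =>
    show List.Chain (· > ·) (n + 5) ((n + 4) :: ks2v n)
    rw [List.Chain, List.chain_cons]
    exact ⟨by omega, ih⟩

lemma ks1v_pos (j : ℕ) : ∀ k ∈ ks1v j, 1 ≤ k := by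
  induction j with
  | zero => intro k hk; simp [ks1v] at hk; omega
  | succ n ih =>
    intro k hk
    rcases List.mem_cons.mp hk with rfl | hk
    · omega
    · exact ih k hk

lemma ks2v_pos (j : ℕ) : ∀ k ∈ ks2v j, 1 ≤ k := by
  induction j with
  | zero => intro k hk; simp [ks2v] at hk; omega
  | succ n ih =>
    intro k hk
    rcases List.mem_cons.mp hk with rfl | hk
    · omega
    · exact ih k hk

-- ===== range facts =====

lemma range_max' (n : ℕ) (hne : (Finset.range (n + 1)).Nonempty) :
    (Finset.range (n + 1)).max' hne = n := by
  apply le_antisymm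
  · apply Finset.max'_le
    intro x hx
    rw [Finset.mem_range] at hx
    omega
  · exact Finset.le_max' _ _ (Finset.mem_range.mpr (by omega))

lemma range_erase (n : ℕ) : (Finset.range (n + 1)).erase n = Finset.range n := by
  rw [Finset.range_add_one, Finset.erase_insert (by simp)]

-- ===== the two multistage computations =====

lemma ks1_chain (β : ScoreNorm) {γ : ℕ → ℕ → ℕ → ℝ} (hγ : GammaMono γ)
    (hrat : RationalRule β γ) :
    ∀ j : ℕ, ({0} : Finset ℕ) ∈ msWinners β γ (ks1v j) (Finset.range (j + 4)) VV := by
  intro j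
  induction j with
  | zero =>
    have hr4 : Finset.range 4 = ({0,1,2,3} : Finset ℕ) := by decide
    show ({0} : Finset ℕ) ∈ msWinners β γ [2, 1] (Finset.range 4) VV
    rw [hr4]
    refine ⟨{0,1}, winner42 β hγ, ?_⟩
    refine ⟨{0}, winner21 β hγ, ?_⟩
    rfl
  | succ n ih =>
    show ({0} : Finset ℕ) ∈ msWinners β γ ((n + 4) :: ks1v n) (Finset.range (n + 5)) VV
    refine ⟨Finset.range (n + 4), ?_, ih⟩
    have hne : (Finset.range (n + 5)).Nonempty := ⟨0, by simp⟩
    have hcard : (Finset.range (n + 5)).card = n + 5 := Finset.card_range _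
    have hmax : (Finset.range (n + 5)).max' hne = n + 4 := range_max' _ _
    refine ⟨?_, ?_, ?_⟩
    · intro x hx; simp at hx ⊢; omega
    · exact Finset.card_range _
    · intro T hT hTc
      have h := prefix_le β hγ (by simp) (by simp) (by simp) (by simp)
        (by rw [hcard]; omega) (k := n + 4) (by omega) T hT hTc
      have heq : (Finset.range (n + 5)).erase ((Finset.range (n + 5)).max' ⟨0, by simp⟩) =
          Finset.range (n + 4) := by
        rw [hmax]; exact range_erase _
      rwa [heq] at h

lemma ks2_univ (β : ScoreNorm) {γ : ℕ → ℕ → ℕ → ℝ} (hγ : GammaMono γ)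
    (hrat : RationalRule β γ) :
    ∀ j : ℕ, ∀ P : Finset ℕ, 0 ∈ P → 1 ∈ P → 2 ∈ P → 3 ∈ P → P.card = j + 4 →
      ∀ S ∈ msWinners β γ (ks2v j) P VV, S = ({1,2} : Finset ℕ) := by
  intro j
  induction j with
  | zero =>
    intro P h0 h1 h2 h3 hcard S hS
    have hPeq : ({0,1,2,3} : Finset ℕ) = P := by
      apply Finset.eq_of_subset_of_card_le
      · intro x hx
        simp only [Finset.mem_insert, Finset.mem_singleton] at hx
        rcases hx with rfl | rfl | rfl | rfl <;> assumption
      · rw [hcard]; decide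
    rw [← hPeq] at hS
    obtain ⟨S₁, hS₁, hS'⟩ := hS
    have e1 : S₁ = ({0,1,2} : Finset ℕ) := stage43 β hγ hrat hS₁
    rw [e1] at hS'
    obtain ⟨S₂, hS₂, hS''⟩ := hS'
    have e2 : S₂ = ({1,2} : Finset ℕ) := stage32 β hγ hrat hS₂
    rw [e2] at hS''
    exact hS''
  | succ n ih =>
    intro P h0 h1 h2 h3 hcard S hS
    obtain ⟨S₁, hS₁, hS'⟩ := hS
    obtain ⟨hsub, hcard₁, hmax⟩ := hS₁
    have hne : P.Nonempty := ⟨0, h0⟩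
    have h5 : 5 ≤ P.card := by omega
    -- every real candidate survives
    have hreal : ∀ r : ℕ, r < 4 → r ∈ S₁ := by
      intro r hr
      by_contra hrS
      obtain ⟨x, hxP, hxS, hxe⟩ := ex_erase hsub (by omega)
      have hxr : x = r := by
        have hrP : r ∈ P := reals_mem h0 h1 h2 h3 hr
        by_contra hne'
        have : r ∈ P.erase x := Finset.mem_erase.mpr ⟨fun h => hne' h.symm, hrP⟩
        rw [← hxe] at this
        exact hrS this
      subst hxr
      subst hxe
      have hlt := prefix_lt β hγ hrat h0 h1 h2 h3 h5 (k := n + 4) (by omega) hr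
      have hle := hmax (P.erase (P.max' ⟨0, h0⟩))
        (Finset.erase_subset _ _)
        (by rw [Finset.card_erase_of_mem (P.max'_mem hne)]; omega)
      linarith
    exact ih S₁ (hreal 0 (by omega)) (hreal 1 (by omega)) (hreal 2 (by omega))
      (hreal 3 (by omega)) (by omega) S hS'

-- ===== strict preferences =====

lemma strictPrefs_VV (C : Finset ℕ) : StrictPrefs C VV := by
  intro v hv
  have : v = w1 ∨ v = w2 ∨ v = w3 ∨ v = w4 ∨ v = w5 ∨ v = w6 := by
    simp only [VV, List.mem_append, List.mem_replicate] at hv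
    tauto
  have hinj : Function.Injective v := by
    rcases this with rfl | rfl | rfl | rfl | rfl | rfl
    exacts [VG_w1.1, VG_w2.1, VG_w3.1, VG_w4.1, VG_w5.1, VG_w6.1]
  exact hinj.injOn

/-- Committee Monotonicity does not preserve in a rational
multi-stage `(β, γ⃗)`-rule: for every `t ≥ 2`, every `β ∈ {ℓ₁, ℓ_max}` and every
rational non-increasing family `γ⃗`, the `t`-stage `(β, γ⃗)`-rule is not
committee monotone. -/
theorem multistage_score_rule_not_committee_monotone
    (t : ℕ) (ht : 2 ≤ t) (β : ScoreNorm) (γ : ℕ → ℕ → ℕ → ℝ)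
    (hγ : GammaMono γ) (hrat : RationalRule β γ) :
    ¬ MSCommitteeMonotone β γ t := by
  intro hmono
  have h4 : t - 2 + 4 = t + 2 := by omega
  have hvalid1 : ValidVec (Finset.range (t + 2)) (ks1v (t - 2)) := by
    constructor
    · rw [Finset.card_range, ← h4]
      exact ks1v_chain _
    · exact ks1v_pos _
  have hvalid2 : ValidVec (Finset.range (t + 2)) (ks2v (t - 2)) := by
    constructor
    · rw [Finset.card_range, ← h4]
      exact ks2v_chain _
    · exact ks2v_pos _
  obtain ⟨hforth, -⟩ := hmono ℕ (Finset.range (t + 2)) VV (strictPrefs_VV _)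
    (ks1v (t - 2)) (ks2v (t - 2)) (ks1v_ne _) (ks2v_ne _)
    (by rw [ks1v_len]; omega) (by rw [ks2v_len]; omega) hvalid1 hvalid2
    (by rw [ks1v_last, ks2v_last])
  have hchain : ({0} : Finset ℕ) ∈ msWinners β γ (ks1v (t - 2)) (Finset.range (t + 2)) VV := by
    have := ks1_chain β hγ hrat (t - 2)
    rwa [h4] at this
  obtain ⟨S', hS', hsub⟩ := hforth {0} hchain
  have hS'eq : S' = ({1,2} : Finset ℕ) :=
    ks2_univ β hγ hrat (t - 2) (Finset.range (t + 2))
      (by rw [Finset.mem_range]; omega) (by rw [Finset.mem_range]; omega)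
      (by rw [Finset.mem_range]; omega) (by rw [Finset.mem_range]; omega)
      (by rw [Finset.card_range]; omega) S' hS'
  rw [hS'eq] at hsub
  have h0 : (0 : ℕ) ∈ ({1,2} : Finset ℕ) := hsub.subset (by simp)
  simp at h0
end

section
/- For every t ≥ 2, the t-stage (ℓ_1, Borda)-rule, i.e., the multi-stage rule applying the Borda rule with position scores Borda^{m,k}(p) = m − p at every stage, does not satisfy Committee Monotonicity. -/
/-! ### Auxiliary material for the proof -/

namespace MSBAux

noncomputable def bordaγ : ℕ → ℕ → ℕ → ℝ := fun m _ p => (m : ℝ) - (p : ℝ)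

def v1 : ℕ → ℕ := fun x => if x = 0 then 0 else if x = 1 then 1 else if x = 2 then 3 else if x = 3 then 2 else x
def v2 : ℕ → ℕ := fun x => if x = 0 then 1 else if x = 1 then 2 else if x = 2 then 0 else if x = 3 then 3 else x
def v3 : ℕ → ℕ := fun x => if x = 0 then 2 else if x = 1 then 0 else if x = 2 then 1 else if x = 3 then 3 else x

def myV : List (ℕ → ℕ) := [v1, v1, v2, v2, v3, v3, v3]

lemma mem_myV {v : ℕ → ℕ} (hv : v ∈ myV) : v = v1 ∨ v = v2 ∨ v = v3 := by
  simp only [myV, List.mem_cons, List.mem_singleton] at hv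
  tauto

lemma inj_v1 : Function.Injective v1 := by
  intro x y h; simp only [v1] at h; split_ifs at h <;> omega
lemma inj_v2 : Function.Injective v2 := by
  intro x y h; simp only [v2] at h; split_ifs at h <;> omega
lemma inj_v3 : Function.Injective v3 := by
  intro x y h; simp only [v3] at h; split_ifs at h <;> omega

lemma strictPrefs (C : Finset ℕ) : StrictPrefs C myV := by
  intro v hv
  rcases mem_myV hv with rfl | rfl | rfl
  exacts [inj_v1.injOn, inj_v2.injOn, inj_v3.injOn]

lemma myV_small {v : ℕ → ℕ} (hv : v ∈ myV) {x : ℕ} (hx : x < 4) : v x < 4 := by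
  rcases mem_myV hv with rfl | rfl | rfl <;>
    simp only [v1, v2, v3] <;> split_ifs <;> omega

lemma myV_id {v : ℕ → ℕ} (hv : v ∈ myV) {x : ℕ} (hx : 4 ≤ x) : v x = x := by
  rcases mem_myV hv with rfl | rfl | rfl <;>
    simp only [v1, v2, v3] <;> split_ifs <;> omega

/-- Total score under ℓ₁ as a sum of per-candidate weights. -/
lemma totalScore_l1 {α : Type} (γ : ℕ → ℕ → ℕ → ℝ) (C : Finset α) (V : List (α → ℕ))
    (k : ℕ) (S : Finset α) :
    totalScore .l1 γ C V k S = ∑ c ∈ S, (V.map fun v => γ C.card k (posIn v C c)).sum := by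
  induction V with
  | nil => simp [totalScore]
  | cons v V ih =>
    have h : totalScore .l1 γ C (v :: V) k S
        = voterScore .l1 γ C k v S + totalScore .l1 γ C V k S := by
      simp [totalScore]
    rw [h, ih]
    show (∑ c ∈ S, γ C.card k (posIn v C c)) + _ = _
    rw [← Finset.sum_add_distrib]
    simp

/-- Per-candidate weight on a pool. -/
noncomputable def wt (C : Finset ℕ) (k : ℕ) (c : ℕ) : ℝ :=
  (myV.map fun v => bordaγ C.card k (posIn v C c)).sum

lemma totalScore_wt (C : Finset ℕ) (k : ℕ) (S : Finset ℕ) :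
    totalScore .l1 bordaγ C myV k S = ∑ c ∈ S, wt C k c :=
  totalScore_l1 _ _ _ _ _

lemma posIn_dummy {s : ℕ} (hs : 4 ≤ s) {v : ℕ → ℕ} (hv : v ∈ myV) :
    posIn v (Finset.range (s + 1)) s = s + 1 := by
  have : (Finset.range (s + 1)).filter (fun c' => v c' ≤ v s) = Finset.range (s + 1) := by
    apply Finset.filter_true_of_mem
    intro x hx
    rw [myV_id hv hs]
    rcases lt_or_ge x 4 with h | h
    · have := myV_small hv h; omega
    · rw [myV_id hv h]; exact Nat.lt_succ_iff.mp (Finset.mem_range.mp hx)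
  simp [posIn, this]

lemma posIn_core {s : ℕ} (hs : 4 ≤ s) {v : ℕ → ℕ} (hv : v ∈ myV) {c : ℕ} (hc : c < s) :
    1 ≤ posIn v (Finset.range (s + 1)) c ∧ posIn v (Finset.range (s + 1)) c ≤ s := by
  have hvc : v c < s := by
    rcases lt_or_ge c 4 with h | h
    · have := myV_small hv h; omega
    · rw [myV_id hv h]; exact hc
  constructor
  · apply Finset.card_pos.mpr
    exact ⟨c, Finset.mem_filter.mpr ⟨Finset.mem_range.mpr (by omega), le_rfl⟩⟩
  · have hsub : (Finset.range (s + 1)).filter (fun c' => v c' ≤ v c)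
        ⊆ (Finset.range (s + 1)).erase s := by
      intro x hx
      rw [Finset.mem_erase]
      rcases Finset.mem_filter.mp hx with ⟨hx1, hx2⟩
      refine ⟨?_, hx1⟩
      rintro rfl
      rw [myV_id hv hs] at hx2; omega
    have := Finset.card_le_card hsub
    rwa [Finset.card_erase_of_mem (Finset.mem_range.mpr (by omega)), Finset.card_range] at this

lemma wt_dummy {s : ℕ} (hs : 4 ≤ s) : wt (Finset.range (s + 1)) s s = 0 := by
  unfold wt
  rw [List.sum_eq_zero]
  intro x hx
  simp only [List.mem_map] at hx
  obtain ⟨v, hv, rfl⟩ := hx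
  rw [posIn_dummy hs hv]
  simp [bordaγ]

lemma wt_core {s : ℕ} (hs : 4 ≤ s) {c : ℕ} (hc : c < s) :
    1 ≤ wt (Finset.range (s + 1)) s c := by
  unfold wt
  have hcard : (Finset.range (s + 1)).card = s + 1 := Finset.card_range _
  have key : ∀ v ∈ myV, (1 : ℝ) ≤ bordaγ (Finset.range (s + 1)).card s (posIn v (Finset.range (s + 1)) c) := by
    intro v hv
    obtain ⟨h1, h2⟩ := posIn_core hs hv hc
    simp only [bordaγ, hcard]
    have : (posIn v (Finset.range (s + 1)) c : ℝ) ≤ (s : ℝ) := by exact_mod_cast h2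
    push_cast; linarith
  simp only [myV, List.map_cons, List.map_nil, List.sum_cons, List.sum_nil]
  have h1 := key v1 (by simp [myV])
  have h2 := key v2 (by simp [myV])
  have h3 := key v3 (by simp [myV])
  linarith

lemma wt_nonneg {s : ℕ} (hs : 4 ≤ s) {c : ℕ} (hc : c < s + 1) :
    0 ≤ wt (Finset.range (s + 1)) s c := by
  rcases lt_or_ge c s with h | h
  · linarith [wt_core hs h]
  · have : c = s := by omega
    rw [this, wt_dummy hs]

lemma scoreWinners_dummy {s : ℕ} (hs : 4 ≤ s) :
    scoreWinners .l1 bordaγ (Finset.range (s + 1)) myV s = {Finset.range s} := by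
  ext S
  simp only [Set.mem_singleton_iff]
  constructor
  · rintro ⟨hsub, hcard, hmax⟩
    have hns : s ∉ S := by
      intro hmem
      have hnsub : ¬ Finset.range s ⊆ S := by
        intro hsub'
        have h1 : Finset.range (s + 1) ⊆ S := by
          rw [Finset.range_add_one]
          exact Finset.insert_subset hmem hsub'
        have := Finset.card_le_card h1
        rw [Finset.card_range, hcard] at this
        omega
      obtain ⟨y, hy, hyS⟩ := Finset.not_subset.mp hnsub
      have hy' : y < s := Finset.mem_range.mp hy
      set T := insert y (S.erase s) with hT
      have hTsub : T ⊆ Finset.range (s + 1) := by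
        apply Finset.insert_subset (Finset.mem_range.mpr (by omega))
        exact (Finset.erase_subset _ _).trans hsub
      have hTcard : T.card = s := by
        rw [hT, Finset.card_insert_of_notMem (fun h => hyS (Finset.mem_of_mem_erase h)),
          Finset.card_erase_of_mem hmem, hcard]
        omega
      have hle := hmax T hTsub hTcard
      rw [totalScore_wt, totalScore_wt] at hle
      have hS : ∑ c ∈ S, wt (Finset.range (s + 1)) s c
          = wt (Finset.range (s + 1)) s s + ∑ c ∈ S.erase s, wt (Finset.range (s + 1)) s c := by
        rw [Finset.add_sum_erase _ _ hmem]
      have hTsum : ∑ c ∈ T, wt (Finset.range (s + 1)) s c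
          = wt (Finset.range (s + 1)) s y + ∑ c ∈ S.erase s, wt (Finset.range (s + 1)) s c := by
        rw [hT, Finset.sum_insert (fun h => hyS (Finset.mem_of_mem_erase h))]
      rw [hS, hTsum, wt_dummy hs] at hle
      have := wt_core hs hy'
      linarith
    apply Finset.eq_of_subset_of_card_le
    · intro c hc
      have := hsub hc
      rw [Finset.mem_range] at this ⊢
      rcases Nat.lt_succ_iff_lt_or_eq.mp this with h | h
      · exact h
      · exact absurd (h ▸ hc) hns
    · rw [Finset.card_range, hcard]
  · rintro rfl
    refine ⟨by intro x hx; rw [Finset.mem_range] at hx ⊢; omega, Finset.card_range _, ?_⟩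
    intro T hTsub hTcard
    rw [totalScore_wt, totalScore_wt]
    have h0 : ∑ c ∈ T, wt (Finset.range (s + 1)) s c
        = ∑ c ∈ T.erase s, wt (Finset.range (s + 1)) s c := by
      by_cases h : s ∈ T
      · rw [← Finset.add_sum_erase _ _ h, wt_dummy hs, zero_add]
      · rw [Finset.erase_eq_of_notMem h]
    rw [h0]
    apply Finset.sum_le_sum_of_subset_of_nonneg
    · intro x hx
      have hx1 := hTsub (Finset.mem_of_mem_erase hx)
      have hx2 := Finset.ne_of_mem_erase hx
      rw [Finset.mem_range] at hx1 ⊢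
      omega
    · intro c hc _
      exact wt_nonneg hs (by have := Finset.mem_range.mp hc; omega)

end MSBAux

namespace MSBAux

lemma p1 : posIn v1 (Finset.range 4) 0 = 1 := by decide
lemma p2 : posIn v1 (Finset.range 4) 1 = 2 := by decide
lemma p3 : posIn v1 (Finset.range 4) 2 = 4 := by decide
lemma p4 : posIn v1 (Finset.range 4) 3 = 3 := by decide
lemma p5 : posIn v1 ({0,1,2} : Finset ℕ) 0 = 1 := by decide
lemma p6 : posIn v1 ({0,1,2} : Finset ℕ) 1 = 2 := by decide
lemma p7 : posIn v1 ({0,1,2} : Finset ℕ) 2 = 3 := by decide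
lemma p8 : posIn v1 ({0,1} : Finset ℕ) 0 = 1 := by decide
lemma p9 : posIn v1 ({0,1} : Finset ℕ) 1 = 2 := by decide
lemma p10 : posIn v2 (Finset.range 4) 0 = 2 := by decide
lemma p11 : posIn v2 (Finset.range 4) 1 = 3 := by decide
lemma p12 : posIn v2 (Finset.range 4) 2 = 1 := by decide
lemma p13 : posIn v2 (Finset.range 4) 3 = 4 := by decide
lemma p14 : posIn v2 ({0,1,2} : Finset ℕ) 0 = 2 := by decide
lemma p15 : posIn v2 ({0,1,2} : Finset ℕ) 1 = 3 := by decide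
lemma p16 : posIn v2 ({0,1,2} : Finset ℕ) 2 = 1 := by decide
lemma p17 : posIn v2 ({0,1} : Finset ℕ) 0 = 1 := by decide
lemma p18 : posIn v2 ({0,1} : Finset ℕ) 1 = 2 := by decide
lemma p19 : posIn v3 (Finset.range 4) 0 = 3 := by decide
lemma p20 : posIn v3 (Finset.range 4) 1 = 1 := by decide
lemma p21 : posIn v3 (Finset.range 4) 2 = 2 := by decide
lemma p22 : posIn v3 (Finset.range 4) 3 = 4 := by decide
lemma p23 : posIn v3 ({0,1,2} : Finset ℕ) 0 = 3 := by decide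
lemma p24 : posIn v3 ({0,1,2} : Finset ℕ) 1 = 1 := by decide
lemma p25 : posIn v3 ({0,1,2} : Finset ℕ) 2 = 2 := by decide
lemma p26 : posIn v3 ({0,1} : Finset ℕ) 0 = 2 := by decide
lemma p27 : posIn v3 ({0,1} : Finset ℕ) 1 = 1 := by decide

lemma cardR4 : (Finset.range 4).card = 4 := by decide
lemma card012 : ({0,1,2} : Finset ℕ).card = 3 := by decide
lemma card01 : ({0,1} : Finset ℕ).card = 2 := by decide

lemma wt_r4_0 (k : ℕ) : wt (Finset.range 4) k 0 = 13 := by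
  norm_num [wt, myV, bordaγ, p1, p10, p19, cardR4]
lemma wt_r4_1 (k : ℕ) : wt (Finset.range 4) k 1 = 15 := by
  norm_num [wt, myV, bordaγ, p2, p11, p20, cardR4]
lemma wt_r4_2 (k : ℕ) : wt (Finset.range 4) k 2 = 12 := by
  norm_num [wt, myV, bordaγ, p3, p12, p21, cardR4]
lemma wt_r4_3 (k : ℕ) : wt (Finset.range 4) k 3 = 2 := by
  norm_num [wt, myV, bordaγ, p4, p13, p22, cardR4]
lemma wt_012_0 (k : ℕ) : wt ({0,1,2} : Finset ℕ) k 0 = 6 := by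
  norm_num [wt, myV, bordaγ, p5, p14, p23, card012]
lemma wt_012_1 (k : ℕ) : wt ({0,1,2} : Finset ℕ) k 1 = 8 := by
  norm_num [wt, myV, bordaγ, p6, p15, p24, card012]
lemma wt_012_2 (k : ℕ) : wt ({0,1,2} : Finset ℕ) k 2 = 7 := by
  norm_num [wt, myV, bordaγ, p7, p16, p25, card012]
lemma wt_01_0 (k : ℕ) : wt ({0,1} : Finset ℕ) k 0 = 4 := by
  norm_num [wt, myV, bordaγ, p8, p17, p26, card01]
lemma wt_01_1 (k : ℕ) : wt ({0,1} : Finset ℕ) k 1 = 3 := by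
  norm_num [wt, myV, bordaγ, p9, p18, p27, card01]

lemma enum2 : ∀ T ∈ (Finset.range 4).powersetCard 2,
    T = {0,1} ∨ T = {0,2} ∨ T = {0,3} ∨ T = {1,2} ∨ T = {1,3} ∨ T = {2,3} := by decide
lemma enum3 : ∀ T ∈ (Finset.range 4).powersetCard 3,
    T = {0,1,2} ∨ T = {0,1,3} ∨ T = {0,2,3} ∨ T = {1,2,3} := by decide
lemma enum012 : ∀ T ∈ ({0,1,2} : Finset ℕ).powersetCard 2,
    T = {0,1} ∨ T = {0,2} ∨ T = {1,2} := by decide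
lemma enum01 : ∀ T ∈ ({0,1} : Finset ℕ).powersetCard 1, T = {0} ∨ T = {1} := by decide

lemma strictA : ∀ T ⊆ Finset.range 4, T.card = 2 → T ≠ {0,1} →
    totalScore .l1 bordaγ (Finset.range 4) myV 2 T
      < totalScore .l1 bordaγ (Finset.range 4) myV 2 ({0,1} : Finset ℕ) := by
  intro T h1 h2 hne
  rcases enum2 T (Finset.mem_powersetCard.mpr ⟨h1, h2⟩) with rfl | rfl | rfl | rfl | rfl | rfl <;>
    first
      | exact absurd rfl hne
      | (rw [totalScore_wt, totalScore_wt];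
         norm_num [Finset.sum_insert, Finset.mem_insert, Finset.mem_singleton,
           Finset.sum_singleton, wt_r4_0, wt_r4_1, wt_r4_2, wt_r4_3])

lemma coreA : scoreWinners .l1 bordaγ (Finset.range 4) myV 2 = {({0,1} : Finset ℕ)} := by
  ext S
  simp only [Set.mem_singleton_iff]
  constructor
  · rintro ⟨h1, h2, h3⟩
    by_contra hne
    have := h3 {0,1} (by decide) (by decide)
    exact absurd this (not_le.mpr (strictA S h1 h2 hne))
  · rintro rfl
    refine ⟨by decide, by decide, ?_⟩
    intro T hT hc
    by_cases hne : T = {0,1}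
    · rw [hne]
    · exact (strictA T hT hc hne).le

lemma strictC : ∀ T ⊆ Finset.range 4, T.card = 3 → T ≠ {0,1,2} →
    totalScore .l1 bordaγ (Finset.range 4) myV 3 T
      < totalScore .l1 bordaγ (Finset.range 4) myV 3 ({0,1,2} : Finset ℕ) := by
  intro T h1 h2 hne
  rcases enum3 T (Finset.mem_powersetCard.mpr ⟨h1, h2⟩) with rfl | rfl | rfl | rfl <;>
    first
      | exact absurd rfl hne
      | (rw [totalScore_wt, totalScore_wt];
         norm_num [Finset.sum_insert, Finset.mem_insert, Finset.mem_singleton,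
           Finset.sum_singleton, wt_r4_0, wt_r4_1, wt_r4_2, wt_r4_3])

lemma coreC : scoreWinners .l1 bordaγ (Finset.range 4) myV 3 = {({0,1,2} : Finset ℕ)} := by
  ext S
  simp only [Set.mem_singleton_iff]
  constructor
  · rintro ⟨h1, h2, h3⟩
    by_contra hne
    have := h3 {0,1,2} (by decide) (by decide)
    exact absurd this (not_le.mpr (strictC S h1 h2 hne))
  · rintro rfl
    refine ⟨by decide, by decide, ?_⟩
    intro T hT hc
    by_cases hne : T = {0,1,2}
    · rw [hne]
    · exact (strictC T hT hc hne).le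

lemma strictB : ∀ T ⊆ ({0,1} : Finset ℕ), T.card = 1 → T ≠ {0} →
    totalScore .l1 bordaγ ({0,1} : Finset ℕ) myV 1 T
      < totalScore .l1 bordaγ ({0,1} : Finset ℕ) myV 1 ({0} : Finset ℕ) := by
  intro T h1 h2 hne
  rcases enum01 T (Finset.mem_powersetCard.mpr ⟨h1, h2⟩) with rfl | rfl <;>
    first
      | exact absurd rfl hne
      | (rw [totalScore_wt, totalScore_wt];
         norm_num [Finset.sum_singleton, wt_01_0, wt_01_1])

lemma coreB : scoreWinners .l1 bordaγ ({0,1} : Finset ℕ) myV 1 = {({0} : Finset ℕ)} := by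
  ext S
  simp only [Set.mem_singleton_iff]
  constructor
  · rintro ⟨h1, h2, h3⟩
    by_contra hne
    have := h3 {0} (by decide) (by decide)
    exact absurd this (not_le.mpr (strictB S h1 h2 hne))
  · rintro rfl
    refine ⟨by decide, by decide, ?_⟩
    intro T hT hc
    by_cases hne : T = {0}
    · rw [hne]
    · exact (strictB T hT hc hne).le

lemma strictD : ∀ T ⊆ ({0,1,2} : Finset ℕ), T.card = 2 → T ≠ {1,2} →
    totalScore .l1 bordaγ ({0,1,2} : Finset ℕ) myV 2 T
      < totalScore .l1 bordaγ ({0,1,2} : Finset ℕ) myV 2 ({1,2} : Finset ℕ) := by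
  intro T h1 h2 hne
  rcases enum012 T (Finset.mem_powersetCard.mpr ⟨h1, h2⟩) with rfl | rfl | rfl <;>
    first
      | exact absurd rfl hne
      | (rw [totalScore_wt, totalScore_wt];
         norm_num [Finset.sum_insert, Finset.mem_insert, Finset.mem_singleton,
           Finset.sum_singleton, wt_012_0, wt_012_1, wt_012_2])

lemma coreD : scoreWinners .l1 bordaγ ({0,1,2} : Finset ℕ) myV 2 = {({1,2} : Finset ℕ)} := by
  ext S
  simp only [Set.mem_singleton_iff]
  constructor
  · rintro ⟨h1, h2, h3⟩
    by_contra hne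
    have := h3 {1,2} (by decide) (by decide)
    exact absurd this (not_le.mpr (strictD S h1 h2 hne))
  · rintro rfl
    refine ⟨by decide, by decide, ?_⟩
    intro T hT hc
    by_cases hne : T = {1,2}
    · rw [hne]
    · exact (strictD T hT hc hne).le

end MSBAux

namespace MSBAux

def stages : ℕ → List ℕ
  | 0 => []
  | j + 1 => (4 + j) :: stages j

lemma stages_len (j : ℕ) : (stages j).length = j := by
  induction j with
  | zero => rfl
  | succ j ih => simp [stages, ih]

lemma stages_pos (j : ℕ) : ∀ k ∈ stages j, 1 ≤ k := by
  induction j with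
  | zero => simp [stages]
  | succ j ih =>
    intro k hk
    rcases List.mem_cons.mp hk with rfl | hk
    · omega
    · exact ih k hk

lemma stages_chain (j : ℕ) (l : List ℕ) (h : List.Chain (· > ·) 4 l) :
    List.Chain (· > ·) (4 + j) (stages j ++ l) := by
  induction j with
  | zero => exact h
  | succ j ih => exact List.Chain.cons (by omega) ih

lemma ms_reduce (j : ℕ) (tail : List ℕ) :
    msWinners .l1 bordaγ (stages j ++ tail) (Finset.range (4 + j)) myV
      = msWinners .l1 bordaγ tail (Finset.range 4) myV := by
  induction j with
  | zero => rfl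
  | succ j ih =>
    have e : msWinners .l1 bordaγ (stages (j + 1) ++ tail) (Finset.range (4 + (j + 1))) myV
        = {S | ∃ S₁ ∈ scoreWinners .l1 bordaγ (Finset.range ((4 + j) + 1)) myV (4 + j),
            S ∈ msWinners .l1 bordaγ (stages j ++ tail) S₁ myV} := rfl
    rw [e, scoreWinners_dummy (by omega)]
    ext S
    simp only [Set.mem_setOf_eq, Set.mem_singleton_iff, exists_eq_left, ← ih]

lemma ms1 : msWinners .l1 bordaγ [2, 1] (Finset.range 4) myV = {({0} : Finset ℕ)} := by
  ext S
  simp only [msWinners, coreA, coreB, Set.mem_setOf_eq, Set.mem_singleton_iff, exists_eq_left]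

lemma ms2 : msWinners .l1 bordaγ [3, 2] (Finset.range 4) myV = {({1, 2} : Finset ℕ)} := by
  ext S
  simp only [msWinners, coreC, coreD, Set.mem_setOf_eq, Set.mem_singleton_iff, exists_eq_left]

end MSBAux

/-- For every `t ≥ 2`, the `t`-stage `(ℓ₁, Borda)`-rule, applying
the Borda rule with position scores `Borda^{m,k}(p) = m − p` at every stage, does
not satisfy Committee Monotonicity. -/
theorem multistage_borda_not_committee_monotone (t : ℕ) (ht : 2 ≤ t) :
    ¬ MSCommitteeMonotone ScoreNorm.l1 (fun m _ p => (m : ℝ) - (p : ℝ)) t := by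
  open MSBAux in
  intro h
  obtain ⟨j, rfl⟩ : ∃ j, t = j + 2 := ⟨t - 2, by omega⟩
  have hcard : (Finset.range (4 + j)).card = 4 + j := Finset.card_range _
  have h₁ : stages j ++ [2, 1] ≠ [] := by simp
  have h₂ : stages j ++ [3, 2] ≠ [] := by simp
  have hlen₁ : (stages j ++ [2, 1]).length = j + 2 := by simp [stages_len]
  have hlen₂ : (stages j ++ [3, 2]).length = j + 2 := by simp [stages_len]
  have hvalid₁ : ValidVec (Finset.range (4 + j)) (stages j ++ [2, 1]) := by
    constructor
    · rw [hcard]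
      exact stages_chain j _ (.cons (by omega) (.cons (by omega) .nil))
    · intro k hk
      rcases List.mem_append.mp hk with hk | hk
      · exact stages_pos j k hk
      · rcases List.mem_cons.mp hk with rfl | hk
        · omega
        · simp at hk; omega
  have hvalid₂ : ValidVec (Finset.range (4 + j)) (stages j ++ [3, 2]) := by
    constructor
    · rw [hcard]
      exact stages_chain j _ (.cons (by omega) (.cons (by omega) .nil))
    · intro k hk
      rcases List.mem_append.mp hk with hk | hk
      · exact stages_pos j k hk
      · rcases List.mem_cons.mp hk with rfl | hk
        · omega
        · simp at hk; omega
  have hlast₁ : (stages j ++ [2, 1]).getLast h₁ = 1 := by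
    rw [List.getLast_append_of_ne_nil _ (by simp)]; rfl
  have hlast₂ : (stages j ++ [3, 2]).getLast h₂ = 2 := by
    rw [List.getLast_append_of_ne_nil _ (by simp)]; rfl
  obtain ⟨mono1, -⟩ := h ℕ (Finset.range (4 + j)) myV (strictPrefs _)
    (stages j ++ [2, 1]) (stages j ++ [3, 2]) h₁ h₂ hlen₁ hlen₂ hvalid₁ hvalid₂
    (by rw [hlast₁, hlast₂])
  have hms1 : msWinners .l1 bordaγ (stages j ++ [2, 1]) (Finset.range (4 + j)) myV
      = {({0} : Finset ℕ)} := by rw [ms_reduce, ms1]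
  have hms2 : msWinners .l1 bordaγ (stages j ++ [3, 2]) (Finset.range (4 + j)) myV
      = {({1, 2} : Finset ℕ)} := by rw [ms_reduce, ms2]
  have hmem : ({0} : Finset ℕ) ∈ msWinners .l1 bordaγ (stages j ++ [2, 1])
      (Finset.range (4 + j)) myV := by rw [hms1]; rfl
  obtain ⟨S', hS', hss⟩ := mono1 {0} hmem
  have hS'' : S' ∈ ({({1, 2} : Finset ℕ)} : Set (Finset ℕ)) := hms2 ▸ hS'
  rw [Set.mem_singleton_iff] at hS''
  subst hS''
  exact absurd hss (by decide)
end

section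
/- Let t ≥ 2, β ∈ {ℓ_1, ℓ_max}, and let 𝓡 be a rational t-stage (β, γ⃗)-rule. Then 𝓡 does not satisfy Candidate Monotonicity: there exist an election E = (C,V), a stage vector v⃗, a candidate c ∈ C with c ∈ S for some S ∈ 𝓡(E, v⃗), and a voter whose preference list, after shifting c one position forward to obtain election E', leaves c outside every committee in 𝓡(E', v⃗). -/
/-- The preference list obtained from `v` by swapping the positions of `c` and
`d`; when `d` is the candidate ranked directly above `c`, this shifts `c` one
position forward. -/
def shiftForward {α : Type} [DecidableEq α] (v : α → ℕ) (c d : α) : α → ℕ :=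
  fun x => if x = c then v d else if x = d then v c else v x

/-- Candidate Monotonicity for the `t`-stage `(β, γ)`-rule: whenever a candidate
`c` belongs to some winning committee and one voter shifts `c` one position
forward (swapping `c` with the candidate `d` ranked directly above `c`), `c`
still belongs to some winning committee. -/
def MSCandidateMonotone (β : ScoreNorm) (γ : ℕ → ℕ → ℕ → ℝ) (t : ℕ) : Prop :=
  ∀ (α : Type) [DecidableEq α] (C : Finset α) (V : List (α → ℕ)), StrictPrefs C V →
    ∀ (ks : List ℕ), ks ≠ [] → ks.length = t → ValidVec C ks →
    ∀ c ∈ C, (∃ S ∈ msWinners β γ ks C V, c ∈ S) →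
    ∀ (i : ℕ) (hi : i < V.length) (d : α), d ∈ C → d ≠ c →
      posIn (V.get ⟨i, hi⟩) C c = posIn (V.get ⟨i, hi⟩) C d + 1 →
      ∃ S' ∈ msWinners β γ ks C (V.set i (shiftForward (V.get ⟨i, hi⟩) c d)), c ∈ S'

namespace CMProof

/-- stage vector [n, n-1, ..., 1] -/
def ksD : ℕ → List ℕ
  | 0 => []
  | n+1 => (n+1) :: ksD n

@[simp] lemma ksD_length : ∀ n, (ksD n).length = n
  | 0 => rfl
  | n+1 => by simp [ksD, ksD_length n]

lemma ksD_chain (m : ℕ) : ∀ n, n < m → List.Chain (· > ·) m (ksD n) := by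
  intro n
  induction n generalizing m with
  | zero => intro _; exact List.Chain.nil
  | succ k ih => intro h; exact List.Chain.cons h (ih (k+1) (by omega))

lemma ksD_mem : ∀ n, ∀ k ∈ ksD n, 1 ≤ k := by
  intro n
  induction n with
  | zero => intro k hk; simp [ksD] at hk
  | succ m ih =>
    intro k hk
    rcases List.mem_cons.mp hk with h | h
    · omega
    · exact ih k h

lemma ksD_ne_nil (n : ℕ) (h : 1 ≤ n) : ksD n ≠ [] := by
  cases n with
  | zero => omega
  | succ m => simp [ksD]

/-- a plain voter: core candidates 0,1,2 get values p,q,r; padding candidate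
`n` (3 ≤ n ≤ t) gets value `t+4-n ≥ 4`. -/
def voter (t p q r : ℕ) : ℕ → ℕ :=
  fun n => if n = 0 then p else if n = 1 then q else if n = 2 then r else t + 4 - n

def pool (W : Finset ℕ) : Finset ℕ := insert 0 (insert 1 (insert 2 W))

def PlainPerm (p q r : ℕ) : Prop :=
  (p = 1 ∧ q = 2 ∧ r = 3) ∨ (p = 1 ∧ q = 3 ∧ r = 2) ∨ (p = 2 ∧ q = 1 ∧ r = 3) ∨
  (p = 3 ∧ q = 1 ∧ r = 2) ∨ (p = 2 ∧ q = 3 ∧ r = 1) ∨ (p = 3 ∧ q = 2 ∧ r = 1)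

lemma card_pool {t : ℕ} {W : Finset ℕ} (hW : W ⊆ Finset.Icc 3 t) :
    (pool W).card = 3 + W.card := by
  have h2 : 2 ∉ W := fun h => by have := hW h; simp [Finset.mem_Icc] at this
  have h1 : 1 ∉ W := fun h => by have := hW h; simp [Finset.mem_Icc] at this
  have h0 : 0 ∉ W := fun h => by have := hW h; simp [Finset.mem_Icc] at this
  rw [pool, Finset.card_insert_of_notMem (by simp [h0]),
    Finset.card_insert_of_notMem (by simp [h1]), Finset.card_insert_of_notMem h2]
  ring

lemma mem_pool {W : Finset ℕ} {x : ℕ} :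
    x ∈ pool W ↔ x = 0 ∨ x = 1 ∨ x = 2 ∨ x ∈ W := by
  simp [pool]

lemma pool_erase {t : ℕ} {W : Finset ℕ} (hW : W ⊆ Finset.Icc 3 t) {w : ℕ} (hw : w ∈ W) :
    pool (W.erase w) = (pool W).erase w := by
  have h3 : 3 ≤ w := by have := hW hw; simp [Finset.mem_Icc] at this; omega
  ext x
  simp only [mem_pool, Finset.mem_erase]
  by_cases hxw : x = w
  · subst hxw; simp [Finset.mem_erase]; omega
  · simp [Finset.mem_erase, hxw]

lemma voter_core_val {t p q r y : ℕ} (hpqr : PlainPerm p q r) (hy : y < 3) :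
    1 ≤ voter t p q r y ∧ voter t p q r y ≤ 3 := by
  rcases hpqr with ⟨rfl,rfl,rfl⟩|⟨rfl,rfl,rfl⟩|⟨rfl,rfl,rfl⟩|⟨rfl,rfl,rfl⟩|⟨rfl,rfl,rfl⟩|⟨rfl,rfl,rfl⟩ <;>
    (interval_cases y <;> simp [voter])

lemma voter_pad_val {t p q r n : ℕ} (h3 : 3 ≤ n) (ht : n ≤ t) :
    voter t p q r n = t + 4 - n ∧ 4 ≤ voter t p q r n := by
  have h0 : n ≠ 0 := by omega
  have h1 : n ≠ 1 := by omega
  have h2 : n ≠ 2 := by omega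
  constructor
  · simp [voter, h0, h1, h2]
  · simp [voter, h0, h1, h2]; omega

end CMProof
namespace CMProof

lemma posIn_le_card {v : ℕ → ℕ} {C : Finset ℕ} {c : ℕ} : posIn v C c ≤ C.card :=
  Finset.card_le_card (Finset.filter_subset _ _)

lemma one_le_posIn {v : ℕ → ℕ} {C : Finset ℕ} {c : ℕ} (hc : c ∈ C) : 1 ≤ posIn v C c :=
  Finset.card_pos.mpr ⟨c, Finset.mem_filter.mpr ⟨hc, le_refl _⟩⟩

lemma posIn_core_plain {t p q r : ℕ} (hpqr : PlainPerm p q r) {W : Finset ℕ}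
    (hW : W ⊆ Finset.Icc 3 t) {y : ℕ} (hy : y < 3) :
    posIn (voter t p q r) (pool W) y = voter t p q r y := by
  have hyv := voter_core_val (t := t) hpqr hy
  have hWf : W.filter (fun c' => voter t p q r c' ≤ voter t p q r y) = ∅ := by
    apply Finset.filter_false_of_mem
    intro w hw
    have h3 : 3 ≤ w ∧ w ≤ t := by have := hW hw; simpa [Finset.mem_Icc] using this
    have h4 := (voter_pad_val (t := t) (p := p) (q := q) (r := r) h3.1 h3.2).2
    omega
  rw [posIn, pool, Finset.filter_insert, Finset.filter_insert, Finset.filter_insert, hWf]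
  rcases hpqr with ⟨rfl,rfl,rfl⟩|⟨rfl,rfl,rfl⟩|⟨rfl,rfl,rfl⟩|⟨rfl,rfl,rfl⟩|⟨rfl,rfl,rfl⟩|⟨rfl,rfl,rfl⟩ <;>
    interval_cases y <;> simp [voter]

lemma posIn_min {t p q r : ℕ} (hpqr : PlainPerm p q r) {W : Finset ℕ}
    (hW : W ⊆ Finset.Icc 3 t) (hne : W.Nonempty) :
    posIn (voter t p q r) (pool W) (W.min' hne) = (pool W).card := by
  have hm := W.min'_mem hne
  have hmIcc : 3 ≤ W.min' hne ∧ W.min' hne ≤ t := by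
    have := hW hm; simpa [Finset.mem_Icc] using this
  have hmv := voter_pad_val (t := t) (p := p) (q := q) (r := r) hmIcc.1 hmIcc.2
  have hfil : (pool W).filter (fun c' => voter t p q r c' ≤ voter t p q r (W.min' hne)) = pool W := by
    apply Finset.filter_true_of_mem
    intro x hx
    rcases mem_pool.mp hx with rfl | rfl | rfl | hxW
    · have := voter_core_val (t := t) hpqr (by omega : (0:ℕ) < 3); omega
    · have := voter_core_val (t := t) hpqr (by omega : (1:ℕ) < 3); omega
    · have := voter_core_val (t := t) hpqr (by omega : (2:ℕ) < 3); omega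
    · have hxIcc : 3 ≤ x ∧ x ≤ t := by have := hW hxW; simpa [Finset.mem_Icc] using this
      have hxv := voter_pad_val (t := t) (p := p) (q := q) (r := r) hxIcc.1 hxIcc.2
      have hle : W.min' hne ≤ x := W.min'_le x hxW
      omega
  rw [posIn, hfil]

lemma posIn_pad_ge4 {t p q r : ℕ} (hpqr : PlainPerm p q r) {W : Finset ℕ}
    (hW : W ⊆ Finset.Icc 3 t) {w : ℕ} (hw : w ∈ W) :
    4 ≤ posIn (voter t p q r) (pool W) w := by
  have hwIcc : 3 ≤ w ∧ w ≤ t := by have := hW hw; simpa [Finset.mem_Icc] using this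
  have hwv := voter_pad_val (t := t) (p := p) (q := q) (r := r) hwIcc.1 hwIcc.2
  have hsub : insert 0 (insert 1 (insert 2 ({w} : Finset ℕ))) ⊆
      (pool W).filter (fun c' => voter t p q r c' ≤ voter t p q r w) := by
    intro x hx
    simp only [Finset.mem_insert, Finset.mem_singleton] at hx
    apply Finset.mem_filter.mpr
    rcases hx with rfl | rfl | rfl | rfl
    · exact ⟨mem_pool.mpr (Or.inl rfl),
        by have := voter_core_val (t := t) hpqr (by omega : (0:ℕ) < 3); omega⟩
    · exact ⟨mem_pool.mpr (Or.inr (Or.inl rfl)),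
        by have := voter_core_val (t := t) hpqr (by omega : (1:ℕ) < 3); omega⟩
    · exact ⟨mem_pool.mpr (Or.inr (Or.inr (Or.inl rfl))),
        by have := voter_core_val (t := t) hpqr (by omega : (2:ℕ) < 3); omega⟩
    · exact ⟨mem_pool.mpr (Or.inr (Or.inr (Or.inr hw))), le_refl _⟩
  have hcard : (insert 0 (insert 1 (insert 2 ({w} : Finset ℕ)))).card = 4 := by
    rw [Finset.card_insert_of_notMem (by simp; omega),
      Finset.card_insert_of_notMem (by simp; omega),
      Finset.card_insert_of_notMem (by simp; omega), Finset.card_singleton]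
  calc 4 = (insert 0 (insert 1 (insert 2 ({w} : Finset ℕ)))).card := hcard.symm
    _ ≤ _ := Finset.card_le_card hsub

lemma lsum_le {α : Type} {f g : α → ℝ} :
    ∀ (V : List α), (∀ v ∈ V, f v ≤ g v) → (V.map f).sum ≤ (V.map g).sum := by
  intro V
  induction V with
  | nil => intro _; simp
  | cons v V ih =>
    intro h
    simp only [List.map_cons, List.sum_cons]
    exact add_le_add (h v (List.mem_cons_self)) (ih (fun u hu => h u (List.mem_cons_of_mem _ hu)))

lemma lsum_lt {α : Type} {f g : α → ℝ} :
    ∀ (V : List α) (v₀ : α), v₀ ∈ V → f v₀ < g v₀ → (∀ v ∈ V, f v ≤ g v) →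
      (V.map f).sum < (V.map g).sum := by
  intro V
  induction V with
  | nil => intro v₀ h; simp at h
  | cons v V ih =>
    intro v₀ hv₀ hlt h
    simp only [List.map_cons, List.sum_cons]
    rcases List.mem_cons.mp hv₀ with rfl | hmem
    · exact add_lt_add_of_lt_of_le hlt (lsum_le V (fun u hu => h u (List.mem_cons_of_mem _ hu)))
    · exact add_lt_add_of_le_of_lt (h v (List.mem_cons_self))
        (ih v₀ hmem hlt (fun u hu => h u (List.mem_cons_of_mem _ hu)))

lemma committee_erase {P T : Finset ℕ} (hT : T ⊆ P) (hcard : T.card + 1 = P.card) :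
    ∃ u ∈ P, T = P.erase u := by
  have hsd : (P \ T).card = 1 := by
    rw [Finset.card_sdiff_of_subset hT]; omega
  obtain ⟨u, hu⟩ := Finset.card_eq_one.mp hsd
  have huP : u ∈ P := by
    have : u ∈ P \ T := hu ▸ Finset.mem_singleton_self u
    exact (Finset.mem_sdiff.mp this).1
  have huT : u ∉ T := by
    have : u ∈ P \ T := hu ▸ Finset.mem_singleton_self u
    exact (Finset.mem_sdiff.mp this).2
  refine ⟨u, huP, ?_⟩
  ext a
  simp only [Finset.mem_erase]
  constructor
  · intro ha
    exact ⟨fun h => huT (h ▸ ha), hT ha⟩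
  · rintro ⟨hne, haP⟩
    by_contra haT
    have : a ∈ P \ T := Finset.mem_sdiff.mpr ⟨haP, haT⟩
    rw [hu] at this
    exact hne (Finset.mem_singleton.mp this)

end CMProof
namespace CMProof

variable {γ : ℕ → ℕ → ℕ → ℝ}

lemma vs_l1_erase {P : Finset ℕ} {k : ℕ} {v : ℕ → ℕ} {u : ℕ} (hu : u ∈ P) :
    voterScore .l1 γ P k v (P.erase u) =
      (∑ c ∈ P, γ P.card k (posIn v P c)) - γ P.card k (posIn v P u) := by
  simp only [voterScore]
  exact Finset.sum_erase_eq_sub hu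

lemma vs_lmax_bddAbove {P S : Finset ℕ} {k : ℕ} {v : ℕ → ℕ} :
    BddAbove ((fun c => γ P.card k (posIn v P c)) '' (S : Set ℕ)) :=
  (S.finite_toSet.image _).bddAbove

lemma vs_lmax_le {P S : Finset ℕ} {k : ℕ} {v : ℕ → ℕ} {Bnd : ℝ} (hne : S.Nonempty)
    (h : ∀ c ∈ S, γ P.card k (posIn v P c) ≤ Bnd) :
    voterScore .lmax γ P k v S ≤ Bnd := by
  simp only [voterScore]
  apply csSup_le
  · exact Set.Nonempty.image _ (by exact_mod_cast hne)
  · rintro b ⟨c, hc, rfl⟩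
    exact h c (by exact_mod_cast hc)

lemma vs_lmax_ge {P S : Finset ℕ} {k : ℕ} {v : ℕ → ℕ} {y : ℕ} (hy : y ∈ S) :
    γ P.card k (posIn v P y) ≤ voterScore .lmax γ P k v S := by
  simp only [voterScore]
  exact le_csSup vs_lmax_bddAbove ⟨y, by exact_mod_cast hy, rfl⟩

lemma vs_single {β : ScoreNorm} {P : Finset ℕ} {k : ℕ} {v : ℕ → ℕ} {y : ℕ} :
    voterScore β γ P k v {y} = γ P.card k (posIn v P y) := by
  cases β with
  | l1 => simp [voterScore]
  | lmax => simp [voterScore]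

lemma vs_l1_pair {P : Finset ℕ} {k : ℕ} {v : ℕ → ℕ} {i j : ℕ} (hij : i ≠ j) :
    voterScore .l1 γ P k v {i, j} = γ P.card k (posIn v P i) + γ P.card k (posIn v P j) := by
  simp only [voterScore]
  exact Finset.sum_pair hij

lemma vs_lmax_pair {P : Finset ℕ} {k : ℕ} {v : ℕ → ℕ} {i j : ℕ}
    (h : γ P.card k (posIn v P j) ≤ γ P.card k (posIn v P i)) :
    voterScore .lmax γ P k v {i, j} = γ P.card k (posIn v P i) := by
  simp only [voterScore, Finset.coe_insert, Finset.coe_singleton,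
    Set.image_insert_eq, Set.image_singleton]
  rw [csSup_pair]
  exact sup_eq_left.mpr h

lemma vs_lmax_pair' {P : Finset ℕ} {k : ℕ} {v : ℕ → ℕ} {i j : ℕ}
    (h : γ P.card k (posIn v P i) ≤ γ P.card k (posIn v P j)) :
    voterScore .lmax γ P k v {i, j} = γ P.card k (posIn v P j) := by
  rw [Finset.pair_comm]
  exact vs_lmax_pair h

end CMProof
namespace CMProof

variable {γ : ℕ → ℕ → ℕ → ℝ} {β : ScoreNorm} {t : ℕ}

lemma voter_core_ne {t p q r c u : ℕ} (hpqr : PlainPerm p q r) (hc : c < 3) (hu : u < 3)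
    (hne : c ≠ u) : voter t p q r c ≠ voter t p q r u := by
  rcases hpqr with ⟨rfl,rfl,rfl⟩|⟨rfl,rfl,rfl⟩|⟨rfl,rfl,rfl⟩|⟨rfl,rfl,rfl⟩|⟨rfl,rfl,rfl⟩|⟨rfl,rfl,rfl⟩ <;>
    interval_cases c <;> interval_cases u <;> simp_all [voter]

lemma plain_exists_first {t p q r : ℕ} (hpqr : PlainPerm p q r) :
    ∃ y, y < 3 ∧ voter t p q r y = 1 := by
  rcases hpqr with ⟨rfl,rfl,rfl⟩|⟨rfl,rfl,rfl⟩|⟨rfl,rfl,rfl⟩|⟨rfl,rfl,rfl⟩|⟨rfl,rfl,rfl⟩|⟨rfl,rfl,rfl⟩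
  · exact ⟨0, by omega, by simp [voter]⟩
  · exact ⟨0, by omega, by simp [voter]⟩
  · exact ⟨1, by omega, by simp [voter]⟩
  · exact ⟨1, by omega, by simp [voter]⟩
  · exact ⟨2, by omega, by simp [voter]⟩
  · exact ⟨2, by omega, by simp [voter]⟩

lemma erase_nonempty {W : Finset ℕ} (u : ℕ) : ((pool W).erase u).Nonempty := by
  by_cases h0 : u = 0
  · exact ⟨1, Finset.mem_erase.mpr ⟨by omega, mem_pool.mpr (Or.inr (Or.inl rfl))⟩⟩
  · exact ⟨0, Finset.mem_erase.mpr ⟨fun h => h0 h.symm, mem_pool.mpr (Or.inl rfl)⟩⟩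

section PAD

variable {W : Finset ℕ}

lemma pad_pointwise (hγ : GammaMono γ) (hrat : RationalRule β γ)
    (hW : W ⊆ Finset.Icc 3 t) (hne : W.Nonempty) {p q r : ℕ} (hpqr : PlainPerm p q r) {u : ℕ} (hu : u ∈ pool W) :
    voterScore β γ (pool W) (2 + W.card) (voter t p q r) ((pool W).erase u) ≤
      voterScore β γ (pool W) (2 + W.card) (voter t p q r) ((pool W).erase (W.min' hne)) := by
  have hM : (pool W).card = 3 + W.card := card_pool hW
  have hw0 : W.min' hne ∈ pool W := mem_pool.mpr (Or.inr (Or.inr (Or.inr (W.min'_mem hne))))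
  have hposmin : posIn (voter t p q r) (pool W) (W.min' hne) = (pool W).card :=
    posIn_min hpqr hW hne
  cases β with
  | l1 =>
    rw [vs_l1_erase hu, vs_l1_erase hw0, hposmin]
    have : γ (pool W).card (2 + W.card) (pool W).card ≤
        γ (pool W).card (2 + W.card) (posIn (voter t p q r) (pool W) u) :=
      hγ _ _ _ _ (one_le_posIn hu) posIn_le_card (le_refl _)
    linarith
  | lmax =>
    obtain ⟨y₀, hy₀3, hy₀v⟩ := plain_exists_first (t := t) hpqr
    have hy₀P : y₀ ∈ pool W := by rcases (by omega : y₀ = 0 ∨ y₀ = 1 ∨ y₀ = 2) with rfl|rfl|rfl <;>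
      simp [mem_pool]
    have hy₀pos : posIn (voter t p q r) (pool W) y₀ = 1 := by
      rw [posIn_core_plain hpqr hW hy₀3, hy₀v]
    have hy₀mem : y₀ ∈ (pool W).erase (W.min' hne) := by
      refine Finset.mem_erase.mpr ⟨?_, hy₀P⟩
      have hm3 : 3 ≤ W.min' hne := ((Finset.mem_Icc.mp (hW (W.min'_mem hne)))).1
      omega
    calc voterScore .lmax γ (pool W) (2 + W.card) (voter t p q r) ((pool W).erase u)
        ≤ γ (pool W).card (2 + W.card) 1 := by
          apply vs_lmax_le (erase_nonempty u)
          intro c hc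
          exact hγ _ _ _ _ (le_refl _) (one_le_posIn (Finset.mem_of_mem_erase hc))
            (posIn_le_card.trans (le_refl _))
      _ = γ (pool W).card (2 + W.card) (posIn (voter t p q r) (pool W) y₀) := by rw [hy₀pos]
      _ ≤ _ := vs_lmax_ge hy₀mem

lemma pad_pointwise_strict (hγ : GammaMono γ) (hrat : RationalRule β γ)
    (hW : W ⊆ Finset.Icc 3 t) (hne : W.Nonempty) {p q r : ℕ} (hpqr : PlainPerm p q r) {u : ℕ} (hu3 : u < 3)
    (hvu : voter t p q r u = 1) :
    voterScore β γ (pool W) (2 + W.card) (voter t p q r) ((pool W).erase u) <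
      voterScore β γ (pool W) (2 + W.card) (voter t p q r) ((pool W).erase (W.min' hne)) := by
  have hM : (pool W).card = 3 + W.card := card_pool hW
  have hWc : 1 ≤ W.card := Finset.card_pos.mpr hne
  have hu : u ∈ pool W := by rcases (by omega : u = 0 ∨ u = 1 ∨ u = 2) with rfl|rfl|rfl <;>
    simp [mem_pool]
  have hw0 : W.min' hne ∈ pool W := mem_pool.mpr (Or.inr (Or.inr (Or.inr (W.min'_mem hne))))
  have hposmin : posIn (voter t p q r) (pool W) (W.min' hne) = (pool W).card :=
    posIn_min hpqr hW hne
  have hposu : posIn (voter t p q r) (pool W) u = 1 := by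
    rw [posIn_core_plain hpqr hW hu3, hvu]
  cases β with
  | l1 =>
    have hrat' : γ (pool W).card (2 + W.card) (pool W).card <
        γ (pool W).card (2 + W.card) 1 := by
      have h := hrat (pool W).card (2 + W.card) (by omega) (by omega)
      exact h
    rw [vs_l1_erase hu, vs_l1_erase hw0, hposmin, hposu]
    linarith
  | lmax =>
    obtain ⟨y₀, hy₀3, hy₀v⟩ := plain_exists_first (t := t) hpqr
    have hy₀P : y₀ ∈ pool W := by rcases (by omega : y₀ = 0 ∨ y₀ = 1 ∨ y₀ = 2) with rfl|rfl|rfl <;>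
      simp [mem_pool]
    have hy₀pos : posIn (voter t p q r) (pool W) y₀ = 1 := by
      rw [posIn_core_plain hpqr hW hy₀3, hy₀v]
    have hy₀mem : y₀ ∈ (pool W).erase (W.min' hne) := by
      refine Finset.mem_erase.mpr ⟨?_, hy₀P⟩
      have hm3 : 3 ≤ W.min' hne := ((Finset.mem_Icc.mp (hW (W.min'_mem hne)))).1
      omega
    have hrat' : γ (pool W).card (2 + W.card) 2 < γ (pool W).card (2 + W.card) 1 := by
      have h := hrat (pool W).card (2 + W.card) (by omega) (by omega)
      have h2 : (pool W).card - (2 + W.card) + 1 = 2 := by omega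
      rwa [h2] at h
    have hub : voterScore .lmax γ (pool W) (2 + W.card) (voter t p q r) ((pool W).erase u) ≤
        γ (pool W).card (2 + W.card) 2 := by
      apply vs_lmax_le (erase_nonempty u)
      intro c hc
      have hcP : c ∈ pool W := Finset.mem_of_mem_erase hc
      have hcu : c ≠ u := (Finset.mem_erase.mp hc).1
      have h2pos : 2 ≤ posIn (voter t p q r) (pool W) c := by
        rcases mem_pool.mp hcP with rfl | rfl | rfl | hcW
        · rw [posIn_core_plain hpqr hW (by omega)]
          have := voter_core_val (t := t) hpqr (show (0:ℕ) < 3 by omega)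
          have := voter_core_ne (t := t) hpqr (by omega) hu3 hcu
          omega
        · rw [posIn_core_plain hpqr hW (by omega)]
          have := voter_core_val (t := t) hpqr (show (1:ℕ) < 3 by omega)
          have := voter_core_ne (t := t) hpqr (by omega) hu3 hcu
          omega
        · rw [posIn_core_plain hpqr hW (by omega)]
          have := voter_core_val (t := t) hpqr (show (2:ℕ) < 3 by omega)
          have := voter_core_ne (t := t) hpqr (by omega) hu3 hcu
          omega
        · have := posIn_pad_ge4 hpqr hW hcW
          omega
      exact hγ _ _ _ _ (by omega) h2pos posIn_le_card
    have hlb : γ (pool W).card (2 + W.card) 1 ≤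
        voterScore .lmax γ (pool W) (2 + W.card) (voter t p q r) ((pool W).erase (W.min' hne)) := by
      calc γ (pool W).card (2 + W.card) 1
          = γ (pool W).card (2 + W.card) (posIn (voter t p q r) (pool W) y₀) := by rw [hy₀pos]
        _ ≤ _ := vs_lmax_ge hy₀mem
    linarith

end PAD

end CMProof
namespace CMProof

variable {γ : ℕ → ℕ → ℕ → ℝ} {β : ScoreNorm} {t : ℕ}

lemma pad_a (hγ : GammaMono γ) (hrat : RationalRule β γ) {W : Finset ℕ}
    (hW : W ⊆ Finset.Icc 3 t) (hne : W.Nonempty) (V : List (ℕ → ℕ))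
    (hV : ∀ v ∈ V, ∃ p q r, PlainPerm p q r ∧ v = voter t p q r) :
    ((pool W).erase (W.min' hne)) ∈ scoreWinners β γ (pool W) V (2 + W.card) := by
  have hM := card_pool (t := t) hW
  have hWc : 1 ≤ W.card := Finset.card_pos.mpr hne
  have hmem : W.min' hne ∈ pool W := mem_pool.mpr (Or.inr (Or.inr (Or.inr (W.min'_mem hne))))
  refine ⟨Finset.erase_subset _ _, ?_, ?_⟩
  · rw [Finset.card_erase_of_mem hmem, hM]
    omega
  · intro T hT hTc
    obtain ⟨u, huP, rfl⟩ := committee_erase hT (by omega)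
    apply lsum_le
    intro v hv
    obtain ⟨p, q, r, hpqr, rfl⟩ := hV v hv
    exact pad_pointwise hγ hrat hW hne hpqr huP

lemma pad_b (hγ : GammaMono γ) (hrat : RationalRule β γ) {W : Finset ℕ}
    (hW : W ⊆ Finset.Icc 3 t) (hne : W.Nonempty) (V : List (ℕ → ℕ))
    (hV : ∀ v ∈ V, ∃ p q r, PlainPerm p q r ∧ v = voter t p q r)
    (hfirst : ∀ y, y < 3 → ∃ v ∈ V, v y = 1) (S : Finset ℕ)
    (hS : S ∈ scoreWinners β γ (pool W) V (2 + W.card)) :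
    ∃ w ∈ W, S = pool (W.erase w) := by
  have hM := card_pool (t := t) hW
  have hWc : 1 ≤ W.card := Finset.card_pos.mpr hne
  obtain ⟨hsub, hcard, hmax⟩ := hS
  obtain ⟨u, huP, rfl⟩ := committee_erase hsub (by omega)
  by_cases huW : u ∈ W
  · exact ⟨u, huW, (pool_erase hW huW).symm⟩
  · exfalso
    have hu3 : u < 3 := by
      rcases mem_pool.mp huP with rfl | rfl | rfl | h
      · omega
      · omega
      · omega
      · exact absurd h huW
    obtain ⟨v₀, hv₀V, hv₀u⟩ := hfirst u hu3
    have hmem : W.min' hne ∈ pool W := mem_pool.mpr (Or.inr (Or.inr (Or.inr (W.min'_mem hne))))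
    have hge := hmax ((pool W).erase (W.min' hne)) (Finset.erase_subset _ _)
      (by rw [Finset.card_erase_of_mem hmem, hM]; omega)
    have hlt : totalScore β γ (pool W) V (2 + W.card) ((pool W).erase u) <
        totalScore β γ (pool W) V (2 + W.card) ((pool W).erase (W.min' hne)) := by
      apply lsum_lt V v₀ hv₀V
      · obtain ⟨p, q, r, hpqr, rfl⟩ := hV v₀ hv₀V
        exact pad_pointwise_strict hγ hrat hW hne hpqr hu3 hv₀u
      · intro v hv
        obtain ⟨p, q, r, hpqr, rfl⟩ := hV v hv
        exact pad_pointwise hγ hrat hW hne hpqr huP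
    linarith

lemma ms_core (hγ : GammaMono γ) (hrat : RationalRule β γ) :
    ∀ (n : ℕ) (W : Finset ℕ), W ⊆ Finset.Icc 3 t → W.card = n →
    ∀ (V : List (ℕ → ℕ)), (∀ v ∈ V, ∃ p q r, PlainPerm p q r ∧ v = voter t p q r) →
    (∀ y, y < 3 → ∃ v ∈ V, v y = 1) → ∀ S : Finset ℕ,
    (S ∈ msWinners β γ (ksD (n+2)) (pool W) V ↔ S ∈ msWinners β γ (ksD 2) (pool ∅) V) := by
  intro n
  induction n with
  | zero =>
    intro W hW hc V _ _ S
    rw [Finset.card_eq_zero.mp hc]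
  | succ m ih =>
    intro W hW hc V hV hfirst S
    have hne : W.Nonempty := Finset.card_pos.mp (by omega)
    have hk : 2 + W.card = m + 3 := by omega
    rw [show ksD (m+1+2) = (m+3) :: ksD (m+2) from rfl]
    simp only [msWinners, Set.mem_setOf_eq]
    constructor
    · rintro ⟨S₁, hS₁, hS'⟩
      obtain ⟨w, hwW, rfl⟩ := pad_b hγ hrat hW hne V hV hfirst S₁ (by rw [hk]; exact hS₁)
      exact (ih (W.erase w) ((W.erase_subset w).trans hW)
        (by rw [Finset.card_erase_of_mem hwW, hc]; omega) V hV hfirst S).mp hS'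
    · intro hS
      refine ⟨pool (W.erase (W.min' hne)), ?_, ?_⟩
      · rw [pool_erase hW (W.min'_mem hne), ← hk]
        exact pad_a hγ hrat hW hne V hV
      · exact (ih (W.erase (W.min' hne)) ((W.erase_subset _).trans hW)
          (by rw [Finset.card_erase_of_mem (W.min'_mem hne), hc]; omega) V hV hfirst S).mpr hS

end CMProof
namespace CMProof

lemma card_poolE : (pool ∅).card = 3 := rfl

lemma card_p01 : ({0,1} : Finset ℕ).card = 2 := rfl

lemma card_p02 : ({0,2} : Finset ℕ).card = 2 := rfl

lemma piE_213_0 (t : ℕ) : posIn (voter t 2 1 3) (pool ∅) 0 = 2 := by simp [posIn, voter, pool, Finset.filter_insert, Finset.filter_singleton]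

lemma piE_213_1 (t : ℕ) : posIn (voter t 2 1 3) (pool ∅) 1 = 1 := by simp [posIn, voter, pool, Finset.filter_insert, Finset.filter_singleton]

lemma piE_213_2 (t : ℕ) : posIn (voter t 2 1 3) (pool ∅) 2 = 3 := by simp [posIn, voter, pool, Finset.filter_insert, Finset.filter_singleton]

lemma pi01_213_0 (t : ℕ) : posIn (voter t 2 1 3) {0,1} 0 = 2 := by simp [posIn, voter, pool, Finset.filter_insert, Finset.filter_singleton]

lemma pi01_213_1 (t : ℕ) : posIn (voter t 2 1 3) {0,1} 1 = 1 := by simp [posIn, voter, pool, Finset.filter_insert, Finset.filter_singleton]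

lemma pi02_213_0 (t : ℕ) : posIn (voter t 2 1 3) {0,2} 0 = 1 := by simp [posIn, voter, pool, Finset.filter_insert, Finset.filter_singleton]

lemma pi02_213_2 (t : ℕ) : posIn (voter t 2 1 3) {0,2} 2 = 2 := by simp [posIn, voter, pool, Finset.filter_insert, Finset.filter_singleton]

lemma piE_321_0 (t : ℕ) : posIn (voter t 3 2 1) (pool ∅) 0 = 3 := by simp [posIn, voter, pool, Finset.filter_insert, Finset.filter_singleton]

lemma piE_321_1 (t : ℕ) : posIn (voter t 3 2 1) (pool ∅) 1 = 2 := by simp [posIn, voter, pool, Finset.filter_insert, Finset.filter_singleton]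

lemma piE_321_2 (t : ℕ) : posIn (voter t 3 2 1) (pool ∅) 2 = 1 := by simp [posIn, voter, pool, Finset.filter_insert, Finset.filter_singleton]

lemma pi01_321_0 (t : ℕ) : posIn (voter t 3 2 1) {0,1} 0 = 2 := by simp [posIn, voter, pool, Finset.filter_insert, Finset.filter_singleton]

lemma pi01_321_1 (t : ℕ) : posIn (voter t 3 2 1) {0,1} 1 = 1 := by simp [posIn, voter, pool, Finset.filter_insert, Finset.filter_singleton]

lemma pi02_321_0 (t : ℕ) : posIn (voter t 3 2 1) {0,2} 0 = 2 := by simp [posIn, voter, pool, Finset.filter_insert, Finset.filter_singleton]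

lemma pi02_321_2 (t : ℕ) : posIn (voter t 3 2 1) {0,2} 2 = 1 := by simp [posIn, voter, pool, Finset.filter_insert, Finset.filter_singleton]

lemma piE_123_0 (t : ℕ) : posIn (voter t 1 2 3) (pool ∅) 0 = 1 := by simp [posIn, voter, pool, Finset.filter_insert, Finset.filter_singleton]

lemma piE_123_1 (t : ℕ) : posIn (voter t 1 2 3) (pool ∅) 1 = 2 := by simp [posIn, voter, pool, Finset.filter_insert, Finset.filter_singleton]

lemma piE_123_2 (t : ℕ) : posIn (voter t 1 2 3) (pool ∅) 2 = 3 := by simp [posIn, voter, pool, Finset.filter_insert, Finset.filter_singleton]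

lemma pi01_123_0 (t : ℕ) : posIn (voter t 1 2 3) {0,1} 0 = 1 := by simp [posIn, voter, pool, Finset.filter_insert, Finset.filter_singleton]

lemma pi01_123_1 (t : ℕ) : posIn (voter t 1 2 3) {0,1} 1 = 2 := by simp [posIn, voter, pool, Finset.filter_insert, Finset.filter_singleton]

lemma pi02_123_0 (t : ℕ) : posIn (voter t 1 2 3) {0,2} 0 = 1 := by simp [posIn, voter, pool, Finset.filter_insert, Finset.filter_singleton]

lemma pi02_123_2 (t : ℕ) : posIn (voter t 1 2 3) {0,2} 2 = 2 := by simp [posIn, voter, pool, Finset.filter_insert, Finset.filter_singleton]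

lemma piE_132_0 (t : ℕ) : posIn (voter t 1 3 2) (pool ∅) 0 = 1 := by simp [posIn, voter, pool, Finset.filter_insert, Finset.filter_singleton]

lemma piE_132_1 (t : ℕ) : posIn (voter t 1 3 2) (pool ∅) 1 = 3 := by simp [posIn, voter, pool, Finset.filter_insert, Finset.filter_singleton]

lemma piE_132_2 (t : ℕ) : posIn (voter t 1 3 2) (pool ∅) 2 = 2 := by simp [posIn, voter, pool, Finset.filter_insert, Finset.filter_singleton]

lemma pi01_132_0 (t : ℕ) : posIn (voter t 1 3 2) {0,1} 0 = 1 := by simp [posIn, voter, pool, Finset.filter_insert, Finset.filter_singleton]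

lemma pi01_132_1 (t : ℕ) : posIn (voter t 1 3 2) {0,1} 1 = 2 := by simp [posIn, voter, pool, Finset.filter_insert, Finset.filter_singleton]

lemma pi02_132_0 (t : ℕ) : posIn (voter t 1 3 2) {0,2} 0 = 1 := by simp [posIn, voter, pool, Finset.filter_insert, Finset.filter_singleton]

lemma pi02_132_2 (t : ℕ) : posIn (voter t 1 3 2) {0,2} 2 = 2 := by simp [posIn, voter, pool, Finset.filter_insert, Finset.filter_singleton]

lemma piE_312_0 (t : ℕ) : posIn (voter t 3 1 2) (pool ∅) 0 = 3 := by simp [posIn, voter, pool, Finset.filter_insert, Finset.filter_singleton]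

lemma piE_312_1 (t : ℕ) : posIn (voter t 3 1 2) (pool ∅) 1 = 1 := by simp [posIn, voter, pool, Finset.filter_insert, Finset.filter_singleton]

lemma piE_312_2 (t : ℕ) : posIn (voter t 3 1 2) (pool ∅) 2 = 2 := by simp [posIn, voter, pool, Finset.filter_insert, Finset.filter_singleton]

lemma pi01_312_0 (t : ℕ) : posIn (voter t 3 1 2) {0,1} 0 = 2 := by simp [posIn, voter, pool, Finset.filter_insert, Finset.filter_singleton]

lemma pi01_312_1 (t : ℕ) : posIn (voter t 3 1 2) {0,1} 1 = 1 := by simp [posIn, voter, pool, Finset.filter_insert, Finset.filter_singleton]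

lemma pi02_312_0 (t : ℕ) : posIn (voter t 3 1 2) {0,2} 0 = 2 := by simp [posIn, voter, pool, Finset.filter_insert, Finset.filter_singleton]

lemma pi02_312_2 (t : ℕ) : posIn (voter t 3 1 2) {0,2} 2 = 1 := by simp [posIn, voter, pool, Finset.filter_insert, Finset.filter_singleton]

lemma piE_231_0 (t : ℕ) : posIn (voter t 2 3 1) (pool ∅) 0 = 2 := by simp [posIn, voter, pool, Finset.filter_insert, Finset.filter_singleton]

lemma piE_231_1 (t : ℕ) : posIn (voter t 2 3 1) (pool ∅) 1 = 3 := by simp [posIn, voter, pool, Finset.filter_insert, Finset.filter_singleton]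

lemma piE_231_2 (t : ℕ) : posIn (voter t 2 3 1) (pool ∅) 2 = 1 := by simp [posIn, voter, pool, Finset.filter_insert, Finset.filter_singleton]

lemma pi01_231_0 (t : ℕ) : posIn (voter t 2 3 1) {0,1} 0 = 1 := by simp [posIn, voter, pool, Finset.filter_insert, Finset.filter_singleton]

lemma pi01_231_1 (t : ℕ) : posIn (voter t 2 3 1) {0,1} 1 = 2 := by simp [posIn, voter, pool, Finset.filter_insert, Finset.filter_singleton]

lemma pi02_231_0 (t : ℕ) : posIn (voter t 2 3 1) {0,2} 0 = 2 := by simp [posIn, voter, pool, Finset.filter_insert, Finset.filter_singleton]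

lemma pi02_231_2 (t : ℕ) : posIn (voter t 2 3 1) {0,2} 2 = 1 := by simp [posIn, voter, pool, Finset.filter_insert, Finset.filter_singleton]

end CMProof
namespace CMProof

variable {γ : ℕ → ℕ → ℕ → ℝ} {β : ScoreNorm}

def Vbase (t : ℕ) : List (ℕ → ℕ) :=
  [voter t 2 1 3, voter t 3 2 1, voter t 1 2 3, voter t 1 2 3, voter t 1 3 2,
   voter t 3 1 2, voter t 3 1 2, voter t 2 3 1, voter t 2 3 1]

def VA (t : ℕ) : List (ℕ → ℕ) :=
  [voter t 1 2 3, voter t 3 2 1, voter t 1 2 3, voter t 1 2 3, voter t 1 3 2,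
   voter t 3 1 2, voter t 3 1 2, voter t 2 3 1, voter t 2 3 1]

def VB (t : ℕ) : List (ℕ → ℕ) :=
  [voter t 2 1 3, voter t 2 3 1, voter t 1 2 3, voter t 1 2 3, voter t 1 3 2,
   voter t 3 1 2, voter t 3 1 2, voter t 2 3 1, voter t 2 3 1]

lemma plain_shape (t p q r : ℕ) (h : PlainPerm p q r) :
    ∃ p' q' r', PlainPerm p' q' r' ∧ voter t p q r = voter t p' q' r' := ⟨p, q, r, h, rfl⟩

lemma Vbase_plain (t : ℕ) : ∀ v ∈ Vbase t, ∃ p q r, PlainPerm p q r ∧ v = voter t p q r := by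
  intro v hv
  simp only [Vbase, List.mem_cons, List.not_mem_nil, or_false] at hv
  rcases hv with rfl|rfl|rfl|rfl|rfl|rfl|rfl|rfl|rfl <;>
    exact ⟨_, _, _, by simp [PlainPerm], rfl⟩

lemma VA_plain (t : ℕ) : ∀ v ∈ VA t, ∃ p q r, PlainPerm p q r ∧ v = voter t p q r := by
  intro v hv
  simp only [VA, List.mem_cons, List.not_mem_nil, or_false] at hv
  rcases hv with rfl|rfl|rfl|rfl|rfl|rfl|rfl|rfl|rfl <;>
    exact ⟨_, _, _, by simp [PlainPerm], rfl⟩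

lemma VB_plain (t : ℕ) : ∀ v ∈ VB t, ∃ p q r, PlainPerm p q r ∧ v = voter t p q r := by
  intro v hv
  simp only [VB, List.mem_cons, List.not_mem_nil, or_false] at hv
  rcases hv with rfl|rfl|rfl|rfl|rfl|rfl|rfl|rfl|rfl <;>
    exact ⟨_, _, _, by simp [PlainPerm], rfl⟩

lemma Vbase_first (t : ℕ) : ∀ y, y < 3 → ∃ v ∈ Vbase t, v y = 1 := by
  intro y hy
  interval_cases y
  · exact ⟨voter t 1 2 3, by simp [Vbase], by simp [voter]⟩
  · exact ⟨voter t 2 1 3, by simp [Vbase], by simp [voter]⟩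
  · exact ⟨voter t 3 2 1, by simp [Vbase], by simp [voter]⟩

lemma VA_first (t : ℕ) : ∀ y, y < 3 → ∃ v ∈ VA t, v y = 1 := by
  intro y hy
  interval_cases y
  · exact ⟨voter t 1 2 3, by simp [VA], by simp [voter]⟩
  · exact ⟨voter t 3 1 2, by simp [VA], by simp [voter]⟩
  · exact ⟨voter t 3 2 1, by simp [VA], by simp [voter]⟩

lemma VB_first (t : ℕ) : ∀ y, y < 3 → ∃ v ∈ VB t, v y = 1 := by
  intro y hy
  interval_cases y
  · exact ⟨voter t 1 2 3, by simp [VB], by simp [voter]⟩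
  · exact ⟨voter t 2 1 3, by simp [VB], by simp [voter]⟩
  · exact ⟨voter t 2 3 1, by simp [VB], by simp [voter]⟩

lemma vs_lmax_pool3L (hγ : GammaMono γ) {v : ℕ → ℕ} {i j a b : ℕ}
    (hi : posIn v (pool ∅) i = a) (hj : posIn v (pool ∅) j = b)
    (hab : a ≤ b) (ha : 1 ≤ a) (hb : b ≤ 3) :
    voterScore .lmax γ (pool ∅) 2 v {i, j} = γ 3 2 a := by
  have hc : (pool ∅).card = 3 := rfl
  rw [vs_lmax_pair (by rw [hc, hi, hj]; exact hγ 3 2 a b ha hab hb), hc, hi]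

lemma vs_lmax_pool3R (hγ : GammaMono γ) {v : ℕ → ℕ} {i j a b : ℕ}
    (hi : posIn v (pool ∅) i = a) (hj : posIn v (pool ∅) j = b)
    (hab : b ≤ a) (hb : 1 ≤ b) (ha : a ≤ 3) :
    voterScore .lmax γ (pool ∅) 2 v {i, j} = γ 3 2 b := by
  have hc : (pool ∅).card = 3 := rfl
  rw [vs_lmax_pair' (by rw [hc, hi, hj]; exact hγ 3 2 b a hb hab ha), hc, hj]

lemma Lm01_213 (t : ℕ) (hγ : GammaMono γ) :
    voterScore .lmax γ (pool ∅) 2 (voter t 2 1 3) ({0, 1} : Finset ℕ) = γ 3 2 1 :=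
  vs_lmax_pool3R hγ (piE_213_0 t) (piE_213_1 t) (by norm_num) (by norm_num) (by norm_num)

lemma Lm02_213 (t : ℕ) (hγ : GammaMono γ) :
    voterScore .lmax γ (pool ∅) 2 (voter t 2 1 3) ({0, 2} : Finset ℕ) = γ 3 2 2 :=
  vs_lmax_pool3L hγ (piE_213_0 t) (piE_213_2 t) (by norm_num) (by norm_num) (by norm_num)

lemma Lm12_213 (t : ℕ) (hγ : GammaMono γ) :
    voterScore .lmax γ (pool ∅) 2 (voter t 2 1 3) ({1, 2} : Finset ℕ) = γ 3 2 1 :=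
  vs_lmax_pool3L hγ (piE_213_1 t) (piE_213_2 t) (by norm_num) (by norm_num) (by norm_num)

lemma Lm01_321 (t : ℕ) (hγ : GammaMono γ) :
    voterScore .lmax γ (pool ∅) 2 (voter t 3 2 1) ({0, 1} : Finset ℕ) = γ 3 2 2 :=
  vs_lmax_pool3R hγ (piE_321_0 t) (piE_321_1 t) (by norm_num) (by norm_num) (by norm_num)

lemma Lm02_321 (t : ℕ) (hγ : GammaMono γ) :
    voterScore .lmax γ (pool ∅) 2 (voter t 3 2 1) ({0, 2} : Finset ℕ) = γ 3 2 1 :=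
  vs_lmax_pool3R hγ (piE_321_0 t) (piE_321_2 t) (by norm_num) (by norm_num) (by norm_num)

lemma Lm12_321 (t : ℕ) (hγ : GammaMono γ) :
    voterScore .lmax γ (pool ∅) 2 (voter t 3 2 1) ({1, 2} : Finset ℕ) = γ 3 2 1 :=
  vs_lmax_pool3R hγ (piE_321_1 t) (piE_321_2 t) (by norm_num) (by norm_num) (by norm_num)

lemma Lm01_123 (t : ℕ) (hγ : GammaMono γ) :
    voterScore .lmax γ (pool ∅) 2 (voter t 1 2 3) ({0, 1} : Finset ℕ) = γ 3 2 1 :=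
  vs_lmax_pool3L hγ (piE_123_0 t) (piE_123_1 t) (by norm_num) (by norm_num) (by norm_num)

lemma Lm02_123 (t : ℕ) (hγ : GammaMono γ) :
    voterScore .lmax γ (pool ∅) 2 (voter t 1 2 3) ({0, 2} : Finset ℕ) = γ 3 2 1 :=
  vs_lmax_pool3L hγ (piE_123_0 t) (piE_123_2 t) (by norm_num) (by norm_num) (by norm_num)

lemma Lm12_123 (t : ℕ) (hγ : GammaMono γ) :
    voterScore .lmax γ (pool ∅) 2 (voter t 1 2 3) ({1, 2} : Finset ℕ) = γ 3 2 2 :=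
  vs_lmax_pool3L hγ (piE_123_1 t) (piE_123_2 t) (by norm_num) (by norm_num) (by norm_num)

lemma Lm01_132 (t : ℕ) (hγ : GammaMono γ) :
    voterScore .lmax γ (pool ∅) 2 (voter t 1 3 2) ({0, 1} : Finset ℕ) = γ 3 2 1 :=
  vs_lmax_pool3L hγ (piE_132_0 t) (piE_132_1 t) (by norm_num) (by norm_num) (by norm_num)

lemma Lm02_132 (t : ℕ) (hγ : GammaMono γ) :
    voterScore .lmax γ (pool ∅) 2 (voter t 1 3 2) ({0, 2} : Finset ℕ) = γ 3 2 1 :=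
  vs_lmax_pool3L hγ (piE_132_0 t) (piE_132_2 t) (by norm_num) (by norm_num) (by norm_num)

lemma Lm12_132 (t : ℕ) (hγ : GammaMono γ) :
    voterScore .lmax γ (pool ∅) 2 (voter t 1 3 2) ({1, 2} : Finset ℕ) = γ 3 2 2 :=
  vs_lmax_pool3R hγ (piE_132_1 t) (piE_132_2 t) (by norm_num) (by norm_num) (by norm_num)

lemma Lm01_312 (t : ℕ) (hγ : GammaMono γ) :
    voterScore .lmax γ (pool ∅) 2 (voter t 3 1 2) ({0, 1} : Finset ℕ) = γ 3 2 1 :=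
  vs_lmax_pool3R hγ (piE_312_0 t) (piE_312_1 t) (by norm_num) (by norm_num) (by norm_num)

lemma Lm02_312 (t : ℕ) (hγ : GammaMono γ) :
    voterScore .lmax γ (pool ∅) 2 (voter t 3 1 2) ({0, 2} : Finset ℕ) = γ 3 2 2 :=
  vs_lmax_pool3R hγ (piE_312_0 t) (piE_312_2 t) (by norm_num) (by norm_num) (by norm_num)

lemma Lm12_312 (t : ℕ) (hγ : GammaMono γ) :
    voterScore .lmax γ (pool ∅) 2 (voter t 3 1 2) ({1, 2} : Finset ℕ) = γ 3 2 1 :=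
  vs_lmax_pool3L hγ (piE_312_1 t) (piE_312_2 t) (by norm_num) (by norm_num) (by norm_num)

lemma Lm01_231 (t : ℕ) (hγ : GammaMono γ) :
    voterScore .lmax γ (pool ∅) 2 (voter t 2 3 1) ({0, 1} : Finset ℕ) = γ 3 2 2 :=
  vs_lmax_pool3L hγ (piE_231_0 t) (piE_231_1 t) (by norm_num) (by norm_num) (by norm_num)

lemma Lm02_231 (t : ℕ) (hγ : GammaMono γ) :
    voterScore .lmax γ (pool ∅) 2 (voter t 2 3 1) ({0, 2} : Finset ℕ) = γ 3 2 1 :=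
  vs_lmax_pool3R hγ (piE_231_0 t) (piE_231_2 t) (by norm_num) (by norm_num) (by norm_num)

lemma Lm12_231 (t : ℕ) (hγ : GammaMono γ) :
    voterScore .lmax γ (pool ∅) 2 (voter t 2 3 1) ({1, 2} : Finset ℕ) = γ 3 2 1 :=
  vs_lmax_pool3R hγ (piE_231_1 t) (piE_231_2 t) (by norm_num) (by norm_num) (by norm_num)


lemma sub_pair_cases {T : Finset ℕ} {i j : ℕ} (hT : T ⊆ {i, j}) (hc : T.card = 1) :
    T = {i} ∨ T = {j} := by
  obtain ⟨a, rfl⟩ := Finset.card_eq_one.mp hc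
  rcases Finset.mem_insert.mp (hT (Finset.mem_singleton_self a)) with h | h
  · left; rw [h]
  · right; rw [Finset.mem_singleton.mp h]

end CMProof
namespace CMProof

variable {γ : ℕ → ℕ → ℕ → ℝ} {β : ScoreNorm}

lemma erase0 : (pool ∅).erase 0 = ({1, 2} : Finset ℕ) := by decide
lemma erase1 : (pool ∅).erase 1 = ({0, 2} : Finset ℕ) := by decide
lemma erase2 : (pool ∅).erase 2 = ({0, 1} : Finset ℕ) := by decide

lemma e1 (t : ℕ) (hγ : GammaMono γ) :
    ({0, 1} : Finset ℕ) ∈ scoreWinners β γ (pool ∅) (Vbase t) 2 := by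
  refine ⟨by decide, by decide, ?_⟩
  intro T hT hTc
  obtain ⟨u, huP, rfl⟩ := committee_erase hT (by rw [card_poolE]; omega)
  have hu : u = 0 ∨ u = 1 ∨ u = 2 := by
    rcases mem_pool.mp huP with h|h|h|h
    · exact Or.inl h
    · exact Or.inr (Or.inl h)
    · exact Or.inr (Or.inr h)
    · simp at h
  have hba := hγ 3 2 1 2 (by norm_num) (by norm_num) (by norm_num)
  have heb := hγ 3 2 2 3 (by norm_num) (by norm_num) (by norm_num)
  cases β with
  | l1 =>
    rcases hu with rfl|rfl|rfl <;> [rw [erase0]; rw [erase1]; rw [erase2]] <;>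
      simp only [totalScore, Vbase, List.map_cons, List.map_nil, List.sum_cons, List.sum_nil,
        vs_l1_pair (show (1:ℕ) ≠ 2 by norm_num), vs_l1_pair (show (0:ℕ) ≠ 2 by norm_num),
        vs_l1_pair (show (0:ℕ) ≠ 1 by norm_num), card_poolE,
        piE_213_0, piE_213_1, piE_213_2, piE_321_0, piE_321_1, piE_321_2, piE_123_0, piE_123_1,
        piE_123_2, piE_132_0, piE_132_1, piE_132_2, piE_312_0, piE_312_1, piE_312_2, piE_231_0,
        piE_231_1, piE_231_2] <;> linarith
  | lmax =>
    rcases hu with rfl|rfl|rfl <;> [rw [erase0]; rw [erase1]; rw [erase2]] <;>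
      simp only [totalScore, Vbase, List.map_cons, List.map_nil, List.sum_cons, List.sum_nil,
        Lm01_213 t hγ, Lm02_213 t hγ, Lm12_213 t hγ, Lm01_321 t hγ, Lm02_321 t hγ, Lm12_321 t hγ,
        Lm01_123 t hγ, Lm02_123 t hγ, Lm12_123 t hγ, Lm01_132 t hγ, Lm02_132 t hγ, Lm12_132 t hγ,
        Lm01_312 t hγ, Lm02_312 t hγ, Lm12_312 t hγ, Lm01_231 t hγ, Lm02_231 t hγ, Lm12_231 t hγ] <;>
      linarith

end CMProof
namespace CMProof

variable {γ : ℕ → ℕ → ℕ → ℝ} {β : ScoreNorm}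

lemma e2 (t : ℕ) (hγ : GammaMono γ) :
    ({0} : Finset ℕ) ∈ scoreWinners β γ {0, 1} (Vbase t) 1 := by
  refine ⟨by decide, by decide, ?_⟩
  intro T hT hTc
  have h21 := hγ 2 1 1 2 (by norm_num) (by norm_num) (by norm_num)
  rcases sub_pair_cases hT hTc with rfl | rfl
  · exact le_refl _
  · simp only [totalScore, Vbase, List.map_cons, List.map_nil, List.sum_cons, List.sum_nil,
      vs_single, card_p01, pi01_213_0, pi01_213_1, pi01_321_0, pi01_321_1, pi01_123_0,
      pi01_123_1, pi01_132_0, pi01_132_1, pi01_312_0, pi01_312_1, pi01_231_0, pi01_231_1]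
    linarith

lemma uA1 (t : ℕ) (hγ : GammaMono γ) (h21 : γ 3 2 2 < γ 3 2 1) :
    ∀ S₁ ∈ scoreWinners β γ (pool ∅) (VA t) 2, S₁ = ({0, 2} : Finset ℕ) := by
  rintro S₁ ⟨hsub, hcard, hmax⟩
  obtain ⟨u, huP, rfl⟩ := committee_erase hsub (by rw [card_poolE]; omega)
  have heb := hγ 3 2 2 3 (by norm_num) (by norm_num) (by norm_num)
  have hu : u = 0 ∨ u = 1 ∨ u = 2 := by
    rcases mem_pool.mp huP with h|h|h|h
    · exact Or.inl h
    · exact Or.inr (Or.inl h)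
    · exact Or.inr (Or.inr h)
    · simp at h
  rcases hu with rfl | rfl | rfl
  · exfalso
    have h := hmax {0, 2} (by decide) (by decide)
    rw [erase0] at h
    have hlt : totalScore β γ (pool ∅) (VA t) 2 {1, 2} < totalScore β γ (pool ∅) (VA t) 2 {0, 2} := by
      cases β with
      | l1 =>
        simp only [totalScore, VA, List.map_cons, List.map_nil, List.sum_cons, List.sum_nil,
          vs_l1_pair (show (1:ℕ) ≠ 2 by norm_num), vs_l1_pair (show (0:ℕ) ≠ 2 by norm_num),
          card_poolE, piE_213_0, piE_213_1, piE_213_2, piE_321_0, piE_321_1, piE_321_2,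
          piE_123_0, piE_123_1, piE_123_2, piE_132_0, piE_132_1, piE_132_2, piE_312_0,
          piE_312_1, piE_312_2, piE_231_0, piE_231_1, piE_231_2]
        linarith
      | lmax =>
        simp only [totalScore, VA, List.map_cons, List.map_nil, List.sum_cons, List.sum_nil,
          Lm02_213 t hγ, Lm12_213 t hγ, Lm02_321 t hγ, Lm12_321 t hγ, Lm02_123 t hγ,
          Lm12_123 t hγ, Lm02_132 t hγ, Lm12_132 t hγ, Lm02_312 t hγ, Lm12_312 t hγ,
          Lm02_231 t hγ, Lm12_231 t hγ]
        linarith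
    linarith
  · rw [erase1]
  · exfalso
    have h := hmax {0, 2} (by decide) (by decide)
    rw [erase2] at h
    have hlt : totalScore β γ (pool ∅) (VA t) 2 {0, 1} < totalScore β γ (pool ∅) (VA t) 2 {0, 2} := by
      cases β with
      | l1 =>
        simp only [totalScore, VA, List.map_cons, List.map_nil, List.sum_cons, List.sum_nil,
          vs_l1_pair (show (0:ℕ) ≠ 1 by norm_num), vs_l1_pair (show (0:ℕ) ≠ 2 by norm_num),
          card_poolE, piE_213_0, piE_213_1, piE_213_2, piE_321_0, piE_321_1, piE_321_2,
          piE_123_0, piE_123_1, piE_123_2, piE_132_0, piE_132_1, piE_132_2, piE_312_0,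
          piE_312_1, piE_312_2, piE_231_0, piE_231_1, piE_231_2]
        linarith
      | lmax =>
        simp only [totalScore, VA, List.map_cons, List.map_nil, List.sum_cons, List.sum_nil,
          Lm02_213 t hγ, Lm01_213 t hγ, Lm02_321 t hγ, Lm01_321 t hγ, Lm02_123 t hγ,
          Lm01_123 t hγ, Lm02_132 t hγ, Lm01_132 t hγ, Lm02_312 t hγ, Lm01_312 t hγ,
          Lm02_231 t hγ, Lm01_231 t hγ]
        linarith
    linarith

lemma uA2 (t : ℕ) (h21' : γ 2 1 2 < γ 2 1 1) :
    ∀ S ∈ scoreWinners β γ {0, 2} (VA t) 1, S = ({2} : Finset ℕ) := by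
  rintro S ⟨hsub, hcard, hmax⟩
  rcases sub_pair_cases hsub hcard with rfl | rfl
  · exfalso
    have h := hmax {2} (by decide) (by decide)
    simp only [totalScore, VA, List.map_cons, List.map_nil, List.sum_cons, List.sum_nil,
      vs_single, card_p02, pi02_213_0, pi02_213_2, pi02_321_0, pi02_321_2, pi02_123_0,
      pi02_123_2, pi02_132_0, pi02_132_2, pi02_312_0, pi02_312_2, pi02_231_0, pi02_231_2] at h
    linarith
  · rfl

lemma uB1 (t : ℕ) (hγ : GammaMono γ) (h32 : γ 3 2 3 < γ 3 2 2) :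
    ∀ S₁ ∈ scoreWinners .l1 γ (pool ∅) (VB t) 2, S₁ = ({0, 2} : Finset ℕ) := by
  rintro S₁ ⟨hsub, hcard, hmax⟩
  obtain ⟨u, huP, rfl⟩ := committee_erase hsub (by rw [card_poolE]; omega)
  have hba := hγ 3 2 1 2 (by norm_num) (by norm_num) (by norm_num)
  have hu : u = 0 ∨ u = 1 ∨ u = 2 := by
    rcases mem_pool.mp huP with h|h|h|h
    · exact Or.inl h
    · exact Or.inr (Or.inl h)
    · exact Or.inr (Or.inr h)
    · simp at h
  rcases hu with rfl | rfl | rfl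
  · exfalso
    have h := hmax {0, 2} (by decide) (by decide)
    rw [erase0] at h
    have hlt : totalScore .l1 γ (pool ∅) (VB t) 2 {1, 2} <
        totalScore .l1 γ (pool ∅) (VB t) 2 {0, 2} := by
      simp only [totalScore, VB, List.map_cons, List.map_nil, List.sum_cons, List.sum_nil,
        vs_l1_pair (show (1:ℕ) ≠ 2 by norm_num), vs_l1_pair (show (0:ℕ) ≠ 2 by norm_num),
        card_poolE, piE_213_0, piE_213_1, piE_213_2, piE_321_0, piE_321_1, piE_321_2,
        piE_123_0, piE_123_1, piE_123_2, piE_132_0, piE_132_1, piE_132_2, piE_312_0,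
        piE_312_1, piE_312_2, piE_231_0, piE_231_1, piE_231_2]
      linarith
    linarith
  · rw [erase1]
  · exfalso
    have h := hmax {0, 2} (by decide) (by decide)
    rw [erase2] at h
    have hlt : totalScore .l1 γ (pool ∅) (VB t) 2 {0, 1} <
        totalScore .l1 γ (pool ∅) (VB t) 2 {0, 2} := by
      simp only [totalScore, VB, List.map_cons, List.map_nil, List.sum_cons, List.sum_nil,
        vs_l1_pair (show (0:ℕ) ≠ 1 by norm_num), vs_l1_pair (show (0:ℕ) ≠ 2 by norm_num),
        card_poolE, piE_213_0, piE_213_1, piE_213_2, piE_321_0, piE_321_1, piE_321_2,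
        piE_123_0, piE_123_1, piE_123_2, piE_132_0, piE_132_1, piE_132_2, piE_312_0,
        piE_312_1, piE_312_2, piE_231_0, piE_231_1, piE_231_2]
      linarith
    linarith

lemma uB2 (t : ℕ) (h21' : γ 2 1 2 < γ 2 1 1) :
    ∀ S ∈ scoreWinners .l1 γ {0, 2} (VB t) 1, S = ({2} : Finset ℕ) := by
  rintro S ⟨hsub, hcard, hmax⟩
  rcases sub_pair_cases hsub hcard with rfl | rfl
  · exfalso
    have h := hmax {2} (by decide) (by decide)
    simp only [totalScore, VB, List.map_cons, List.map_nil, List.sum_cons, List.sum_nil,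
      vs_single, card_p02, pi02_213_0, pi02_213_2, pi02_321_0, pi02_321_2, pi02_123_0,
      pi02_123_2, pi02_132_0, pi02_132_2, pi02_312_0, pi02_312_2, pi02_231_0, pi02_231_2] at h
    linarith
  · rfl

lemma e_ms (t : ℕ) (hγ : GammaMono γ) :
    ({0} : Finset ℕ) ∈ msWinners β γ (ksD 2) (pool ∅) (Vbase t) :=
  ⟨{0, 1}, e1 t hγ, {0}, e2 t hγ, rfl⟩

lemma uA_ms (t : ℕ) (hγ : GammaMono γ) (h21 : γ 3 2 2 < γ 3 2 1) (h21' : γ 2 1 2 < γ 2 1 1) :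
    ∀ S ∈ msWinners β γ (ksD 2) (pool ∅) (VA t), (0 : ℕ) ∉ S := by
  rintro S ⟨S₁, hS₁, S₂, hS₂, hS⟩
  have e₁ := uA1 t hγ h21 S₁ hS₁
  subst e₁
  have e₂ := uA2 t h21' S₂ hS₂
  subst e₂
  have hS' : S = {2} := hS
  subst hS'
  decide

lemma uB_ms (t : ℕ) (hγ : GammaMono γ) (h32 : γ 3 2 3 < γ 3 2 2) (h21' : γ 2 1 2 < γ 2 1 1) :
    ∀ S ∈ msWinners .l1 γ (ksD 2) (pool ∅) (VB t), (0 : ℕ) ∉ S := by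
  rintro S ⟨S₁, hS₁, S₂, hS₂, hS⟩
  have e₁ := uB1 t hγ h32 S₁ hS₁
  subst e₁
  have e₂ := uB2 t h21' S₂ hS₂
  subst e₂
  have hS' : S = {2} := hS
  subst hS'
  decide

end CMProof
namespace CMProof

variable {γ : ℕ → ℕ → ℕ → ℝ} {β : ScoreNorm}

lemma voter_injOn (t p q r : ℕ) (hpqr : PlainPerm p q r) :
    Set.InjOn (voter t p q r) ↑(Finset.range (t + 1)) := by
  intro a ha b hb heq
  simp only [Finset.coe_range, Set.mem_Iio] at ha hb
  by_cases ha3 : a < 3 <;> by_cases hb3 : b < 3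
  · rcases hpqr with ⟨rfl,rfl,rfl⟩|⟨rfl,rfl,rfl⟩|⟨rfl,rfl,rfl⟩|⟨rfl,rfl,rfl⟩|⟨rfl,rfl,rfl⟩|⟨rfl,rfl,rfl⟩ <;>
      (interval_cases a <;> interval_cases b <;> simp_all [voter])
  · exfalso
    have h1 := voter_core_val (t := t) hpqr ha3
    have h2 := voter_pad_val (t := t) (p := p) (q := q) (r := r)
      (show 3 ≤ b by omega) (show b ≤ t by omega)
    omega
  · exfalso
    have h1 := voter_core_val (t := t) hpqr hb3
    have h2 := voter_pad_val (t := t) (p := p) (q := q) (r := r)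
      (show 3 ≤ a by omega) (show a ≤ t by omega)
    omega
  · have h1 := voter_pad_val (t := t) (p := p) (q := q) (r := r)
      (show 3 ≤ a by omega) (show a ≤ t by omega)
    have h2 := voter_pad_val (t := t) (p := p) (q := q) (r := r)
      (show 3 ≤ b by omega) (show b ≤ t by omega)
    omega

lemma shift_voter (t p q r : ℕ) : shiftForward (voter t p q r) 0 1 = voter t q p r := by
  funext x
  by_cases h0 : x = 0
  · subst h0; simp [shiftForward, voter]
  · by_cases h1 : x = 1
    · subst h1; simp [shiftForward, voter]
    · simp [shiftForward, voter, h0, h1]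

lemma perm213 : PlainPerm 2 1 3 := by simp [PlainPerm]
lemma perm321 : PlainPerm 3 2 1 := by simp [PlainPerm]

lemma scenarioA (u : ℕ) (hγ : GammaMono γ) (hrat : RationalRule β γ)
    (h21 : γ 3 2 2 < γ 3 2 1) (h21' : γ 2 1 2 < γ 2 1 1)
    (hmono : MSCandidateMonotone β γ (u + 2)) : False := by
  have hsub : Finset.Icc 3 (u+2) ⊆ Finset.Icc 3 (u+2) := Finset.Subset.refl _
  have hIcc : (Finset.Icc 3 (u+2)).card = u := by rw [Nat.card_Icc]; omega
  have hCpool : Finset.range (u+2+1) = pool (Finset.Icc 3 (u+2)) := by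
    ext x
    simp only [Finset.mem_range, mem_pool, Finset.mem_Icc]
    omega
  have hvalid : ValidVec (Finset.range (u+2+1)) (ksD (u+2)) := by
    constructor
    · rw [Finset.card_range]
      exact ksD_chain _ _ (by omega)
    · exact ksD_mem _
  have hget : (Vbase (u+2)).get ⟨0, by simp [Vbase]⟩ = voter (u+2) 2 1 3 := rfl
  obtain ⟨S', hS', h0S'⟩ :=
    hmono ℕ (Finset.range (u+2+1)) (Vbase (u+2))
      (fun v hv => by
        obtain ⟨p, q, r, hpqr, rfl⟩ := Vbase_plain (u+2) v hv
        exact voter_injOn (u+2) p q r hpqr)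
      (ksD (u+2)) (ksD_ne_nil _ (by omega)) (by simp) hvalid
      0 (by simp) 
      ⟨{0}, by
        rw [hCpool]
        exact (ms_core hγ hrat u _ hsub hIcc _ (Vbase_plain _) (Vbase_first _) {0}).mpr
          (e_ms _ hγ), by simp⟩
      0 (by simp [Vbase]) 1 (by simp) (by norm_num)
      (by
        rw [hget, hCpool, posIn_core_plain perm213 hsub (by omega),
          posIn_core_plain perm213 hsub (by omega)]
        simp [voter])
  rw [hget, shift_voter] at hS'
  have hset : (Vbase (u+2)).set 0 (voter (u+2) 1 2 3) = VA (u+2) := rfl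
  rw [hset, hCpool] at hS'
  exact uA_ms _ hγ h21 h21' S'
    ((ms_core hγ hrat u _ hsub hIcc _ (VA_plain _) (VA_first _) S').mp hS') h0S'

lemma scenarioB (u : ℕ) (hγ : GammaMono γ) (hrat : RationalRule .l1 γ)
    (h32 : γ 3 2 3 < γ 3 2 2) (h21' : γ 2 1 2 < γ 2 1 1)
    (hmono : MSCandidateMonotone .l1 γ (u + 2)) : False := by
  have hsub : Finset.Icc 3 (u+2) ⊆ Finset.Icc 3 (u+2) := Finset.Subset.refl _
  have hIcc : (Finset.Icc 3 (u+2)).card = u := by rw [Nat.card_Icc]; omega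
  have hCpool : Finset.range (u+2+1) = pool (Finset.Icc 3 (u+2)) := by
    ext x
    simp only [Finset.mem_range, mem_pool, Finset.mem_Icc]
    omega
  have hvalid : ValidVec (Finset.range (u+2+1)) (ksD (u+2)) := by
    constructor
    · rw [Finset.card_range]
      exact ksD_chain _ _ (by omega)
    · exact ksD_mem _
  have hget : (Vbase (u+2)).get ⟨1, by simp [Vbase]⟩ = voter (u+2) 3 2 1 := rfl
  obtain ⟨S', hS', h0S'⟩ :=
    hmono ℕ (Finset.range (u+2+1)) (Vbase (u+2))
      (fun v hv => by
        obtain ⟨p, q, r, hpqr, rfl⟩ := Vbase_plain (u+2) v hv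
        exact voter_injOn (u+2) p q r hpqr)
      (ksD (u+2)) (ksD_ne_nil _ (by omega)) (by simp) hvalid
      0 (by simp)
      ⟨{0}, by
        rw [hCpool]
        exact (ms_core hγ hrat u _ hsub hIcc _ (Vbase_plain _) (Vbase_first _) {0}).mpr
          (e_ms _ hγ), by simp⟩
      1 (by simp [Vbase]) 1 (by simp) (by norm_num)
      (by
        rw [hget, hCpool, posIn_core_plain perm321 hsub (by omega),
          posIn_core_plain perm321 hsub (by omega)]
        simp [voter])
  rw [hget, shift_voter] at hS'
  have hset : (Vbase (u+2)).set 1 (voter (u+2) 2 3 1) = VB (u+2) := rfl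
  rw [hset, hCpool] at hS'
  exact uB_ms _ hγ h32 h21' S'
    ((ms_core hγ hrat u _ hsub hIcc _ (VB_plain _) (VB_first _) S').mp hS') h0S'

end CMProof


/-- Candidate Monotonicity does not preserve in a rational
multi-stage `(β, γ⃗)`-rule: for every `t ≥ 2`, every `β ∈ {ℓ₁, ℓ_max}` and every
rational non-increasing family `γ⃗`, the `t`-stage `(β, γ⃗)`-rule is not
candidate monotone. -/
theorem multistage_score_rule_not_candidate_monotone
    (t : ℕ) (ht : 2 ≤ t) (β : ScoreNorm) (γ : ℕ → ℕ → ℕ → ℝ)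
    (hγ : GammaMono γ) (hrat : RationalRule β γ) :
    ¬ MSCandidateMonotone β γ t := by
  intro hmono
  obtain ⟨u, rfl⟩ : ∃ u, t = u + 2 := ⟨t - 2, by omega⟩
  cases β with
  | l1 =>
    have hrat' : ∀ m k : ℕ, 1 ≤ k → k < m → γ m k m < γ m k 1 := hrat
    have h321 : γ 3 2 3 < γ 3 2 1 := hrat' 3 2 (by norm_num) (by norm_num)
    have h21' : γ 2 1 2 < γ 2 1 1 := hrat' 2 1 (by norm_num) (by norm_num)
    by_cases hab : γ 3 2 2 < γ 3 2 1
    · exact CMProof.scenarioA u hγ hrat hab h21' hmono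
    · have h32 : γ 3 2 3 < γ 3 2 2 := by
        push_neg at hab
        linarith
      exact CMProof.scenarioB u hγ hrat h32 h21' hmono
  | lmax =>
    have hrat' : ∀ m k : ℕ, 1 ≤ k → k < m → γ m k (m - k + 1) < γ m k 1 := hrat
    have h21 : γ 3 2 2 < γ 3 2 1 := by
      have := hrat' 3 2 (by norm_num) (by norm_num)
      norm_num at this
      exact this
    have h21' : γ 2 1 2 < γ 2 1 1 := by
      have := hrat' 2 1 (by norm_num) (by norm_num)
      norm_num at this
      exact this
    exact CMProof.scenarioA u hγ hrat h21 h21' hmono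
end
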